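/- arXiv:2209.01253 — 5 statements merged into one kernel-verified Lean document; each statement's English description precedes it below -/
import Mathlib

section
/- For every b > 0 there exists θ ∈ (0,1) with the following property. Let I ⊂ ℝ be a bounded interval and let 𝒥 = {J₁, …, J_n} be a finite collection of pairwise disjoint closed subintervals of I such that: (1) for all distinct J′, J″ ∈ 𝒥 one has dist(J′, J″) ≥ min(|J′|, |J″|)^{1+b}; (2) the total length Σ_{i=1}^n |J_i| is greater than (1−θ)|I|; (3) every connected component of I \ ⋃_{i=1}^n J_i has length at least 1. Then there exists J ∈ 𝒥 with |J| ≥ (3/4)|I|. -/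
open MeasureTheory

section SolovayHelpers
open Set Finset

lemma sol_step' {a : ℝ} (ha0 : 0 < a) (ha1 : a < 1) (j : ℕ) :
    (1 - a) * ((j : ℝ) + 1) ^ (-a) + (j : ℝ) ^ (1 - a) ≤ ((j : ℝ) + 1) ^ (1 - a) := by
  have h1a : (0:ℝ) < 1 - a := by linarith
  have hx1 : (0:ℝ) < (j:ℝ) + 1 := by positivity
  have hB := rpow_one_add_le_one_add_mul_self (s := -(1/((j:ℝ)+1)))
      (by rw [neg_le, neg_neg]; rw [div_le_one hx1]; linarith) (le_of_lt h1a) (by linarith)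
  have hkey : ((j:ℝ)/((j:ℝ)+1)) ^ (1-a) ≤ 1 - (1-a)/((j:ℝ)+1) := by
    have : (1 : ℝ) + -(1/((j:ℝ)+1)) = (j:ℝ)/((j:ℝ)+1) := by field_simp; ring
    rw [this] at hB
    calc ((j:ℝ)/((j:ℝ)+1)) ^ (1-a) ≤ 1 + (1-a) * -(1/((j:ℝ)+1)) := hB
    _ = 1 - (1-a)/((j:ℝ)+1) := by ring
  have hmul := mul_le_mul_of_nonneg_right hkey (le_of_lt (Real.rpow_pos_of_pos hx1 (1-a)))
  rw [← Real.mul_rpow (by positivity) (le_of_lt hx1)] at hmul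
  have hj' : (j:ℝ)/((j:ℝ)+1) * ((j:ℝ)+1) = (j:ℝ) := by field_simp
  rw [hj'] at hmul
  have hexp : (1 - (1-a)/((j:ℝ)+1)) * ((j:ℝ)+1) ^ (1-a)
      = ((j:ℝ)+1) ^ (1-a) - (1-a) * ((j:ℝ)+1) ^ (-a) := by
    have h2 : ((j:ℝ)+1) ^ (-a) = ((j:ℝ)+1) ^ (1-a) / ((j:ℝ)+1) := by
      rw [eq_div_iff (ne_of_gt hx1), ← Real.rpow_add_one (ne_of_gt hx1)]
      congr 1; ring
    rw [h2]; ring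
  rw [hexp] at hmul
  linarith

lemma sol_sum_bound {a : ℝ} (ha0 : 0 < a) (ha1 : a < 1) (N : ℕ) :
    ∑ j ∈ Finset.range N, ((j : ℝ) + 1) ^ (-a) ≤ (1 - a)⁻¹ * (N : ℝ) ^ (1 - a) := by
  have h1a : (0:ℝ) < 1 - a := by linarith
  calc ∑ j ∈ Finset.range N, ((j : ℝ) + 1) ^ (-a)
      ≤ ∑ j ∈ Finset.range N, (1-a)⁻¹ * ((((j:ℝ)+1)) ^ (1-a) - (j:ℝ) ^ (1-a)) := by
        apply Finset.sum_le_sum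
        intro j _
        have h := sol_step' ha0 ha1 j
        rw [le_inv_mul_iff₀ h1a]
        linarith
    _ = (1-a)⁻¹ * ∑ j ∈ Finset.range N, ((((j:ℝ)+1)) ^ (1-a) - (j:ℝ) ^ (1-a)) := by
        rw [Finset.mul_sum]
    _ = (1-a)⁻¹ * ((N:ℝ) ^ (1-a) - (0:ℝ) ^ (1-a)) := by
        have := Finset.sum_range_sub (fun j : ℕ => ((j:ℝ)) ^ (1-a)) N
        push_cast at this ⊢
        rw [this]
    _ = (1-a)⁻¹ * (N : ℝ) ^ (1 - a) := by
        rw [Real.zero_rpow (ne_of_gt h1a)]; ring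

lemma sol_packing {n : ℕ} (l r : Fin n → ℝ) (hlr : ∀ i, l i ≤ r i)
    {a B : ℝ} (hsub : ∀ i, Set.Icc (l i) (r i) ⊆ Set.Icc a B)
    (hdisj : ∀ i j, i ≠ j → Disjoint (Set.Icc (l i) (r i)) (Set.Icc (l j) (r j)))
    (T : Finset (Fin n)) (hT : T.Nonempty) {g : ℝ} (hg : 0 ≤ g)
    (hsep : ∀ i ∈ T, ∀ j ∈ T, i ≠ j → g ≤ |r i - l j|) :
    ∑ i ∈ T, (r i + g - l i) ≤ B + g - a := by
  classical
  obtain ⟨i₀, hi₀⟩ := hT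
  have hmem : ∀ i, l i ∈ Set.Icc (l i) (r i) := fun i => ⟨le_rfl, hlr i⟩
  have haB : a ≤ B := le_trans (hsub i₀ (hmem i₀)).1 (hsub i₀ (hmem i₀)).2
  have key : ∀ i' ∈ T, ∀ j' ∈ T, i' ≠ j' → l i' ≤ l j' →
      Disjoint (Set.Ico (l i') (r i' + g)) (Set.Ico (l j') (r j' + g)) := by
    intro i' hi' j' hj' hne hll
    have hrl : r i' < l j' := by
      by_contra h
      push_neg at h
      exact Set.disjoint_left.mp (hdisj i' j' hne) ⟨hll, h⟩ (hmem j')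
    have hsep' : g ≤ l j' - r i' := by
      have h2 := hsep i' hi' j' hj' hne
      rwa [abs_of_nonpos (by linarith), neg_sub] at h2
    rw [Set.disjoint_left]
    rintro x ⟨hx1, hx2⟩ ⟨hx3, hx4⟩
    linarith
  have hE : (T : Set (Fin n)).PairwiseDisjoint (fun i => Set.Ico (l i) (r i + g)) := by
    intro i hi j hj hij
    rcases le_total (l i) (l j) with h | h
    · exact key i hi j hj hij h
    · exact (key j hj i hi hij.symm h).symm
  have hmeas := measure_biUnion_finset (μ := volume) hE (fun i _ => measurableSet_Ico)
  have hsubE : (⋃ i ∈ T, Set.Ico (l i) (r i + g)) ⊆ Set.Icc a (B + g) := by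
    intro x hx
    simp only [Set.mem_iUnion, Set.mem_Ico, exists_prop] at hx
    obtain ⟨i, _, hx1, hx2⟩ := hx
    refine ⟨le_trans (hsub i (hmem i)).1 hx1, ?_⟩
    have : r i ≤ B := (hsub i ⟨hlr i, le_rfl⟩).2
    linarith
  have hle : ∑ i ∈ T, volume (Set.Ico (l i) (r i + g)) ≤ volume (Set.Icc a (B + g)) :=
    hmeas ▸ measure_mono hsubE
  simp only [Real.volume_Ico, Real.volume_Icc] at hle
  have hrw : ∀ i ∈ T, (0:ℝ) ≤ r i + g - l i := fun i _ => by
    have := hlr i; linarith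
  rw [← ENNReal.ofReal_sum_of_nonneg hrw] at hle
  rwa [ENNReal.ofReal_le_ofReal_iff (by linarith)] at hle

lemma sol_gaps {n : ℕ} (l r : Fin n → ℝ) (hlr : ∀ i, l i ≤ r i)
    {I : Set ℝ} (hI : I.OrdConnected)
    (hsub : ∀ i, Set.Icc (l i) (r i) ⊆ I)
    (hdisj : ∀ i j, i ≠ j → Disjoint (Set.Icc (l i) (r i)) (Set.Icc (l j) (r j)))
    (hcomp : ∀ x ∈ I \ ⋃ i, Set.Icc (l i) (r i),
        1 ≤ (volume (connectedComponentIn (I \ ⋃ i, Set.Icc (l i) (r i)) x)).toReal) :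
    ((n : ℕ) - 1 : ℕ) ≤ volume (I \ ⋃ i, Set.Icc (l i) (r i)) := by
  classical
  set S := ⋃ i, Set.Icc (l i) (r i) with hSdef
  set U := I \ S with hUdef
  set τ := Tuple.sort l with hτdef
  have hmono : Monotone (l ∘ τ) := Tuple.monotone_sort l
  have key : ∀ k : Fin (n-1), ∃ C : Set ℝ, C ⊆ U ∧
      C ⊆ Set.Ioo (r (τ ⟨k.val, by have := k.isLt; omega⟩))
        (l (τ ⟨k.val+1, by have := k.isLt; omega⟩)) ∧
      MeasurableSet C ∧ (1:ENNReal) ≤ volume C := by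
    intro k
    set k0 : Fin n := ⟨k.val, by have := k.isLt; omega⟩ with hk0
    set k1 : Fin n := ⟨k.val+1, by have := k.isLt; omega⟩ with hk1
    set i₀ := τ k0 with hi₀
    set i₁ := τ k1 with hi₁
    have hne : i₀ ≠ i₁ := by
      intro h
      have : k0 = k1 := τ.injective h
      simp [hk0, hk1, Fin.ext_iff] at this
    have hll : l i₀ ≤ l i₁ := hmono (by simp [hk0, hk1, Fin.le_def])
    have hrl : r i₀ < l i₁ := by
      by_contra h
      push_neg at h
      exact Set.disjoint_left.mp (hdisj i₀ i₁ hne) ⟨hll, h⟩ ⟨le_rfl, hlr i₁⟩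
    have hrI : r i₀ ∈ I := hsub i₀ ⟨hlr i₀, le_rfl⟩
    have hlI : l i₁ ∈ I := hsub i₁ ⟨le_rfl, hlr i₁⟩
    -- find an uncovered point in the gap
    have hx : ∃ x ∈ Set.Ioo (r i₀) (l i₁), x ∉ S := by
      by_contra h
      push_neg at h
      have hKS : Set.Icc (r i₀) (l i₁) ⊆ S := by
        intro y hy
        rcases eq_or_lt_of_le hy.1 with h1 | h1
        · exact Set.mem_iUnion.mpr ⟨i₀, by rw [← h1]; exact ⟨hlr i₀, le_rfl⟩⟩
        rcases eq_or_lt_of_le hy.2 with h2 | h2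
        · exact Set.mem_iUnion.mpr ⟨i₁, by rw [h2]; exact ⟨le_rfl, hlr i₁⟩⟩
        · exact h y ⟨h1, h2⟩
      have hpre : IsPreconnected (Set.Icc (r i₀) (l i₁)) := isPreconnected_Icc
      have hres := (isPreconnected_closed_iff.mp hpre)
        (Set.Icc (l i₀) (r i₀)) (⋃ i ∈ Finset.univ.erase i₀, Set.Icc (l i) (r i))
        isClosed_Icc
        (Set.Finite.isClosed_biUnion (Finset.univ.erase i₀).finite_toSet
          (fun i _ => isClosed_Icc))
        (by
          intro y hy
          obtain ⟨i, hi⟩ := Set.mem_iUnion.mp (hKS hy)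
          by_cases hii : i = i₀
          · exact Or.inl (hii ▸ hi)
          · exact Or.inr (Set.mem_biUnion (Finset.mem_erase.mpr ⟨hii, Finset.mem_univ i⟩) hi))
        ⟨r i₀, ⟨le_rfl, hrl.le⟩, ⟨hlr i₀, le_rfl⟩⟩
        ⟨l i₁, ⟨hrl.le, le_rfl⟩,
          Set.mem_biUnion (Finset.mem_erase.mpr ⟨hne.symm, Finset.mem_univ i₁⟩)
            ⟨le_rfl, hlr i₁⟩⟩
      obtain ⟨z, _, hz1, hz2⟩ := hres
      obtain ⟨i, hi, hzi⟩ := Set.mem_iUnion₂.mp hz2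
      exact Set.disjoint_left.mp (hdisj i₀ i (Finset.mem_erase.mp hi).1.symm) hz1 hzi
    obtain ⟨x, hxIoo, hxS⟩ := hx
    have hxI : x ∈ I := hI.out hrI hlI ⟨hxIoo.1.le, hxIoo.2.le⟩
    have hxU : x ∈ U := ⟨hxI, hxS⟩
    refine ⟨connectedComponentIn U x, connectedComponentIn_subset U x, ?_, ?_, ?_⟩
    · -- contained in the open gap
      have hCord : (connectedComponentIn U x).OrdConnected :=
        (isPreconnected_connectedComponentIn).ordConnected
      have hxC : x ∈ connectedComponentIn U x := mem_connectedComponentIn hxU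
      intro y hy
      constructor
      · by_contra h
        push_neg at h
        have : r i₀ ∈ connectedComponentIn U x :=
          hCord.out hy hxC ⟨h, hxIoo.1.le⟩
        exact (connectedComponentIn_subset U x this).2 (Set.mem_iUnion.mpr ⟨i₀, hlr i₀, le_rfl⟩)
      · by_contra h
        push_neg at h
        have : l i₁ ∈ connectedComponentIn U x :=
          hCord.out hxC hy ⟨hxIoo.2.le, h⟩
        exact (connectedComponentIn_subset U x this).2 (Set.mem_iUnion.mpr ⟨i₁, le_rfl, hlr i₁⟩)
    · exact ((isPreconnected_connectedComponentIn).ordConnected).measurableSet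
    · have h1 := hcomp x hxU
      by_cases hC : volume (connectedComponentIn U x) = ⊤
      · rw [hC]; exact le_top
      · rw [← ENNReal.ofReal_one, ENNReal.ofReal_le_iff_le_toReal hC]
        exact h1
  choose C hC1 hC2 hC3 hC4 using key
  have hdisjC : ((Finset.univ : Finset (Fin (n-1))) : Set (Fin (n-1))).PairwiseDisjoint C := by
    have keyd : ∀ k k' : Fin (n-1), (k:ℕ) < (k':ℕ) → Disjoint (C k) (C k') := by
      intro k k' hkk'
      have h1 : l (τ ⟨k.val+1, by have := k.isLt; omega⟩)
          ≤ l (τ ⟨k'.val, by have := k'.isLt; omega⟩) := hmono (by simp [Fin.le_def]; omega)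
      have h2 : l (τ ⟨k'.val, by have := k'.isLt; omega⟩)
          ≤ r (τ ⟨k'.val, by have := k'.isLt; omega⟩) := hlr _
      rw [Set.disjoint_left]
      intro z hz hz'
      have hb1 := (hC2 k hz).2
      have hb2 := (hC2 k' hz').1
      linarith
    intro k _ k' _ hkk'
    rcases lt_or_gt_of_ne (fun h => hkk' (by exact_mod_cast Fin.ext h)) with h | h
    · exact keyd k k' h
    · exact (keyd k' k h).symm
  have hUnion : volume (⋃ k ∈ (Finset.univ : Finset (Fin (n-1))), C k)
      = ∑ k : Fin (n-1), volume (C k) :=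
    measure_biUnion_finset (μ := volume) hdisjC (fun k _ => hC3 k)
  have hsum : ((n - 1 : ℕ) : ENNReal) ≤ ∑ k : Fin (n-1), volume (C k) := by
    calc ((n - 1 : ℕ) : ENNReal) = ∑ _k : Fin (n-1), (1:ENNReal) := by simp
    _ ≤ ∑ k : Fin (n-1), volume (C k) := Finset.sum_le_sum (fun k _ => hC4 k)
  calc ((n - 1 : ℕ) : ENNReal) ≤ ∑ k : Fin (n-1), volume (C k) := hsum
  _ = volume (⋃ k ∈ (Finset.univ : Finset (Fin (n-1))), C k) := hUnion.symm
  _ ≤ volume U := measure_mono (by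
      intro z hz
      obtain ⟨k, _, hk⟩ := Set.mem_iUnion₂.mp hz
      exact hC1 k hk)

section helpers
variable {n : ℕ}

-- claim per index lemma (packing consequence), standalone:
lemma sol_claim {b : ℝ} (hb : 0 < b) (l r : Fin n → ℝ) (hlr : ∀ i, l i ≤ r i)
    {a B m : ℝ} (hsub : ∀ i, Set.Icc (l i) (r i) ⊆ Set.Icc a B) (hBa : B - a ≤ m)
    (hdisj : ∀ i j, i ≠ j → Disjoint (Set.Icc (l i) (r i)) (Set.Icc (l j) (r j)))
    (hsep : ∀ i j, i ≠ j → ∀ x ∈ Set.Icc (l i) (r i), ∀ y ∈ Set.Icc (l j) (r j),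
          min (r i - l i) (r j - l j) ^ (1 + b) ≤ |x - y|)
    (σ : Equiv.Perm (Fin n)) (hmonoL : Monotone ((fun i => r i - l i) ∘ σ))
    {k : ℕ} (hk : k < n - 1) :
    r (σ ⟨k, by omega⟩) - l (σ ⟨k, by omega⟩) ≤ (m / ((n - 1 - k : ℕ) : ℝ)) ^ (1 + b)⁻¹ := by
  classical
  have h1b : (0:ℝ) < 1 + b := by linarith
  set K : Fin n := ⟨k, by omega⟩ with hK
  set s := r (σ K) - l (σ K) with hs
  have hs0 : 0 ≤ s := sub_nonneg.mpr (hlr _)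
  set g := s ^ (1 + b) with hg
  have hg0 : 0 ≤ g := Real.rpow_nonneg hs0 _
  set T : Finset (Fin n) := (Finset.Ici K).image σ with hT
  have hcardT : T.card = n - k := by
    rw [hT, Finset.card_image_of_injective _ σ.injective, Fin.card_Ici]
  have hLT : ∀ i ∈ T, s ≤ r i - l i := by
    intro i hi
    obtain ⟨u, hu, rfl⟩ := Finset.mem_image.mp hi
    exact hmonoL (Finset.mem_Ici.mp hu)
  have hsepT : ∀ i ∈ T, ∀ j ∈ T, i ≠ j → g ≤ |r i - l j| := by
    intro i hi j hj hij
    have h1 : g ≤ min (r i - l i) (r j - l j) ^ (1 + b) :=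
      Real.rpow_le_rpow hs0 (le_min (hLT i hi) (hLT j hj)) h1b.le
    exact h1.trans (hsep i j hij (r i) ⟨hlr i, le_rfl⟩ (l j) ⟨le_rfl, hlr j⟩)
  have hTne : T.Nonempty := ⟨σ K, Finset.mem_image.mpr ⟨K, Finset.mem_Ici.mpr le_rfl, rfl⟩⟩
  have hpack := sol_packing l r hlr hsub hdisj T hTne hg0 hsepT
  have hlb : (T.card : ℝ) * g ≤ ∑ i ∈ T, (r i + g - l i) := by
    have := Finset.card_nsmul_le_sum T (fun i => r i + g - l i) g
      (fun i hi => by have h2 := hLT i hi; show g ≤ r i + g - l i; linarith)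
    rwa [nsmul_eq_mul] at this
  have hcard2 : 2 ≤ n - k := by omega
  have hnk : ((n - k : ℕ) : ℝ) * g ≤ m + g := by
    rw [← hcardT]; linarith
  have hnk1 : (1:ℝ) ≤ ((n - 1 - k : ℕ) : ℝ) := by
    have : 1 ≤ n - 1 - k := by omega
    exact_mod_cast this
  have hgle : g ≤ m / ((n - 1 - k : ℕ) : ℝ) := by
    rw [le_div_iff₀ (by linarith)]
    have hcast : ((n - k : ℕ) : ℝ) = ((n - 1 - k : ℕ) : ℝ) + 1 := by
      have : n - k = (n - 1 - k) + 1 := by omega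
      exact_mod_cast this
    rw [hcast] at hnk
    linarith
  calc s = (s ^ (1+b)) ^ (1+b)⁻¹ := (Real.rpow_rpow_inv hs0 (ne_of_gt h1b)).symm
  _ ≤ (m / ((n - 1 - k : ℕ) : ℝ)) ^ (1 + b)⁻¹ :=
      Real.rpow_le_rpow hg0 hgle (by positivity)
end helpers

end SolovayHelpers

/-- **Solovay's Lemma.** For every `b > 0` there exists `θ ∈ (0,1)` such that for every
bounded interval `I ⊆ ℝ` and every finite collection of pairwise disjoint closed
subintervals `J i = [l i, r i]` of `I` satisfying the separation condition
`dist(J', J'') ≥ min(|J'|, |J''|)^(1+b)`, whose total length exceeds `(1-θ)|I|`, and such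
that every connected component of `I \ ⋃ J i` has length at least `1`, some interval `J i`
has length at least `(3/4)|I|`. -/
theorem solovay_lemma (b : ℝ) (hb : 0 < b) :
    ∃ θ : ℝ, θ ∈ Set.Ioo (0 : ℝ) 1 ∧
      ∀ (I : Set ℝ), Bornology.IsBounded I → I.OrdConnected →
      ∀ (n : ℕ) (l r : Fin n → ℝ),
        (∀ i, l i ≤ r i) →
        (∀ i, Set.Icc (l i) (r i) ⊆ I) →
        (∀ i j, i ≠ j → Disjoint (Set.Icc (l i) (r i)) (Set.Icc (l j) (r j))) →
        (∀ i j, i ≠ j → ∀ x ∈ Set.Icc (l i) (r i), ∀ y ∈ Set.Icc (l j) (r j),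
          min (r i - l i) (r j - l j) ^ (1 + b) ≤ |x - y|) →
        ((1 - θ) * (volume I).toReal < ∑ i, (r i - l i)) →
        (∀ x ∈ I \ ⋃ i, Set.Icc (l i) (r i),
          1 ≤ (volume (connectedComponentIn (I \ ⋃ i, Set.Icc (l i) (r i)) x)).toReal) →
        ∃ i, 3 / 4 * (volume I).toReal ≤ r i - l i := by
  classical
  have h1b : (0:ℝ) < 1 + b := by linarith
  set α : ℝ := (1 + b)⁻¹ with hα
  have hα0 : 0 < α := by positivity
  have hα1 : α < 1 := by
    rw [hα, inv_lt_one₀ h1b]; linarith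
  have h1a : (0:ℝ) < 1 - α := by linarith
  set Cc : ℝ := (1 - α)⁻¹ with hCc
  have hCc0 : 0 < Cc := by positivity
  set θ : ℝ := min (1/8) ((8 * Cc)⁻¹ ^ (1 - α)⁻¹) with hθ
  have hθ0 : 0 < θ := lt_min (by norm_num) (Real.rpow_pos_of_pos (by positivity) _)
  have hθ8 : θ ≤ 1/8 := min_le_left _ _
  have hθpow : Cc * θ ^ (1 - α) ≤ 1/8 := by
    have h1 : θ ^ (1-α) ≤ (8 * Cc)⁻¹ := by
      calc θ ^ (1-α) ≤ ((8*Cc)⁻¹ ^ (1-α)⁻¹) ^ (1-α) :=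
            Real.rpow_le_rpow hθ0.le (min_le_right _ _) h1a.le
      _ = (8*Cc)⁻¹ := Real.rpow_inv_rpow (by positivity) (ne_of_gt h1a)
    calc Cc * θ ^ (1-α) ≤ Cc * (8*Cc)⁻¹ := by nlinarith
    _ = 1/8 := by field_simp
  refine ⟨θ, ⟨hθ0, by linarith⟩, ?_⟩
  intro I hIbdd hIord n l r hlr hsub hdisj hsep hsum hcomp
  set m := (volume I).toReal with hm
  have hm0 : 0 ≤ m := ENNReal.toReal_nonneg
  by_contra hcon
  push_neg at hcon
  rcases Nat.eq_zero_or_pos n with rfl | hn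
  · simp only [Finset.univ_eq_empty, Finset.sum_empty] at hsum
    nlinarith
  have hL0 : 0 ≤ r ⟨0, hn⟩ - l ⟨0, hn⟩ := sub_nonneg.mpr (hlr _)
  have hm1 : 0 < m := by nlinarith [hcon ⟨0, hn⟩]
  have hIne : I.Nonempty := ⟨l ⟨0, hn⟩, hsub _ ⟨le_rfl, hlr _⟩⟩
  set a := sInf I with ha
  set B := sSup I with hB
  have hsubIcc : ∀ i, Set.Icc (l i) (r i) ⊆ Set.Icc a B := fun i x hx =>
    ⟨csInf_le hIbdd.bddBelow (hsub i hx), le_csSup hIbdd.bddAbove (hsub i hx)⟩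
  have hIooI : Set.Ioo a B ⊆ I := by
    intro x hx
    obtain ⟨p, hp, hpx⟩ := exists_lt_of_csInf_lt hIne hx.1
    obtain ⟨q, hq, hxq⟩ := exists_lt_of_lt_csSup hIne hx.2
    exact hIord.out hp hq ⟨hpx.le, hxq.le⟩
  have hIfin : volume I ≠ ⊤ := hIbdd.measure_lt_top.ne
  have hBa : B - a ≤ m := by
    have h1 : ENNReal.ofReal (B - a) ≤ volume I := by
      rw [← Real.volume_Ioo]; exact measure_mono hIooI
    exact (ENNReal.ofReal_le_iff_le_toReal hIfin).mp h1
  set S := ⋃ i, Set.Icc (l i) (r i) with hSdef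
  have hSsub : S ⊆ I := Set.iUnion_subset hsub
  have hSmeas : MeasurableSet S := MeasurableSet.iUnion (fun i => measurableSet_Icc)
  have hSvol : volume S = ∑ i, ENNReal.ofReal (r i - l i) := by
    rw [hSdef, measure_iUnion (fun i j hij => hdisj i j hij) (fun i => measurableSet_Icc)]
    simp [Real.volume_Icc, tsum_fintype]
  have hSfin : volume S ≠ ⊤ :=
    (lt_of_le_of_lt (measure_mono hSsub) hIbdd.measure_lt_top).ne
  have hUfin : volume (I \ S) ≠ ⊤ :=
    (lt_of_le_of_lt (measure_mono Set.diff_subset) hIbdd.measure_lt_top).ne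
  have hStoReal : (volume S).toReal = ∑ i, (r i - l i) := by
    rw [hSvol, ENNReal.toReal_sum (fun i _ => ENNReal.ofReal_ne_top)]
    exact Finset.sum_congr rfl fun i _ => ENNReal.toReal_ofReal (sub_nonneg.mpr (hlr i))
  have hIvol : volume S + volume (I \ S) = volume I := by
    have h2 := measure_inter_add_diff (μ := volume) I hSmeas
    rwa [Set.inter_eq_self_of_subset_right hSsub] at h2
  have hUtoReal : (volume (I \ S)).toReal = m - ∑ i, (r i - l i) := by
    have h2 := congrArg ENNReal.toReal hIvol
    rw [ENNReal.toReal_add hSfin hUfin, hStoReal] at h2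
    rw [← hm] at h2
    linarith
  have hUlt : (volume (I \ S)).toReal < θ * m := by
    rw [hUtoReal]; nlinarith
  have hgap := sol_gaps l r hlr hIord hsub hdisj hcomp
  have hNle : ((n - 1 : ℕ) : ℝ) ≤ (volume (I \ S)).toReal := by
    have h2 := ENNReal.toReal_mono hUfin hgap
    rwa [ENNReal.toReal_natCast] at h2
  have hNθ : ((n - 1 : ℕ) : ℝ) < θ * m := lt_of_le_of_lt hNle hUlt
  -- sort the lengths
  set L : Fin n → ℝ := fun i => r i - l i with hL
  set σ := Tuple.sort L with hσ
  have hmonoL : Monotone (L ∘ σ) := Tuple.monotone_sort L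
  set N := n - 1 with hNdef
  have hnN : n = N + 1 := by omega
  set f : ℕ → ℝ := fun k => if h : k < n then L (σ ⟨k, h⟩) else 0 with hf
  have hsumL : ∑ i, (r i - l i) = ∑ k ∈ Finset.range n, f k := by
    rw [← Fin.sum_univ_eq_sum_range f n, ← Equiv.sum_comp σ L]
    apply Finset.sum_congr rfl
    intro i _
    simp only [hf]
    rw [dif_pos i.isLt]
  have hstep : ∑ k ∈ Finset.range n, f k = ∑ k ∈ Finset.range N, f k + f N := by
    rw [hnN, Finset.sum_range_succ]
  have hfN : f N < 3/4 * m := by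
    have hNn : N < n := by omega
    simp only [hf]; rw [dif_pos hNn]; exact hcon _
  have hbound : ∀ k ∈ Finset.range N, f k ≤ (m / ((n - 1 - k : ℕ) : ℝ)) ^ α := by
    intro k hk
    have hkr := Finset.mem_range.mp hk
    have hkn : k < n := by omega
    simp only [hf]; rw [dif_pos hkn]
    have h2 := sol_claim hb l r hlr hsubIcc hBa hdisj hsep σ hmonoL
      (show k < n - 1 by omega)
    exact h2
  have hsum2 : ∑ k ∈ Finset.range N, f k
      ≤ ∑ j ∈ Finset.range N, (m / ((j + 1 : ℕ) : ℝ)) ^ α := by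
    calc ∑ k ∈ Finset.range N, f k
        ≤ ∑ k ∈ Finset.range N, (m / ((n - 1 - k : ℕ) : ℝ)) ^ α :=
          Finset.sum_le_sum hbound
    _ = ∑ j ∈ Finset.range N, (m / ((j + 1 : ℕ) : ℝ)) ^ α := by
        rw [← Finset.sum_range_reflect (fun j => (m / ((j + 1 : ℕ) : ℝ)) ^ α) N]
        apply Finset.sum_congr rfl
        intro k hk
        have hkr := Finset.mem_range.mp hk
        have h3 : n - 1 - k = N - 1 - k + 1 := by omega
        rw [h3]
  have hsum3 : ∑ j ∈ Finset.range N, (m / ((j + 1 : ℕ) : ℝ)) ^ α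
      ≤ m ^ α * (Cc * (N : ℝ) ^ (1 - α)) := by
    have hterm : ∀ j ∈ Finset.range N,
        (m / ((j + 1 : ℕ) : ℝ)) ^ α = m ^ α * ((j : ℝ) + 1) ^ (-α) := by
      intro j _
      have hj1 : ((j + 1 : ℕ) : ℝ) = (j : ℝ) + 1 := by push_cast; ring
      rw [hj1, div_eq_mul_inv, Real.mul_rpow hm0 (by positivity),
        Real.inv_rpow (by positivity), ← Real.rpow_neg (by positivity)]
    rw [Finset.sum_congr rfl hterm, ← Finset.mul_sum]
    apply mul_le_mul_of_nonneg_left _ (Real.rpow_nonneg hm0 _)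
    rw [hCc]
    exact sol_sum_bound hα0 hα1 N
  have hfinal : m ^ α * (Cc * (N : ℝ) ^ (1 - α)) ≤ m / 8 := by
    have hNle' : ((N : ℕ) : ℝ) ≤ θ * m := by rw [hNdef]; exact hNθ.le
    have h1 : ((N : ℕ) : ℝ) ^ (1 - α) ≤ (θ * m) ^ (1 - α) :=
      Real.rpow_le_rpow (Nat.cast_nonneg _) hNle' h1a.le
    have h2 : (θ * m) ^ (1 - α) = θ ^ (1 - α) * m ^ (1 - α) := Real.mul_rpow hθ0.le hm0
    calc m ^ α * (Cc * (N : ℝ) ^ (1 - α))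
        ≤ m ^ α * (Cc * (θ ^ (1 - α) * m ^ (1 - α))) := by
          apply mul_le_mul_of_nonneg_left _ (Real.rpow_nonneg hm0 _)
          apply mul_le_mul_of_nonneg_left _ hCc0.le
          rw [← h2]; exact h1
    _ = (Cc * θ ^ (1 - α)) * (m ^ α * m ^ (1 - α)) := by ring
    _ = (Cc * θ ^ (1 - α)) * m := by
        rw [← Real.rpow_add hm1]
        have h4 : α + (1 - α) = 1 := by ring
        rw [h4, Real.rpow_one]
    _ ≤ (1/8) * m := mul_le_mul_of_nonneg_right hθpow hm0
    _ = m / 8 := by ring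
  have htot : ∑ i, (r i - l i) < 3/4 * m + m / 8 := by
    rw [hsumL, hstep]
    have := hsum2.trans hsum3
    linarith
  nlinarith
end

section
/- Let η ∈ (0,1), ε ∈ (0, 1/10), C > 0, let I, D be positive integers, and let d₁, …, d_I be positive integers. There exists a constant κ > 0, depending only on η, C, I, D and d₁, …, d_I, such that the following holds. Let a, ū, u ∈ ℝ with |a| + |ū| + |u| ≤ ε, and for each 1 ≤ ι ≤ I let c_{0,ι}, …, c_{d_ι,ι} ∈ ℝ. Define the polynomials r_{𝔪_ι}(s) = Σ_{k=0}^{d_ι} c_{k,ι} (−1)^k s^k / k! and r_𝔰(s) = ū s² + s(1 − e^a). Suppose there are h ≤ D intervals J₁ = [0, s̄₁], …, J_h = [s_h, s̄_h] with s̄_h = L ≥ 1, which are b-close for some b < η / (2 D · max_ι d_ι), such that for all s ∈ ⋃_{j=1}^h J_j one has |r_{𝔪_ι}(s)| ≤ ε for every ι and |r_𝔰(s)| ≤ max(ε, C s^{1−η}). Then |a| ≤ κ L^{−η/2}, |ū| ≤ κ L^{−1−η/2}, and |c_{j,ι}| ≤ κ ε L^{−j + η/2} for every ι and every 0 ≤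 j ≤ d_ι. -/
open Polynomial Finset

lemma prodXsubC_coeff_le {ι : Type*} [DecidableEq ι] (t : Finset ι) (r : ι → ℝ) (R : ℝ)
    (hR : 1 ≤ R) (hr : ∀ j ∈ t, |r j| ≤ R) :
    ∀ k, |(∏ j ∈ t, (X - C (r j))).coeff k| ≤ 2 ^ t.card * R ^ (t.card - k) := by
  classical
  have hR0 : (0:ℝ) ≤ R := le_trans zero_le_one hR
  induction t using Finset.induction with
  | empty =>
    intro k
    simp only [prod_empty, card_empty]
    rcases Nat.eq_zero_or_pos k with rfl | hk
    · simp
    · rw [Polynomial.coeff_one, if_neg (by omega)]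
      simp only [abs_zero]
      exact mul_nonneg (by positivity) (pow_nonneg hR0 _)
  | @insert i t' hi ih =>
    intro k
    have hri : |r i| ≤ R := hr i (mem_insert_self _ _)
    have hr' : ∀ j ∈ t', |r j| ≤ R := fun j hj => hr j (mem_insert_of_mem hj)
    have ih' := ih hr'
    set n := t'.card with hn
    rw [Finset.prod_insert hi, Finset.card_insert_of_notMem hi]
    have hdeg : (∏ j ∈ t', (X - C (r j))).natDegree = n := by
      rw [Polynomial.natDegree_prod _ _ (fun j _ => X_sub_C_ne_zero (r j))]
      simp [hn]
    have key : ((X - C (r i)) * ∏ j ∈ t', (X - C (r j))).coeff k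
        = (∏ j ∈ t', (X - C (r j))).coeff (k - 1) * (if k = 0 then 0 else 1)
          - r i * (∏ j ∈ t', (X - C (r j))).coeff k := by
      rcases Nat.eq_zero_or_pos k with rfl | hk
      · simp [Polynomial.mul_coeff_zero, Polynomial.coeff_zero_eq_eval_zero]
      · obtain ⟨k', rfl⟩ := Nat.exists_eq_succ_of_ne_zero (Nat.pos_iff_ne_zero.mp hk)
        rw [sub_mul, Polynomial.coeff_sub, Polynomial.coeff_X_mul, Polynomial.coeff_C_mul]
        rw [if_neg (by omega), mul_one]
        simp
    rw [key]
    rcases le_or_gt k (n + 1) with hkle | hkgt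
    · have h1 : |(∏ j ∈ t', (X - C (r j))).coeff (k - 1) * (if k = 0 then 0 else 1)|
          ≤ 2 ^ n * R ^ (n + 1 - k) := by
        rcases Nat.eq_zero_or_pos k with rfl | hk
        · rw [if_pos rfl, mul_zero, abs_zero]
          exact mul_nonneg (by positivity) (pow_nonneg hR0 _)
        · rw [if_neg (by omega), mul_one]
          have := ih' (k - 1)
          have he : n - (k - 1) = n + 1 - k := by omega
          rwa [he] at this
      have h2 : |r i * (∏ j ∈ t', (X - C (r j))).coeff k| ≤ 2 ^ n * R ^ (n + 1 - k) := by
        rcases Nat.lt_or_ge k (n + 1) with hkn | hkn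
        · rw [abs_mul]
          calc |r i| * |(∏ j ∈ t', (X - C (r j))).coeff k| ≤ R * (2 ^ n * R ^ (n - k)) := by
                apply mul_le_mul hri (ih' k) (abs_nonneg _) (le_trans zero_le_one hR)
            _ = 2 ^ n * R ^ (n - k + 1) := by ring
            _ = 2 ^ n * R ^ (n + 1 - k) := by rw [show n - k + 1 = n + 1 - k by omega]
        · have hk' : k = n + 1 := by omega
          have : (∏ j ∈ t', (X - C (r j))).coeff k = 0 := by
            apply Polynomial.coeff_eq_zero_of_natDegree_lt
            omega
          rw [this, mul_zero, abs_zero]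
          exact mul_nonneg (by positivity) (pow_nonneg hR0 _)
      calc |_ - _| ≤ _ + _ := abs_sub _ _
        _ ≤ 2 ^ n * R ^ (n + 1 - k) + 2 ^ n * R ^ (n + 1 - k) := add_le_add h1 h2
        _ = 2 ^ (n + 1) * R ^ (n + 1 - k) := by ring
    · have hz1 : (∏ j ∈ t', (X - C (r j))).coeff (k - 1) = 0 := by
        apply Polynomial.coeff_eq_zero_of_natDegree_lt; omega
      have hz2 : (∏ j ∈ t', (X - C (r j))).coeff k = 0 := by
        apply Polynomial.coeff_eq_zero_of_natDegree_lt; omega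
      rw [hz1, hz2, zero_mul, mul_zero, sub_zero, abs_zero]
      exact mul_nonneg (by positivity) (pow_nonneg hR0 _)


lemma poly_coeff_bound (dd : ℕ) (hdd : 0 < dd) (a : Fin (dd+1) → ℝ) (α δ L M : ℝ)
    (hδ : 0 < δ) (hα : 0 ≤ α) (hαδ : α + δ ≤ L) (hL1 : 1 ≤ L) (hM : 0 ≤ M)
    (hbd : ∀ x ∈ Set.Icc α (α + δ), |∑ m : Fin (dd+1), a m * x ^ (m:ℕ)| ≤ M) (k : Fin (dd+1)) :
    |a k| ≤ ((dd:ℝ)+1) * 2^dd * ((dd:ℝ)/δ)^dd * M * L ^ (dd - (k:ℕ)) := by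
  classical
  set w : ℝ := δ / dd with hw
  have hw0 : 0 < w := div_pos hδ (by exact_mod_cast hdd)
  set v : Fin (dd+1) → ℝ := fun i => α + (i:ℕ) * w with hv
  have hvmem : ∀ i : Fin (dd+1), v i ∈ Set.Icc α (α + δ) := by
    intro i
    constructor
    · simp only [hv]
      have h0 : (0:ℝ) ≤ ((i:ℕ):ℝ) := Nat.cast_nonneg _
      nlinarith [hw0.le]
    · simp only [hv]
      have hi : ((i:ℕ):ℝ) ≤ (dd:ℝ) := by exact_mod_cast Nat.lt_succ_iff.mp i.isLt
      have : ((i:ℕ):ℝ) * w ≤ (dd:ℝ) * w := by nlinarith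
      have hdw : (dd:ℝ) * w = δ := by
        rw [hw]; field_simp
      linarith
  have habs : ∀ i : Fin (dd+1), |v i| ≤ L := by
    intro i
    rcases hvmem i with ⟨h1, h2⟩
    rw [abs_le]; constructor <;> nlinarith
  have hdiff : ∀ i j : Fin (dd+1), i ≠ j → w ≤ |v i - v j| := by
    intro i j hij
    have h1 : v i - v j = (((i:ℕ):ℝ) - ((j:ℕ):ℝ)) * w := by simp only [hv]; ring
    have h2 : (1:ℝ) ≤ |((i:ℕ):ℝ) - ((j:ℕ):ℝ)| := by
      have hne : ((i:ℕ):ℤ) - ((j:ℕ):ℤ) ≠ 0 := by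
        simp only [sub_ne_zero]
        exact_mod_cast fun hc => hij (Fin.ext (by exact_mod_cast hc))
      have : ((i:ℕ):ℝ) - ((j:ℕ):ℝ) = ((((i:ℕ):ℤ) - ((j:ℕ):ℤ) : ℤ) : ℝ) := by push_cast; ring
      rw [this, ← Int.cast_abs]
      exact_mod_cast Int.one_le_abs hne
    calc w = 1 * w := (one_mul w).symm
      _ ≤ |((i:ℕ):ℝ) - ((j:ℕ):ℝ)| * w := by nlinarith
      _ = |((i:ℕ):ℝ) - ((j:ℕ):ℝ)| * |w| := by rw [abs_of_pos hw0]
      _ = |v i - v j| := by rw [h1, abs_mul]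
  have hinj : Set.InjOn v (Finset.univ : Finset (Fin (dd+1))) := by
    intro i _ j _ hij
    by_contra hne
    have := hdiff i j hne
    rw [hij, sub_self, abs_zero] at this
    linarith
  set P : ℝ[X] := ∑ m : Fin (dd+1), C (a m) * X^(m:ℕ) with hP
  have hPeval : ∀ x : ℝ, P.eval x = ∑ m : Fin (dd+1), a m * x ^ (m:ℕ) := by
    intro x
    rw [hP, Polynomial.eval_finset_sum]
    simp
  have hPco : ∀ m : Fin (dd+1), P.coeff (m:ℕ) = a m := by
    intro m
    rw [hP, Polynomial.finset_sum_coeff]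
    rw [Finset.sum_eq_single m]
    · simp
    · intro b _ hbm
      simp only [Polynomial.coeff_C_mul, Polynomial.coeff_X_pow]
      rw [if_neg (by exact fun hc => hbm (Fin.ext (by exact_mod_cast hc.symm)))]
      ring
    · simp
  have hPdeg : P.degree < (Finset.univ : Finset (Fin (dd+1))).card := by
    rw [Finset.card_univ, Fintype.card_fin]
    apply lt_of_le_of_lt (Polynomial.degree_sum_le _ _)
    rw [Finset.sup_lt_iff (by exact_mod_cast WithBot.bot_lt_coe _)]
    intro m _
    apply lt_of_le_of_lt (Polynomial.degree_C_mul_X_pow_le _ _)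
    exact_mod_cast m.isLt
  have hrep := Lagrange.eq_interpolate hinj hPdeg
  -- coefficient of interpolate
  have hco : P.coeff (k:ℕ) = ∑ i : Fin (dd+1),
      P.eval (v i) * (Lagrange.basis Finset.univ v i).coeff (k:ℕ) := by
    conv_lhs => rw [hrep]
    rw [Lagrange.interpolate_apply, Polynomial.finset_sum_coeff]
    exact Finset.sum_congr rfl fun i _ => by rw [Polynomial.coeff_C_mul]
  have hbasis : ∀ i : Fin (dd+1),
      |(Lagrange.basis Finset.univ v i).coeff (k:ℕ)| ≤ (1/w)^dd * (2^dd * L ^ (dd - (k:ℕ))) := by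
    intro i
    rw [Lagrange.basis]
    have hsplit : ∏ j ∈ Finset.univ.erase i, Lagrange.basisDivisor (v i) (v j)
        = C (∏ j ∈ Finset.univ.erase i, (v i - v j)⁻¹)
          * ∏ j ∈ Finset.univ.erase i, (X - C (v j)) := by
      rw [map_prod, ← Finset.prod_mul_distrib]
      rfl
    rw [hsplit, Polynomial.coeff_C_mul, abs_mul]
    have hcard : (Finset.univ.erase i).card = dd := by
      rw [Finset.card_erase_of_mem (Finset.mem_univ i), Finset.card_univ, Fintype.card_fin]
      omega
    have h1 : |∏ j ∈ Finset.univ.erase i, (v i - v j)⁻¹| ≤ (1/w)^dd := by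
      rw [Finset.abs_prod]
      calc ∏ j ∈ Finset.univ.erase i, |(v i - v j)⁻¹|
          ≤ ∏ j ∈ Finset.univ.erase i, (1/w) := by
            apply Finset.prod_le_prod
            · intro j _; exact abs_nonneg _
            · intro j hj
              rw [abs_inv, one_div]
              exact inv_anti₀ hw0 (hdiff i j (Finset.ne_of_mem_erase hj).symm)
        _ = (1/w)^dd := by rw [Finset.prod_const, hcard]
    have h2 : |(∏ j ∈ Finset.univ.erase i, (X - C (v j))).coeff (k:ℕ)|
        ≤ 2^dd * L ^ (dd - (k:ℕ)) := by
      have := prodXsubC_coeff_le (Finset.univ.erase i) v L hL1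
        (fun j _ => habs j) (k:ℕ)
      rwa [hcard] at this
    exact mul_le_mul h1 h2 (abs_nonneg _) (pow_nonneg (le_of_lt (one_div_pos.mpr hw0)) dd)
  have hfinal : |P.coeff (k:ℕ)| ≤ ((dd:ℝ)+1) * (M * ((1/w)^dd * (2^dd * L ^ (dd - (k:ℕ))))) := by
    rw [hco]
    calc |∑ i : Fin (dd+1), P.eval (v i) * (Lagrange.basis Finset.univ v i).coeff (k:ℕ)|
        ≤ ∑ i : Fin (dd+1), |P.eval (v i) * (Lagrange.basis Finset.univ v i).coeff (k:ℕ)| :=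
          Finset.abs_sum_le_sum_abs _ _
      _ ≤ ∑ _i : Fin (dd+1), M * ((1/w)^dd * (2^dd * L ^ (dd - (k:ℕ)))) := by
          apply Finset.sum_le_sum
          intro i _
          rw [abs_mul]
          apply mul_le_mul _ (hbasis i) (abs_nonneg _) hM
          rw [hPeval]
          exact hbd (v i) (hvmem i)
      _ = ((dd:ℝ)+1) * (M * ((1/w)^dd * (2^dd * L ^ (dd - (k:ℕ))))) := by
          rw [Finset.sum_const, Finset.card_univ, Fintype.card_fin]
          push_cast; ring
  rw [hPco k] at hfinal
  calc |a k| ≤ ((dd:ℝ)+1) * (M * ((1/w)^dd * (2^dd * L ^ (dd - (k:ℕ))))) := hfinal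
    _ = ((dd:ℝ)+1) * 2^dd * ((dd:ℝ)/δ)^dd * M * L ^ (dd - (k:ℕ)) := by
        rw [hw, one_div_div]
        ring


lemma abs_le_two_mul_abs_one_sub_exp (a : ℝ) (ha : |a| ≤ 1/2) :
    |a| ≤ 2 * |1 - Real.exp a| := by
  rcases le_or_gt 0 a with h0 | h0
  · have h1 : 1 + a ≤ Real.exp a := by linarith [Real.add_one_le_exp a]
    have h3 : -(1 - Real.exp a) ≤ |1 - Real.exp a| := by
      rw [← abs_neg]; exact le_abs_self _
    rw [abs_of_nonneg h0]
    linarith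
  · have ha' : -(1/2) ≤ a := by rw [abs_of_neg h0] at ha; linarith
    have h3 : (1 - a) ≤ (Real.exp a)⁻¹ := by
      rw [← Real.exp_neg]; linarith [Real.add_one_le_exp (-a)]
    have h2 : (1 - a) * Real.exp a ≤ 1 := by
      calc (1 - a) * Real.exp a ≤ (Real.exp a)⁻¹ * Real.exp a :=
            mul_le_mul_of_nonneg_right h3 (Real.exp_pos a).le
        _ = 1 := inv_mul_cancel₀ (Real.exp_ne_zero a)
    have hkey : Real.exp a ≤ 1 + a/2 := by nlinarith [Real.exp_pos a, sq_nonneg a]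
    have h4 : 1 - Real.exp a ≤ |1 - Real.exp a| := le_abs_self _
    rw [abs_of_neg h0]
    linarith

set_option maxHeartbeats 1000000
/-- Proposition on sub-level sets of the polynomials `r_{𝔪_ι}` and `r_𝔰`: if the polynomials
`r_{𝔪_ι}(s) = ∑ c_{k,ι} (-1)^k s^k / k!` are bounded by `ε` and
`r_𝔰(s) = ū s² + s(1 - e^a)` is bounded by `max(ε, C s^(1-η))` on `h ≤ D` intervals which are
`b`-close with `b < η / (2 D max_ι d_ι)`, and the last interval ends at `L ≥ 1`, then
`|a| ≤ κ L^(-η/2)`, `|ū| ≤ κ L^(-1-η/2)` and `|c_{j,ι}| ≤ κ ε L^(-j+η/2)`. -/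
theorem sublevel_coeff_bounds (η ε C : ℝ) (I D : ℕ) (d : Fin I → ℕ)
    (hη : η ∈ Set.Ioo (0 : ℝ) 1) (hε : ε ∈ Set.Ioo (0 : ℝ) (1 / 10)) (hC : 0 < C)
    (hI : 0 < I) (hD : 0 < D) (hd : ∀ ι, 0 < d ι) :
    ∃ κ : ℝ, 0 < κ ∧
      ∀ (a ub u : ℝ) (c : (ι : Fin I) → Fin (d ι + 1) → ℝ),
        |a| + |ub| + |u| ≤ ε →
        ∀ (h : ℕ) (s s' : ℕ → ℝ) (L b : ℝ),
          1 ≤ h → h ≤ D →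
          s 0 = 0 →
          (∀ j < h, s j ≤ s' j) →
          (∀ j, j + 1 < h → s' j < s (j + 1)) →
          s' (h - 1) = L → 1 ≤ L →
          0 < b → b < η / (2 * (D : ℝ) * ((Finset.univ.sup d : ℕ) : ℝ)) →
          (∀ j, j + 1 < h → s (j + 1) - s' j ≤ s' j ^ (1 + b)) →
          (∀ j < h, ∀ x ∈ Set.Icc (s j) (s' j),
            (∀ ι : Fin I,
              |∑ m : Fin (d ι + 1),
                  c ι m * (-1 : ℝ) ^ (m : ℕ) * x ^ (m : ℕ) / ((m : ℕ).factorial : ℝ)| ≤ ε) ∧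
            |ub * x ^ 2 + x * (1 - Real.exp a)| ≤ max ε (C * x ^ (1 - η))) →
          |a| ≤ κ * L ^ (-(η / 2)) ∧
          |ub| ≤ κ * L ^ (-1 - η / 2) ∧
          ∀ (ι : Fin I) (j : Fin (d ι + 1)),
            |c ι j| ≤ κ * ε * L ^ (-((j : ℕ) : ℝ) + η / 2) := by
  classical
  obtain ⟨hη0, hη1⟩ := hη
  obtain ⟨hε0, hε1⟩ := hε
  set dM : ℕ := Finset.univ.sup d with hdMdef
  have hdM1 : 1 ≤ dM := le_trans (hd ⟨0, hI⟩) (Finset.le_sup (Finset.mem_univ (⟨0, hI⟩ : Fin I)))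
  have hdM0 : (0:ℝ) < (dM:ℝ) := by exact_mod_cast hdM1
  have hD0 : (0:ℝ) < (D:ℝ) := by exact_mod_cast hD
  set Kpoly : ℝ :=
    (dM.factorial : ℝ) * ((dM:ℝ)+1) * 2^dM * ((dM:ℝ) * (2^D * (D:ℝ)))^dM with hKpdef
  have hKp0 : 0 < Kpoly := by
    apply mul_pos
    apply mul_pos
    apply mul_pos
    · exact_mod_cast dM.factorial_pos
    · positivity
    · positivity
    · positivity
  refine ⟨Kpoly + 22*(ε + C + 1), by positivity, ?_⟩
  intro a ub u c hsum h s s' L b h1h hhD hs0 hss' hs's hs'end hL1 hb0 hbu hclose hbound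
  have hL0 : (0:ℝ) < L := lt_of_lt_of_le one_pos hL1
  -- b bounds
  have hbkey : (D:ℝ) * (dM:ℝ) * b < η/2 := by
    have hpos : (0:ℝ) < 2*(D:ℝ)*(dM:ℝ) := by positivity
    have h1 := (lt_div_iff₀ hpos).mp hbu
    have h2 : b*(2*(D:ℝ)*(dM:ℝ)) = 2*((D:ℝ)*(dM:ℝ)*b) := by ring
    linarith
  have hDdM1 : (1:ℝ) ≤ (D:ℝ)*(dM:ℝ) := by
    have e1 : (1:ℝ) ≤ (D:ℝ) := by exact_mod_cast hD
    have e2 : (1:ℝ) ≤ (dM:ℝ) := by exact_mod_cast hdM1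
    nlinarith
  have hbDb : b ≤ (D:ℝ)*(dM:ℝ)*b := by nlinarith [mul_le_mul_of_nonneg_right hDdM1 hb0.le]
  have hbη2 : b < η/2 := by linarith
  have hb12 : b < 1/2 := by linarith
  -- rpow helpers
  have hrm : ∀ t u : ℝ, t ≤ u → L^t ≤ L^u := fun t u htu =>
    Real.rpow_le_rpow_of_exponent_le hL1 htu
  have hrpos : ∀ t : ℝ, 0 < L^t := fun t => Real.rpow_pos_of_pos hL0 t
  have hone_le : ∀ t : ℝ, 0 ≤ t → (1:ℝ) ≤ L^t := by
    intro t ht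
    have := hrm 0 t ht
    rwa [Real.rpow_zero] at this
  have hLb1 : (1:ℝ) ≤ L^b := hone_le b hb0.le
  -- order facts
  have hsnn : ∀ j, j < h → 0 ≤ s j ∧ s j ≤ s' j := by
    intro j
    induction j with
    | zero => intro hj; exact ⟨le_of_eq hs0.symm, hss' 0 hj⟩
    | succ n ih =>
      intro hj
      have hn : n < h := by omega
      obtain ⟨h1, h2⟩ := ih hn
      have h3 := hs's n hj
      exact ⟨by linarith, hss' _ hj⟩
  have hmono : ∀ k, k < h → ∀ j, j ≤ k → s' j ≤ s' k := by
    intro k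
    induction k with
    | zero => intro _ j hj; rw [Nat.le_zero.mp hj]
    | succ n ih =>
      intro hk j hj
      rcases Nat.lt_succ_iff_lt_or_eq.mp (Nat.lt_succ_of_le hj) with hlt | heq
      · have h1 : s' j ≤ s' n := ih (by omega) j (by omega)
        have h2 := hs's n hk
        have h3 := hss' (n+1) hk
        linarith
      · rw [heq]
  have hs'L : ∀ j, j < h → s' j ≤ L := by
    intro j hj
    rw [← hs'end]
    exact hmono (h-1) (by omega) j (by omega)
  have hs'nn : ∀ j, j < h → 0 ≤ s' j := fun j hj =>
    le_trans (hsnn j hj).1 (hsnn j hj).2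
  -- rpow step bound
  have hpowb : ∀ j, j < h → s' j ^ (1+b) ≤ s' j * L^b := by
    intro j hj
    rcases eq_or_lt_of_le (hs'nn j hj) with h0 | h0
    · rw [← h0, Real.zero_rpow (by positivity), zero_mul]
    · rw [Real.rpow_add' (hs'nn j hj) (by positivity), Real.rpow_one]
      apply mul_le_mul_of_nonneg_left _ (hs'nn j hj)
      exact Real.rpow_le_rpow (hs'nn j hj) (hs'L j hj) hb0.le
  -- chain bound : long interval exists
  have hstep : ∀ j, j + 1 < h → s (j+1) ≤ s' j * (1 + L ^ b) := by
    intro j hj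
    have h1 := hclose j hj
    have h2 := hpowb j (by omega)
    nlinarith [hs'nn j (by omega : j < h), hLb1]
  have hchain : ∀ j, j < h →
      s' j ≤ (1 + L^b)^j * ∑ i ∈ Finset.range (j+1), (s' i - s i) := by
    intro j
    induction j with
    | zero =>
      intro hj
      norm_num [Finset.sum_range_one, hs0]
    | succ n ih =>
      intro hj
      have hn : n < h := by omega
      have h1 := hstep n hj
      have h2 := ih hn
      have hG1 : (1:ℝ) ≤ 1 + L^b := by linarith
      have hsum_nn : (0:ℝ) ≤ ∑ i ∈ Finset.range (n+1), (s' i - s i) := by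
        apply Finset.sum_nonneg
        intro i hi
        have : i < h := by
          have := Finset.mem_range.mp hi; omega
        linarith [(hsnn i this).2]
      have hlnn : (0:ℝ) ≤ s' (n+1) - s (n+1) := by
        linarith [(hsnn (n+1) hj).2]
      have hpow1 : (1:ℝ) ≤ (1+L^b)^(n+1) := one_le_pow₀ hG1
      calc s' (n+1) = s (n+1) + (s' (n+1) - s (n+1)) := by ring
        _ ≤ s' n * (1 + L^b) + (s' (n+1) - s (n+1)) := by linarith
        _ ≤ ((1+L^b)^n * ∑ i ∈ Finset.range (n+1), (s' i - s i)) * (1+L^b)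
              + (s' (n+1) - s (n+1)) := by
            have := mul_le_mul_of_nonneg_right h2 (le_trans zero_le_one hG1)
            linarith
        _ = (1+L^b)^(n+1) * ∑ i ∈ Finset.range (n+1), (s' i - s i)
              + (s' (n+1) - s (n+1)) := by ring
        _ ≤ (1+L^b)^(n+1) * ∑ i ∈ Finset.range (n+1+1), (s' i - s i) := by
            conv_rhs => rw [Finset.sum_range_succ, mul_add]
            have h5 : s' (n+1) - s (n+1) ≤ (1+L^b)^(n+1) * (s' (n+1) - s (n+1)) :=
              le_mul_of_one_le_left hlnn hpow1
            linarith
  set ℓ : ℝ := L ^ (1 - (D:ℝ)*b) / (2^D * (D:ℝ)) with hℓdef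
  have hℓ0 : 0 < ℓ := div_pos (hrpos _) (by positivity)
  obtain ⟨jm, hjm, hlen⟩ : ∃ jm, jm < h ∧ ℓ ≤ s' jm - s jm := by
    by_contra hcon
    push_neg at hcon
    have h1 := hchain (h-1) (by omega)
    rw [hs'end] at h1
    have hsum_lt : ∑ i ∈ Finset.range (h-1+1), (s' i - s i) < (D:ℝ) * ℓ := by
      calc ∑ i ∈ Finset.range (h-1+1), (s' i - s i)
          < ∑ _i ∈ Finset.range (h-1+1), ℓ := by
            apply Finset.sum_lt_sum_of_nonempty
            · exact ⟨0, Finset.mem_range.mpr (by omega)⟩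
            · intro i hi
              exact hcon i (by have := Finset.mem_range.mp hi; omega)
        _ = (h:ℝ) * ℓ := by
            rw [Finset.sum_const, Finset.card_range]
            have : h - 1 + 1 = h := by omega
            rw [this]; simp [nsmul_eq_mul]
        _ ≤ (D:ℝ) * ℓ := by
            apply mul_le_mul_of_nonneg_right _ hℓ0.le
            exact_mod_cast hhD
    have hpowle : (1 + L^b)^(h-1) ≤ (2 * L^b)^D := by
      calc (1 + L^b)^(h-1) ≤ (2 * L^b)^(h-1) := by
            apply pow_le_pow_left₀ (by linarith) (by linarith)
        _ ≤ (2 * L^b)^D := by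
            apply pow_le_pow_right₀ (by linarith) (by omega)
    have hid : (2 * L^b)^D * ((D:ℝ) * ℓ) = L := by
      have e1 : ((L^b)^D : ℝ) = L^(b * (D:ℝ)) := by
        rw [← Real.rpow_natCast (L^b) D, ← Real.rpow_mul hL0.le]
      rw [mul_pow, e1, hℓdef]
      rw [div_eq_mul_inv]
      have e2 : L ^ (b*(D:ℝ)) * L ^ (1 - (D:ℝ)*b) = L := by
        rw [← Real.rpow_add hL0]
        have : b*(D:ℝ) + (1 - (D:ℝ)*b) = 1 := by ring
        rw [this, Real.rpow_one]
      field_simp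
      rw [mul_comm (D:ℝ) b] at e2
      linear_combination e2
    have hG0 : (0:ℝ) < (1 + L^b)^(h-1) := by positivity
    have : L < L := by
      calc L ≤ (1 + L^b)^(h-1) * ∑ i ∈ Finset.range (h-1+1), (s' i - s i) := h1
        _ < (1 + L^b)^(h-1) * ((D:ℝ) * ℓ) := by
            apply mul_lt_mul_of_pos_left hsum_lt hG0
        _ ≤ (2 * L^b)^D * ((D:ℝ) * ℓ) := by
            apply mul_le_mul_of_nonneg_right hpowle (by positivity)
        _ = L := hid
    exact absurd this (lt_irrefl L)
  -- coefficient bounds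
  have hcoeff : ∀ (ι : Fin I) (k : Fin (d ι + 1)),
      |c ι k| ≤ Kpoly * ε * L ^ (-((k:ℕ):ℝ) + η/2) := by
    intro ι k
    have hdι : 0 < d ι := hd ι
    have hdιM : d ι ≤ dM := Finset.le_sup (Finset.mem_univ ι)
    have hddM : ((d ι : ℕ):ℝ) ≤ (dM:ℝ) := by exact_mod_cast hdιM
    have hkdd : (k:ℕ) ≤ d ι := Nat.lt_succ_iff.mp k.isLt
    have hδ0 : (0:ℝ) < s' jm - s jm := lt_of_lt_of_le hℓ0 hlen
    have hα0 : (0:ℝ) ≤ s jm := (hsnn jm hjm).1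
    have hαδ : s jm + (s' jm - s jm) = s' jm := by ring
    have hαδL : s jm + (s' jm - s jm) ≤ L := by rw [hαδ]; exact hs'L jm hjm
    have hbd : ∀ x ∈ Set.Icc (s jm) (s jm + (s' jm - s jm)),
        |∑ m : Fin (d ι + 1),
          (c ι m * (-1:ℝ)^(m:ℕ) / ((m:ℕ).factorial:ℝ)) * x ^ (m:ℕ)| ≤ ε := by
      intro x hx
      rw [hαδ] at hx
      have h1 := (hbound jm hjm x hx).1 ι
      have h2 : ∑ m : Fin (d ι + 1),
          (c ι m * (-1:ℝ)^(m:ℕ) / ((m:ℕ).factorial:ℝ)) * x ^ (m:ℕ)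
          = ∑ m : Fin (d ι + 1), c ι m * (-1:ℝ)^(m:ℕ) * x ^ (m:ℕ) / ((m:ℕ).factorial:ℝ) := by
        apply Finset.sum_congr rfl
        intro m _
        ring
      rw [h2]
      exact h1
    have hkb := poly_coeff_bound (d ι) hdι
      (fun m => c ι m * (-1:ℝ)^(m:ℕ) / ((m:ℕ).factorial:ℝ)) (s jm) (s' jm - s jm) L ε
      hδ0 hα0 hαδL hL1 hε0.le hbd k
    have hfk : (0:ℝ) < ((k:ℕ).factorial : ℝ) := by exact_mod_cast (k:ℕ).factorial_pos
    have hck : |c ι k| = ((k:ℕ).factorial : ℝ)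
        * |c ι k * (-1:ℝ)^(k:ℕ) / ((k:ℕ).factorial:ℝ)| := by
      rw [abs_div, abs_mul, abs_pow, abs_neg, abs_one, one_pow, mul_one, Nat.abs_cast]
      field_simp
    -- bound on the fraction
    have hfrac : ((d ι:ℕ):ℝ)/(s' jm - s jm) ≤ ((d ι:ℕ):ℝ) * (2^D * (D:ℝ)) * L^(-(1-(D:ℝ)*b)) := by
      have h1 : ((d ι:ℕ):ℝ)/(s' jm - s jm) ≤ ((d ι:ℕ):ℝ)/ℓ := by
        apply div_le_div_of_nonneg_left (by positivity) hℓ0 hlen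
      have h2 : ((d ι:ℕ):ℝ)/ℓ = ((d ι:ℕ):ℝ) * (2^D * (D:ℝ)) * L^(-(1-(D:ℝ)*b)) := by
        rw [hℓdef, Real.rpow_neg hL0.le]
        have hne := (hrpos (1-(D:ℝ)*b)).ne'
        field_simp
      linarith
    have hfracpow : (((d ι:ℕ):ℝ)/(s' jm - s jm))^(d ι)
        ≤ (((d ι:ℕ):ℝ) * (2^D * (D:ℝ)))^(d ι) * (L^(-(1-(D:ℝ)*b)))^(d ι) := by
      calc (((d ι:ℕ):ℝ)/(s' jm - s jm))^(d ι)
          ≤ (((d ι:ℕ):ℝ) * (2^D * (D:ℝ)) * L^(-(1-(D:ℝ)*b)))^(d ι) := by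
            apply pow_le_pow_left₀ (div_nonneg (Nat.cast_nonneg _) hδ0.le) hfrac
        _ = (((d ι:ℕ):ℝ) * (2^D * (D:ℝ)))^(d ι) * (L^(-(1-(D:ℝ)*b)))^(d ι) := mul_pow _ _ _
    have hLpow1 : (L^(-(1-(D:ℝ)*b)))^(d ι) = L^(-(1-(D:ℝ)*b) * (d ι : ℕ)) := by
      rw [← Real.rpow_natCast (L^(-(1-(D:ℝ)*b))) (d ι), ← Real.rpow_mul hL0.le]
    have hLpow2 : (L:ℝ)^(d ι - (k:ℕ)) = L^(((d ι:ℕ):ℝ) - ((k:ℕ):ℝ)) := by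
      rw [← Real.rpow_natCast L (d ι - (k:ℕ))]
      congr 1
      exact Nat.cast_sub hkdd
    have hcomb : L^(-(1-(D:ℝ)*b) * (d ι:ℕ)) * L^(((d ι:ℕ):ℝ) - ((k:ℕ):ℝ))
        = L^(((d ι:ℕ):ℝ)*((D:ℝ)*b) - ((k:ℕ):ℝ)) := by
      rw [← Real.rpow_add hL0]
      congr 1
      ring
    have hexpc : L^(((d ι:ℕ):ℝ)*((D:ℝ)*b) - ((k:ℕ):ℝ)) ≤ L^(-((k:ℕ):ℝ) + η/2) := by
      apply hrm
      have h1 : ((d ι:ℕ):ℝ)*((D:ℝ)*b) ≤ (dM:ℝ)*((D:ℝ)*b) :=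
        mul_le_mul_of_nonneg_right hddM (mul_nonneg hD0.le hb0.le)
      have h2 : (dM:ℝ)*((D:ℝ)*b) = (D:ℝ)*(dM:ℝ)*b := by ring
      linarith
    have hstep1 : (((d ι:ℕ):ℝ)/(s' jm - s jm))^(d ι) * (L:ℝ)^(d ι - (k:ℕ))
        ≤ (((d ι:ℕ):ℝ) * (2^D * (D:ℝ)))^(d ι) * L^(-((k:ℕ):ℝ) + η/2) := by
      calc (((d ι:ℕ):ℝ)/(s' jm - s jm))^(d ι) * (L:ℝ)^(d ι - (k:ℕ))
          ≤ ((((d ι:ℕ):ℝ) * (2^D * (D:ℝ)))^(d ι) * (L^(-(1-(D:ℝ)*b)))^(d ι))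
              * (L:ℝ)^(d ι - (k:ℕ)) :=
            mul_le_mul_of_nonneg_right hfracpow (pow_nonneg hL0.le _)
        _ = (((d ι:ℕ):ℝ) * (2^D * (D:ℝ)))^(d ι)
              * (L^(-(1-(D:ℝ)*b) * (d ι:ℕ)) * L^(((d ι:ℕ):ℝ) - ((k:ℕ):ℝ))) := by
            rw [hLpow1, hLpow2]
            ring
        _ = (((d ι:ℕ):ℝ) * (2^D * (D:ℝ)))^(d ι)
              * L^(((d ι:ℕ):ℝ)*((D:ℝ)*b) - ((k:ℕ):ℝ)) := by rw [hcomb]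
        _ ≤ (((d ι:ℕ):ℝ) * (2^D * (D:ℝ)))^(d ι) * L^(-((k:ℕ):ℝ) + η/2) :=
            mul_le_mul_of_nonneg_left hexpc (by positivity)
    -- constant comparison
    have f1 : ((k:ℕ).factorial:ℝ) ≤ (dM.factorial:ℝ) := by
      exact_mod_cast Nat.factorial_le (le_trans hkdd hdιM)
    have f2 : ((d ι:ℕ):ℝ)+1 ≤ (dM:ℝ)+1 := by linarith
    have f3 : (2:ℝ)^(d ι) ≤ 2^dM := pow_le_pow_right₀ (by norm_num) hdιM
    have fb : ((d ι:ℕ):ℝ)*(2^D*(D:ℝ)) ≤ (dM:ℝ)*(2^D*(D:ℝ)) :=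
      mul_le_mul_of_nonneg_right hddM (by positivity)
    have fb1 : (1:ℝ) ≤ (dM:ℝ)*(2^D*(D:ℝ)) := by
      have e1 : (1:ℝ) ≤ (dM:ℝ) := by exact_mod_cast hdM1
      have e2 : (1:ℝ) ≤ (2:ℝ)^D := one_le_pow₀ one_le_two
      have e3 : (1:ℝ) ≤ (D:ℝ) := by exact_mod_cast hD
      nlinarith
    have f4 : (((d ι:ℕ):ℝ)*(2^D*(D:ℝ)))^(d ι) ≤ ((dM:ℝ)*(2^D*(D:ℝ)))^dM := by
      calc (((d ι:ℕ):ℝ)*(2^D*(D:ℝ)))^(d ι) ≤ ((dM:ℝ)*(2^D*(D:ℝ)))^(d ι) :=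
            pow_le_pow_left₀ (by positivity) fb (d ι)
        _ ≤ ((dM:ℝ)*(2^D*(D:ℝ)))^dM := pow_le_pow_right₀ fb1 hdιM
    have hKle : ((k:ℕ).factorial:ℝ) * (((d ι:ℕ):ℝ)+1) * 2^(d ι)
        * (((d ι:ℕ):ℝ)*(2^D*(D:ℝ)))^(d ι) ≤ Kpoly := by
      rw [hKpdef]
      have g1 : ((k:ℕ).factorial:ℝ) * (((d ι:ℕ):ℝ)+1) ≤ (dM.factorial:ℝ) * ((dM:ℝ)+1) :=
        mul_le_mul f1 f2 (by positivity) (by positivity)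
      have g2 : ((k:ℕ).factorial:ℝ) * (((d ι:ℕ):ℝ)+1) * 2^(d ι)
          ≤ (dM.factorial:ℝ) * ((dM:ℝ)+1) * 2^dM :=
        mul_le_mul g1 f3 (by positivity) (by positivity)
      exact mul_le_mul g2 f4 (by positivity) (by positivity)
    calc |c ι k| = ((k:ℕ).factorial : ℝ)
          * |c ι k * (-1:ℝ)^(k:ℕ) / ((k:ℕ).factorial:ℝ)| := hck
      _ ≤ ((k:ℕ).factorial : ℝ) * ((((d ι:ℕ):ℝ)+1) * 2^(d ι)
            * (((d ι:ℕ):ℝ)/(s' jm - s jm))^(d ι) * ε * L ^ (d ι - (k:ℕ))) :=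
          mul_le_mul_of_nonneg_left hkb hfk.le
      _ = (((k:ℕ).factorial : ℝ) * (((d ι:ℕ):ℝ)+1) * 2^(d ι) * ε)
            * ((((d ι:ℕ):ℝ)/(s' jm - s jm))^(d ι) * (L:ℝ)^(d ι - (k:ℕ))) := by ring
      _ ≤ (((k:ℕ).factorial : ℝ) * (((d ι:ℕ):ℝ)+1) * 2^(d ι) * ε)
            * ((((d ι:ℕ):ℝ) * (2^D * (D:ℝ)))^(d ι) * L^(-((k:ℕ):ℝ) + η/2)) := by
          apply mul_le_mul_of_nonneg_left hstep1 (by positivity)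
      _ = (((k:ℕ).factorial:ℝ) * (((d ι:ℕ):ℝ)+1) * 2^(d ι)
            * (((d ι:ℕ):ℝ)*(2^D*(D:ℝ)))^(d ι)) * ε * L^(-((k:ℕ):ℝ) + η/2) := by ring
      _ ≤ Kpoly * ε * L^(-((k:ℕ):ℝ) + η/2) := by
          apply mul_le_mul_of_nonneg_right _ (hrpos _).le
          exact mul_le_mul_of_nonneg_right hKle hε0.le
  -- point x₁
  obtain ⟨x₁, j₁, hj₁, hx₁mem, hx₁low, hx₁half⟩ :
      ∃ x₁ j₁, j₁ < h ∧ x₁ ∈ Set.Icc (s j₁) (s' j₁) ∧ L^(1-b)/4 ≤ x₁ ∧ x₁ ≤ L/2 := by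
    have hL1b : L^(1-b) ≤ L := by
      have := hrm (1-b) 1 (by linarith)
      rwa [Real.rpow_one] at this
    by_cases hcase : ∃ j, j < h ∧ s j ≤ L/2 ∧ L/4 ≤ s' j
    · obtain ⟨j, hj, hsj, hs'j⟩ := hcase
      refine ⟨max (s j) (L/4), j, hj, ⟨le_max_left _ _, max_le (hsnn j hj).2 hs'j⟩, ?_, ?_⟩
      · calc L^(1-b)/4 ≤ L/4 := by linarith
          _ ≤ max (s j) (L/4) := le_max_right _ _
      · exact max_le hsj (by linarith)
    · push_neg at hcase
      have hex : ∃ n, n < h ∧ L/4 ≤ s' n := ⟨h-1, by omega, by rw [hs'end]; linarith⟩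
      have hj₀spec := Nat.find_spec hex
      set j₀ := Nat.find hex with hj₀def
      obtain ⟨hj₀h, hj₀ge⟩ := hj₀spec
      have hj₀pos : 0 < j₀ := by
        rcases Nat.eq_zero_or_pos j₀ with h0 | hpos
        · exfalso
          rw [h0] at hj₀ge
          have := hcase 0 (by omega) (by rw [hs0]; linarith)
          linarith
        · exact hpos
      have hjlt : j₀ - 1 < h := by omega
      have hs'jlt : s' (j₀-1) < L / 4 := by
        have hmin := Nat.find_min hex (show j₀ - 1 < j₀ by omega)
        push_neg at hmin
        exact hmin hjlt
      have hsj₀ : L/2 < s j₀ := by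
        by_contra hc
        push_neg at hc
        exact absurd hj₀ge (not_le.mpr (hcase j₀ hj₀h hc))
      have hj01 : j₀ - 1 + 1 = j₀ := by omega
      have hgap : s j₀ - s' (j₀-1) ≤ s' (j₀-1) ^ (1+b) := by
        have := hclose (j₀-1) (by omega)
        rwa [hj01] at this
      have hpb := hpowb (j₀-1) hjlt
      have h1 : L/4 < s' (j₀-1) * L^b := by linarith
      have hx1low : L^(1-b)/4 ≤ s' (j₀-1) := by
        have hLbpos : (0:ℝ) < L^b := hrpos b
        have h2 : L/4/(L^b) < s' (j₀-1) := by
          rw [div_lt_iff₀ hLbpos]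
          linarith
        have h3 : L^(1-b)/4 = L/4/(L^b) := by
          rw [Real.rpow_sub hL0, Real.rpow_one]
          ring
        linarith [h3 ▸ h2]
      exact ⟨s' (j₀-1), j₀-1, hjlt, ⟨(hsnn _ hjlt).2, le_refl _⟩, hx1low, by linarith⟩
  have hx₁0 : 0 < x₁ := lt_of_lt_of_le (by positivity) hx₁low
  have hx₁L : x₁ ≤ L := by linarith
  -- r bounds
  have hmax : ∀ x : ℝ, 0 ≤ x → max ε (C * x ^ (1-η)) ≤ ε + C * x ^ (1-η) := by
    intro x hx
    apply max_le
    · nlinarith [Real.rpow_nonneg hx (1-η)]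
    · linarith
  have hr1 : |ub * x₁^2 + x₁*(1 - Real.exp a)| ≤ ε + C * x₁ ^ (1-η) :=
    le_trans ((hbound j₁ hj₁ x₁ hx₁mem).2) (hmax x₁ hx₁0.le)
  have hLmem : L ∈ Set.Icc (s (h-1)) (s' (h-1)) :=
    ⟨hs'end ▸ (hsnn (h-1) (by omega)).2, le_of_eq hs'end.symm⟩
  have hr2 : |ub * L^2 + L*(1 - Real.exp a)| ≤ ε + C * L ^ (1-η) :=
    le_trans ((hbound (h-1) (by omega) L hLmem).2) (hmax L hL0.le)
  -- |r2|/L bound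
  have hq2 : |ub * L^2 + L*(1 - Real.exp a)| / L ≤ (ε+C) * L^(-(η/2)) := by
    have hr2' : |ub * L^2 + L*(1 - Real.exp a)| ≤ (ε+C) * L^(1 - η/2) := by
      have e1 : (1:ℝ) ≤ L^(1-η/2) := hone_le _ (by linarith)
      have e2 : C * L^(1-η) ≤ C * L^(1-η/2) := mul_le_mul_of_nonneg_left (hrm _ _ (by linarith)) hC.le
      have e3 : ε ≤ ε * L^(1-η/2) := by
        calc ε = ε * 1 := by ring
          _ ≤ ε * L^(1-η/2) := mul_le_mul_of_nonneg_left e1 hε0.le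
      calc |ub * L^2 + L*(1 - Real.exp a)| ≤ ε + C * L^(1-η) := hr2
        _ ≤ ε * L^(1-η/2) + C * L^(1-η/2) := by linarith
        _ = (ε+C) * L^(1-η/2) := by ring
    rw [div_le_iff₀ hL0]
    have e4 : L^(-(η/2)) * L = L^(1-η/2) := by
      calc L^(-(η/2)) * L = L^(-(η/2)) * L^(1:ℝ) := by rw [Real.rpow_one]
        _ = L^(-(η/2)+1) := (Real.rpow_add hL0 _ _).symm
        _ = L^(1-η/2) := by rw [show -(η/2)+1 = 1-η/2 by ring]
    calc |ub * L^2 + L*(1 - Real.exp a)| ≤ (ε+C) * L^(1-η/2) := hr2'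
      _ = (ε+C) * L^(-(η/2)) * L := by rw [mul_assoc, e4]
  have hq1 : |ub * x₁^2 + x₁*(1 - Real.exp a)| / x₁ ≤ (4*ε+4*C) * L^(-(η/2)) := by
    have p1 : L^(-(η/2)) * L^(1-b) = L^(1-b-η/2) := by
      rw [← Real.rpow_add hL0]
      congr 1
      ring
    have p2 : (1:ℝ) ≤ L^(1-b-η/2) := hone_le _ (by linarith)
    have p3 : L^(1-b-η/2) ≤ 4 * L^(-(η/2)) * x₁ := by
      calc L^(1-b-η/2) = 4 * (L^(-(η/2)) * (L^(1-b)/4)) := by rw [← p1]; ring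
        _ ≤ 4 * (L^(-(η/2)) * x₁) := by
            have := mul_le_mul_of_nonneg_left hx₁low (hrpos (-(η/2))).le
            linarith
        _ = 4 * L^(-(η/2)) * x₁ := by ring
    have part1 : ε ≤ 4*ε * L^(-(η/2)) * x₁ := by
      have h1 : (1:ℝ) ≤ 4 * L^(-(η/2)) * x₁ := le_trans p2 p3
      calc ε = ε * 1 := by ring
        _ ≤ ε * (4 * L^(-(η/2)) * x₁) := mul_le_mul_of_nonneg_left h1 hε0.le
        _ = 4*ε * L^(-(η/2)) * x₁ := by ring
    have q0 : (0:ℝ) < L^(1-b)/4 := by positivity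
    have q1 : x₁^(-η : ℝ) ≤ (L^(1-b)/4)^(-η : ℝ) :=
      Real.rpow_le_rpow_of_nonpos q0 hx₁low (by linarith)
    have q2 : ((L^(1-b)/4 : ℝ))^(-η : ℝ) = L^((1-b)*(-η)) * 4^η := by
      rw [Real.div_rpow (Real.rpow_nonneg hL0.le _) (by norm_num : (0:ℝ) ≤ 4)]
      rw [← Real.rpow_mul hL0.le]
      rw [Real.rpow_neg (by norm_num : (0:ℝ) ≤ 4)]
      rw [div_eq_mul_inv, inv_inv]
    have q3 : L^((1-b)*(-η)) ≤ L^(-(η/2)) := by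
      apply hrm
      nlinarith
    have q4 : (4:ℝ)^(η:ℝ) ≤ 4 := by
      have := Real.rpow_le_rpow_of_exponent_le (by norm_num : (1:ℝ) ≤ 4) hη1.le
      rwa [Real.rpow_one] at this
    have q5 : x₁^(-η : ℝ) ≤ 4 * L^(-(η/2)) := by
      calc x₁^(-η : ℝ) ≤ L^((1-b)*(-η)) * 4^η := q1.trans (le_of_eq q2)
        _ ≤ L^(-(η/2)) * 4 := by
            apply mul_le_mul q3 q4 (Real.rpow_nonneg (by norm_num) _) (hrpos _).le
        _ = 4 * L^(-(η/2)) := by ring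
    have q6 : x₁^((1:ℝ)-η) = x₁ * x₁^(-η:ℝ) := by
      rw [show (1:ℝ)-η = 1+(-η) by ring, Real.rpow_add hx₁0, Real.rpow_one]
    have part2 : C * x₁^((1:ℝ)-η) ≤ 4*C * L^(-(η/2)) * x₁ := by
      rw [q6]
      calc C * (x₁ * x₁^(-η:ℝ)) = C * x₁ * x₁^(-η:ℝ) := by ring
        _ ≤ C * x₁ * (4 * L^(-(η/2))) := by
            apply mul_le_mul_of_nonneg_left q5 (by positivity)
        _ = 4*C * L^(-(η/2)) * x₁ := by ring
    rw [div_le_iff₀ hx₁0]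
    calc |ub * x₁^2 + x₁*(1 - Real.exp a)| ≤ ε + C * x₁^((1:ℝ)-η) := hr1
      _ ≤ 4*ε * L^(-(η/2)) * x₁ + 4*C * L^(-(η/2)) * x₁ := by linarith
      _ = (4*ε+4*C) * L^(-(η/2)) * x₁ := by ring
  -- ub bound
  have hub : |ub| ≤ 10*(ε+C) * L^(-1 - η/2) := by
    have hLx0 : (0:ℝ) < L - x₁ := by linarith
    have hLx1 : L/2 ≤ L - x₁ := by linarith
    have hubeq : ub = ((ub*L^2 + L*(1 - Real.exp a))/L
        - (ub*x₁^2 + x₁*(1 - Real.exp a))/x₁) / (L - x₁) := by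
      field_simp
      ring
    have h6 : |ub| ≤ ((ε+C) * L^(-(η/2)) + (4*ε+4*C) * L^(-(η/2))) / (L/2) := by
      rw [hubeq, abs_div, abs_of_pos hLx0]
      apply div_le_div₀ (by positivity) ?_ (by linarith) hLx1
      calc |(ub*L^2 + L*(1 - Real.exp a))/L - (ub*x₁^2 + x₁*(1 - Real.exp a))/x₁|
          ≤ |(ub*L^2 + L*(1 - Real.exp a))/L| + |(ub*x₁^2 + x₁*(1 - Real.exp a))/x₁| :=
            abs_sub _ _
        _ = |ub*L^2 + L*(1 - Real.exp a)|/L + |ub*x₁^2 + x₁*(1 - Real.exp a)|/x₁ := by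
            rw [abs_div, abs_of_pos hL0, abs_div, abs_of_pos hx₁0]
        _ ≤ (ε+C) * L^(-(η/2)) + (4*ε+4*C) * L^(-(η/2)) := add_le_add hq2 hq1
    have hfin : ((ε+C) * L^(-(η/2)) + (4*ε+4*C) * L^(-(η/2))) / (L/2)
        = 10*(ε+C) * L^(-1-η/2) := by
      have e1 : L^(-1-η/2 : ℝ) = L^(-(η/2)) / L := by
        rw [show (-1-η/2 : ℝ) = -(η/2) - 1 by ring, Real.rpow_sub hL0, Real.rpow_one]
      rw [e1]
      field_simp
      ring
    calc |ub| ≤ ((ε+C) * L^(-(η/2)) + (4*ε+4*C) * L^(-(η/2))) / (L/2) := h6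
      _ = 10*(ε+C) * L^(-1-η/2) := hfin
  -- a bound
  have hA : |1 - Real.exp a| ≤ 11*(ε+C) * L^(-(η/2)) := by
    have e1 : L^(-1-η/2 : ℝ) * L = L^(-(η/2)) := by
      calc L^(-1-η/2 : ℝ) * L = L^(-1-η/2 : ℝ) * L^(1:ℝ) := by rw [Real.rpow_one]
        _ = L^(-1-η/2+1) := (Real.rpow_add hL0 _ _).symm
        _ = L^(-(η/2)) := by rw [show (-1-η/2+1:ℝ) = -(η/2) by ring]
    have t2 : |ub| * L ≤ 10*(ε+C) * L^(-(η/2)) := by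
      calc |ub| * L ≤ 10*(ε+C) * L^(-1-η/2) * L := mul_le_mul_of_nonneg_right hub hL0.le
        _ = 10*(ε+C) * L^(-(η/2)) := by rw [mul_assoc, e1]
    have t4 : L * |1 - Real.exp a| ≤ |ub*L^2 + L*(1 - Real.exp a)| + |ub| * L^2 := by
      calc L * |1 - Real.exp a| = |L*(1 - Real.exp a)| := by
            rw [abs_mul, abs_of_pos hL0]
        _ = |(ub*L^2 + L*(1 - Real.exp a)) - ub*L^2| := by ring_nf
        _ ≤ |ub*L^2 + L*(1 - Real.exp a)| + |ub*L^2| := abs_sub _ _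
        _ = |ub*L^2 + L*(1 - Real.exp a)| + |ub| * L^2 := by
            rw [abs_mul, abs_of_pos (by positivity : (0:ℝ) < L^2)]
    have t5 : |1 - Real.exp a| ≤ |ub*L^2 + L*(1 - Real.exp a)|/L + |ub| * L := by
      have h9 : (|ub*L^2 + L*(1 - Real.exp a)|/L + |ub| * L) * L
          = |ub*L^2 + L*(1 - Real.exp a)| + |ub| * L^2 := by
        field_simp
      have h10 : |1 - Real.exp a| * L
          ≤ (|ub*L^2 + L*(1 - Real.exp a)|/L + |ub| * L) * L := by
        rw [h9]
        linarith [t4]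
      exact le_of_mul_le_mul_right h10 hL0
    calc |1 - Real.exp a| ≤ |ub*L^2 + L*(1 - Real.exp a)|/L + |ub| * L := t5
      _ ≤ (ε+C) * L^(-(η/2)) + 10*(ε+C) * L^(-(η/2)) := add_le_add hq2 t2
      _ = 11*(ε+C) * L^(-(η/2)) := by ring
  have haε : |a| ≤ ε := by
    have h1 := abs_nonneg ub
    have h2 := abs_nonneg u
    linarith
  have ha : |a| ≤ 22*(ε+C) * L^(-(η/2)) := by
    have h1 := abs_le_two_mul_abs_one_sub_exp a (by linarith)
    calc |a| ≤ 2 * |1 - Real.exp a| := h1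
      _ ≤ 2 * (11*(ε+C) * L^(-(η/2))) := by linarith
      _ = 22*(ε+C) * L^(-(η/2)) := by ring
  refine ⟨?_, ?_, ?_⟩
  · calc |a| ≤ 22*(ε+C) * L^(-(η/2)) := ha
      _ ≤ (Kpoly + 22*(ε + C + 1)) * L^(-(η/2)) := by
          apply mul_le_mul_of_nonneg_right _ (hrpos _).le
          linarith
  · calc |ub| ≤ 10*(ε+C) * L^(-1 - η/2) := hub
      _ ≤ (Kpoly + 22*(ε + C + 1)) * L^(-1 - η/2) := by
          apply mul_le_mul_of_nonneg_right _ (hrpos _).le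
          linarith
  · intro ι k
    calc |c ι k| ≤ Kpoly * ε * L ^ (-((k:ℕ):ℝ) + η/2) := hcoeff ι k
      _ ≤ (Kpoly + 22*(ε + C + 1)) * ε * L ^ (-((k:ℕ):ℝ) + η/2) := by
          apply mul_le_mul_of_nonneg_right _ (hrpos _).le
          exact mul_le_mul_of_nonneg_right (by linarith) hε0.le
end

section
/- Let (M, μ) be a probability space and φ : ℝ × M → M a jointly measurable measure-preserving flow. Let f : M → ℂ be measurable and bounded with ∫_M f dμ = 0, and let S ≥ sup_M |f|. Suppose there are constants C_M > 0 and η̃ ∈ (0,1) such that |∫_M f(φ^t(x)) · conj(f(x)) dμ(x)| ≤ C_M S² t^{−η̃} for all t ≥ 1. Set η′ = η̃/4. Then there exists a constant C′ > 0, depending only on C_M and η̃, such that for every ω > 0 there exist a measurable set Y ⊆ M with μ(Y) ≥ 1 − ω and a number m′ = m′(ω) ≥ 1 such that for every x ∈ Y and every t ≥ m′ one has |∫₀^t f(φ^s(x)) ds| ≤ C′ S t^{1−η′}. -/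
open MeasureTheory intervalIntegral

lemma aux_rpow_int {η t s : ℝ} (hη0 : 0 < η) (hη1 : η < 1) (hs : s ∈ Set.Icc 0 t) :
    IntegrableOn (fun u => |s - u| ^ (-η)) (Set.Ioc 0 t) ∧
    ∫ u in Set.Ioc 0 t, |s - u| ^ (-η) ≤ 2 * t ^ (1 - η) / (1 - η) := by
  obtain ⟨hs0, hst⟩ := hs
  have ht0 : 0 ≤ t := le_trans hs0 hst
  have hbase : ∀ a : ℝ, IntervalIntegrable (fun r : ℝ => r ^ (-η)) volume 0 a :=
    fun a => intervalIntegral.intervalIntegrable_rpow' (by linarith)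
  have hval : ∀ a : ℝ, 0 ≤ a → (∫ r in (0:ℝ)..a, r ^ (-η)) = a ^ (1 - η) / (1 - η) := by
    intro a ha
    rw [integral_rpow (Or.inl (by linarith))]
    rw [Real.zero_rpow (by linarith)]
    norm_num
    rw [neg_add_eq_sub]
  have habs1 : ∀ u ∈ Set.Ioc 0 s, (s - u) ^ (-η) = |s - u| ^ (-η) := by
    intro u hu; rw [abs_of_nonneg (by linarith [hu.2] : (0:ℝ) ≤ s - u)]
  have habs2 : ∀ u ∈ Set.Ioc s t, (u - s) ^ (-η) = |s - u| ^ (-η) := by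
    intro u hu; rw [abs_of_nonpos (by linarith [hu.1] : s - u ≤ 0), neg_sub]
  -- piece 1 : on Ioc 0 s
  have h1 : IntervalIntegrable (fun u : ℝ => (s - u) ^ (-η)) volume 0 s := by
    have := ((hbase s).comp_sub_left s).symm
    simpa using this
  have hpi1 : IntegrableOn (fun u => |s - u| ^ (-η)) (Set.Ioc 0 s) :=
    (((intervalIntegrable_iff_integrableOn_Ioc_of_le hs0).mp h1).congr_fun habs1
      measurableSet_Ioc)
  have hvi1 : ∫ u in Set.Ioc 0 s, |s - u| ^ (-η) = s ^ (1 - η) / (1 - η) := by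
    rw [← setIntegral_congr_fun measurableSet_Ioc habs1,
      ← intervalIntegral.integral_of_le hs0, intervalIntegral.integral_comp_sub_left
        (fun r => r ^ (-η)) s]
    simp only [sub_zero, sub_self]
    exact hval s hs0
  -- piece 2 : on Ioc s t
  have h2 : IntervalIntegrable (fun u : ℝ => (u - s) ^ (-η)) volume s t := by
    have := (hbase (t - s)).comp_sub_right s
    simpa using this
  have hpi2 : IntegrableOn (fun u => |s - u| ^ (-η)) (Set.Ioc s t) :=
    (((intervalIntegrable_iff_integrableOn_Ioc_of_le hst).mp h2).congr_fun habs2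
      measurableSet_Ioc)
  have hvi2 : ∫ u in Set.Ioc s t, |s - u| ^ (-η) = (t - s) ^ (1 - η) / (1 - η) := by
    rw [← setIntegral_congr_fun measurableSet_Ioc habs2,
      ← intervalIntegral.integral_of_le hst,
      intervalIntegral.integral_comp_sub_right (fun r => r ^ (-η)) s]
    simp only [sub_self]
    exact hval (t - s) (by linarith)
  have hunion : Set.Ioc 0 s ∪ Set.Ioc s t = Set.Ioc 0 t := Set.Ioc_union_Ioc_eq_Ioc hs0 hst
  have hdisj : Disjoint (Set.Ioc 0 s) (Set.Ioc s t) := Set.Ioc_disjoint_Ioc_of_le le_rfl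
  constructor
  · rw [← hunion]; exact hpi1.union hpi2
  · rw [← hunion, setIntegral_union hdisj measurableSet_Ioc hpi1 hpi2, hvi1, hvi2]
    have h1η : 0 < 1 - η := by linarith
    have hb1 : s ^ (1 - η) ≤ t ^ (1 - η) := Real.rpow_le_rpow hs0 hst (by linarith)
    have hb2 : (t - s) ^ (1 - η) ≤ t ^ (1 - η) :=
      Real.rpow_le_rpow (by linarith) (by linarith) (by linarith)
    rw [← add_div, div_le_div_iff₀ h1η h1η]
    nlinarith

lemma corr_shift {M : Type} [MeasurableSpace M] (μ : Measure M) [IsProbabilityMeasure μ]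
    (φ : ℝ → M → M) (hφ : Measurable (Function.uncurry φ))
    (hcomp : ∀ s t, φ (s + t) = φ s ∘ φ t) (hmp : ∀ t, MeasurePreserving (φ t) μ μ)
    (f : M → ℂ) (hf : Measurable f) {s u : ℝ} (hus : u ≤ s) :
    ∫ x, f (φ s x) * (starRingEnd ℂ) (f (φ u x)) ∂μ
      = ∫ x, f (φ (s - u) x) * (starRingEnd ℂ) (f x) ∂μ := by
  have hφt : ∀ r : ℝ, Measurable (φ r) := fun r =>
    hφ.comp (measurable_const.prodMk measurable_id)
  have hkey : ∀ x, φ s x = φ (s - u) (φ u x) := by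
    intro x
    have := hcomp (s - u) u
    rw [sub_add_cancel] at this
    rw [this]; rfl
  have h1 : ∫ x, f (φ s x) * (starRingEnd ℂ) (f (φ u x)) ∂μ
      = ∫ x, (fun y => f (φ (s - u) y) * (starRingEnd ℂ) (f y)) (φ u x) ∂μ := by
    congr 1; funext x; rw [hkey x]
  have hg : AEStronglyMeasurable (fun y => f (φ (s - u) y) * (starRingEnd ℂ) (f y))
      (Measure.map (φ u) μ) := by
    rw [(hmp u).map_eq]
    exact ((hf.comp (hφt (s - u))).mul (Complex.continuous_conj.measurable.comp hf)).aestronglyMeasurable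
  have h2 := integral_map (hφt u).aemeasurable hg
  rw [(hmp u).map_eq] at h2
  rw [h1, ← h2]

lemma corr_bound {C_M ηt : ℝ} (hCM : 0 < C_M) (hη : ηt ∈ Set.Ioo (0 : ℝ) 1)
    {M : Type} [MeasurableSpace M] (μ : Measure M) [IsProbabilityMeasure μ]
    (φ : ℝ → M → M) (hφ : Measurable (Function.uncurry φ))
    (hcomp : ∀ s t, φ (s + t) = φ s ∘ φ t) (hmp : ∀ t, MeasurePreserving (φ t) μ μ)
    (f : M → ℂ) (hf : Measurable f) (S : ℝ) (hS0 : 0 ≤ S) (hS : ∀ x, ‖f x‖ ≤ S)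
    (hcorr : ∀ t : ℝ, 1 ≤ t →
      ‖∫ x, f (φ t x) * (starRingEnd ℂ) (f x) ∂μ‖ ≤ C_M * S ^ 2 * t ^ (-ηt))
    {s u : ℝ} (hsu : s ≠ u) :
    ‖∫ x, f (φ s x) * (starRingEnd ℂ) (f (φ u x)) ∂μ‖
      ≤ (C_M + 1) * S ^ 2 * |s - u| ^ (-ηt) := by
  have hSn : ∀ x, ‖f x‖ ≤ S := fun x => by exact hS x
  have main : ∀ s u : ℝ, u < s →
      ‖∫ x, f (φ s x) * (starRingEnd ℂ) (f (φ u x)) ∂μ‖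
        ≤ (C_M + 1) * S ^ 2 * |s - u| ^ (-ηt) := by
    intro s u hus
    rw [corr_shift μ φ hφ hcomp hmp f hf hus.le]
    have habs : |s - u| = s - u := abs_of_pos (by linarith)
    rw [habs]
    rcases le_or_gt 1 (s - u) with hr | hr
    · calc ‖∫ x, f (φ (s - u) x) * (starRingEnd ℂ) (f x) ∂μ‖
          ≤ C_M * S ^ 2 * (s - u) ^ (-ηt) := by
            exact hcorr _ hr
        _ ≤ (C_M + 1) * S ^ 2 * (s - u) ^ (-ηt) := by
            have : (0:ℝ) ≤ (s - u) ^ (-ηt) := Real.rpow_nonneg (by linarith) _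
            nlinarith
    · have hpos : 0 < s - u := by linarith
      have hge1 : (1:ℝ) ≤ (s - u) ^ (-ηt) :=
        Real.one_le_rpow_of_pos_of_le_one_of_nonpos hpos hr.le (by linarith [hη.1])
      have hbdd : ‖∫ x, f (φ (s - u) x) * (starRingEnd ℂ) (f x) ∂μ‖ ≤ S ^ 2 := by
        have h := norm_integral_le_of_norm_le_const (μ := μ) (C := S ^ 2)
          (f := fun x => f (φ (s - u) x) * (starRingEnd ℂ) (f x))
          (ae_of_all _ fun x => by
            rw [norm_mul, starRingEnd_apply, norm_star, sq]
            exact mul_le_mul (hSn _) (hSn _) (norm_nonneg _) hS0)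
        simpa using h
      calc ‖∫ x, f (φ (s - u) x) * (starRingEnd ℂ) (f x) ∂μ‖ ≤ S ^ 2 := hbdd
        _ = 1 * S ^ 2 * 1 := by ring
        _ ≤ (C_M + 1) * S ^ 2 * (s - u) ^ (-ηt) := by
            have h1 : (1:ℝ) ≤ C_M + 1 := by linarith
            have h2 : (0:ℝ) ≤ S ^ 2 := sq_nonneg S
            have : 1 * S ^ 2 ≤ (C_M + 1) * S ^ 2 := by nlinarith
            exact mul_le_mul this hge1 zero_le_one (by positivity)
  rcases lt_or_gt_of_ne hsu with h | h
  · have hconj : ∫ x, f (φ s x) * (starRingEnd ℂ) (f (φ u x)) ∂μ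
        = (starRingEnd ℂ) (∫ x, f (φ u x) * (starRingEnd ℂ) (f (φ s x)) ∂μ) := by
      rw [← integral_conj]
      congr 1; funext x
      simp [mul_comm]
    rw [hconj, starRingEnd_apply, norm_star, abs_sub_comm s u]
    exact main u s h
  · exact main s u h

lemma variance_bound {C_M ηt : ℝ} (hCM : 0 < C_M) (hη : ηt ∈ Set.Ioo (0 : ℝ) 1)
    {M : Type} [MeasurableSpace M] (μ : Measure M) [IsProbabilityMeasure μ]
    (φ : ℝ → M → M) (hφ : Measurable (Function.uncurry φ))
    (hcomp : ∀ s t, φ (s + t) = φ s ∘ φ t) (hmp : ∀ t, MeasurePreserving (φ t) μ μ)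
    (f : M → ℂ) (hf : Measurable f) (S : ℝ) (hS0 : 0 ≤ S) (hS : ∀ x, ‖f x‖ ≤ S)
    (hcorr : ∀ t : ℝ, 1 ≤ t →
      ‖∫ x, f (φ t x) * (starRingEnd ℂ) (f x) ∂μ‖ ≤ C_M * S ^ 2 * t ^ (-ηt))
    {t : ℝ} (ht : 1 ≤ t) :
    ∫ x, ‖∫ s in Set.Ioc (0:ℝ) t, f (φ s x)‖ ^ 2 ∂μ
      ≤ (2 * (C_M + 1) / (1 - ηt)) * S ^ 2 * t ^ (2 - ηt) := by
  have hSn : ∀ x, ‖f x‖ ≤ S := fun x => by exact hS x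
  have ht0 : (0:ℝ) < t := by linarith
  set I : Set ℝ := Set.Ioc (0:ℝ) t with hI
  set ν : Measure ℝ := volume.restrict I with hν
  have hνuniv : ν Set.univ = ENNReal.ofReal t := by
    rw [hν, Measure.restrict_apply_univ, hI, Real.volume_Ioc, sub_zero]
  haveI : IsFiniteMeasure ν := ⟨by rw [hνuniv]; exact ENNReal.ofReal_lt_top⟩
  have hνt : ν.real Set.univ = t := by rw [measureReal_def, hνuniv, ENNReal.toReal_ofReal ht0.le]
  have hF : Measurable (fun p : ℝ × M => f (φ p.1 p.2)) := hf.comp hφ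
  set A : M → ℂ := fun x => ∫ s, f (φ s x) ∂ν with hA
  have hAm : StronglyMeasurable A := by
    have h : StronglyMeasurable (fun p : M × ℝ => f (φ p.2 p.1)) :=
      (hF.comp measurable_swap).stronglyMeasurable
    exact h.integral_prod_right'
  have hAb : ∀ x, ‖A x‖ ≤ S * t := by
    intro x
    have := norm_integral_le_of_norm_le_const (μ := ν) (C := S)
      (f := fun s => f (φ s x)) (ae_of_all _ fun s => hSn _)
    rwa [hνt] at this
  -- pointwise expansion
  have hexp : ∀ x, A x * (starRingEnd ℂ) (A x)
      = ∫ s, (∫ u, f (φ s x) * (starRingEnd ℂ) (f (φ u x)) ∂ν) ∂ν := by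
    intro x
    simp_rw [MeasureTheory.integral_const_mul]
    rw [MeasureTheory.integral_mul_const, hA, ← integral_conj]
  -- integrability of A * conj A
  have hAc : Integrable (fun x => A x * (starRingEnd ℂ) (A x)) μ := by
    refine ⟨(hAm.mul ((Complex.continuous_conj.comp_stronglyMeasurable hAm))).aestronglyMeasurable, ?_⟩
    apply HasFiniteIntegral.of_bounded (C := (S * t) * (S * t))
    refine ae_of_all _ fun x => ?_
    rw [norm_mul, starRingEnd_apply, norm_star]
    exact mul_le_mul (hAb x) (hAb x) (norm_nonneg _) (by positivity)
  -- step 1 : ∫ ‖A‖² = re ∫ A conj A ≤ ‖∫ A conj A‖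
  have step1 : ∫ x, ‖A x‖ ^ 2 ∂μ ≤ ‖∫ x, A x * (starRingEnd ℂ) (A x) ∂μ‖ := by
    have h1 : ∀ x, ‖A x‖ ^ 2 = (A x * (starRingEnd ℂ) (A x)).re := by
      intro x
      rw [Complex.mul_conj]
      simp [Complex.normSq_eq_norm_sq, ← Complex.ofReal_pow]
    calc ∫ x, ‖A x‖ ^ 2 ∂μ = ∫ x, (A x * (starRingEnd ℂ) (A x)).re ∂μ := by simp_rw [h1]
      _ = (∫ x, A x * (starRingEnd ℂ) (A x) ∂μ).re := by
          rw [← RCLike.re_eq_complex_re, ← integral_re hAc]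
      _ ≤ ‖∫ x, A x * (starRingEnd ℂ) (A x) ∂μ‖ := Complex.re_le_norm _
  have hφt : ∀ r : ℝ, Measurable (φ r) := fun r =>
    hφ.comp (measurable_const.prodMk measurable_id)
  -- Fubini swaps
  have hint1 : Integrable (Function.uncurry fun (x : M) (s : ℝ) =>
      ∫ u, f (φ s x) * (starRingEnd ℂ) (f (φ u x)) ∂ν) (μ.prod ν) := by
    have hg : Measurable (fun q : (M × ℝ) × ℝ =>
        f (φ q.1.2 q.1.1) * (starRingEnd ℂ) (f (φ q.2 q.1.1))) := by
      apply Measurable.mul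
      · exact hF.comp ((measurable_snd.comp measurable_fst).prodMk
          (measurable_fst.comp measurable_fst))
      · exact Complex.continuous_conj.measurable.comp
          (hF.comp (measurable_snd.prodMk (measurable_fst.comp measurable_fst)))
    refine ⟨(hg.stronglyMeasurable.integral_prod_right').aestronglyMeasurable, ?_⟩
    apply HasFiniteIntegral.of_bounded (C := S * S * t)
    refine ae_of_all _ fun p => ?_
    have := norm_integral_le_of_norm_le_const (μ := ν) (C := S * S)
      (f := fun u => f (φ p.2 p.1) * (starRingEnd ℂ) (f (φ u p.1)))
      (ae_of_all _ fun u => by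
        rw [norm_mul, starRingEnd_apply, norm_star]
        exact mul_le_mul (hSn _) (hSn _) (norm_nonneg _) hS0)
    rwa [hνt] at this
  have hint2 : ∀ s : ℝ, Integrable (Function.uncurry fun (x : M) (u : ℝ) =>
      f (φ s x) * (starRingEnd ℂ) (f (φ u x))) (μ.prod ν) := by
    intro s
    have hg : Measurable (fun q : M × ℝ =>
        f (φ s q.1) * (starRingEnd ℂ) (f (φ q.2 q.1))) := by
      apply Measurable.mul
      · exact (hf.comp (hφt s)).comp measurable_fst
      · exact Complex.continuous_conj.measurable.comp (hF.comp measurable_swap)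
    refine ⟨hg.aestronglyMeasurable, ?_⟩
    apply HasFiniteIntegral.of_bounded (C := S * S)
    refine ae_of_all _ fun p => ?_
    rw [Function.uncurry, norm_mul, starRingEnd_apply, norm_star]
    exact mul_le_mul (hSn _) (hSn _) (norm_nonneg _) hS0
  have swap_all : ∫ x, A x * (starRingEnd ℂ) (A x) ∂μ
      = ∫ s, (∫ u, (∫ x, f (φ s x) * (starRingEnd ℂ) (f (φ u x)) ∂μ) ∂ν) ∂ν := by
    calc ∫ x, A x * (starRingEnd ℂ) (A x) ∂μ
        = ∫ x, (∫ s, (∫ u, f (φ s x) * (starRingEnd ℂ) (f (φ u x)) ∂ν) ∂ν) ∂μ := by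
          simp_rw [hexp]
      _ = ∫ s, (∫ x, (∫ u, f (φ s x) * (starRingEnd ℂ) (f (φ u x)) ∂ν) ∂μ) ∂ν :=
          integral_integral_swap hint1
      _ = ∫ s, (∫ u, (∫ x, f (φ s x) * (starRingEnd ℂ) (f (φ u x)) ∂μ) ∂ν) ∂ν := by
          refine integral_congr_ae (ae_of_all _ fun s => ?_)
          exact integral_integral_swap (hint2 s)
  -- bound the double integral
  have hη1 : 0 < 1 - ηt := by linarith [hη.2]
  have hDint : ‖∫ s, (∫ u, (∫ x, f (φ s x) * (starRingEnd ℂ) (f (φ u x)) ∂μ) ∂ν) ∂ν‖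
      ≤ ((C_M + 1) * S ^ 2 * (2 * t ^ (1 - ηt) / (1 - ηt))) * t := by
    have hin : ∀ s ∈ I, ‖∫ u, (∫ x, f (φ s x) * (starRingEnd ℂ) (f (φ u x)) ∂μ) ∂ν‖
        ≤ (C_M + 1) * S ^ 2 * (2 * t ^ (1 - ηt) / (1 - ηt)) := by
      intro s hsI
      obtain ⟨hint, hval⟩ := aux_rpow_int hη.1 hη.2 (⟨hsI.1.le, hsI.2⟩ : s ∈ Set.Icc 0 t)
      have hmaj : Integrable (fun u => (C_M + 1) * S ^ 2 * |s - u| ^ (-ηt)) ν :=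
        hint.const_mul _
      have hae : ∀ᵐ u ∂ν, ‖∫ x, f (φ s x) * (starRingEnd ℂ) (f (φ u x)) ∂μ‖
          ≤ (C_M + 1) * S ^ 2 * |s - u| ^ (-ηt) := by
        have hne : ∀ᵐ u ∂ν, u ≠ s := by
          apply ae_restrict_of_ae
          have hset : {u : ℝ | ¬ u ≠ s} = {s} := by ext u; simp
          rw [ae_iff, hset]; exact Real.volume_singleton
        filter_upwards [hne] with u hu
        exact corr_bound hCM hη μ φ hφ hcomp hmp f hf S hS0 hS hcorr (Ne.symm hu)
      calc ‖∫ u, (∫ x, f (φ s x) * (starRingEnd ℂ) (f (φ u x)) ∂μ) ∂ν‖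
          ≤ ∫ u, (C_M + 1) * S ^ 2 * |s - u| ^ (-ηt) ∂ν :=
            norm_integral_le_of_norm_le hmaj hae
        _ = (C_M + 1) * S ^ 2 * ∫ u, |s - u| ^ (-ηt) ∂ν := integral_const_mul _ _
        _ ≤ (C_M + 1) * S ^ 2 * (2 * t ^ (1 - ηt) / (1 - ηt)) := by
            apply mul_le_mul_of_nonneg_left hval (by positivity)
    have hcb := norm_integral_le_of_norm_le (μ := ν)
      (g := fun _ : ℝ => (C_M + 1) * S ^ 2 * (2 * t ^ (1 - ηt) / (1 - ηt)))
      (integrable_const _)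
      (by filter_upwards [self_mem_ae_restrict (measurableSet_Ioc)] with s hs using hin s hs)
    rw [MeasureTheory.integral_const, smul_eq_mul, hνt] at hcb
    calc _ ≤ t * ((C_M + 1) * S ^ 2 * (2 * t ^ (1 - ηt) / (1 - ηt))) := hcb
      _ = ((C_M + 1) * S ^ 2 * (2 * t ^ (1 - ηt) / (1 - ηt))) * t := mul_comm _ _
  have hrpow : t ^ (1 - ηt) * t = t ^ (2 - ηt) := by
    nth_rewrite 2 [← Real.rpow_one t]
    rw [← Real.rpow_add ht0]; ring_nf
  calc ∫ x, ‖A x‖ ^ 2 ∂μ ≤ ‖∫ x, A x * (starRingEnd ℂ) (A x) ∂μ‖ := step1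
    _ = ‖∫ s, (∫ u, (∫ x, f (φ s x) * (starRingEnd ℂ) (f (φ u x)) ∂μ) ∂ν) ∂ν‖ := by
        rw [swap_all]
    _ ≤ ((C_M + 1) * S ^ 2 * (2 * t ^ (1 - ηt) / (1 - ηt))) * t := hDint
    _ = (2 * (C_M + 1) / (1 - ηt)) * S ^ 2 * (t ^ (1 - ηt) * t) := by ring
    _ = (2 * (C_M + 1) / (1 - ηt)) * S ^ 2 * t ^ (2 - ηt) := by rw [hrpow]

lemma cheb_bound {C_M ηt : ℝ} (hCM : 0 < C_M) (hη : ηt ∈ Set.Ioo (0 : ℝ) 1)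
    {M : Type} [MeasurableSpace M] (μ : Measure M) [IsProbabilityMeasure μ]
    (φ : ℝ → M → M) (hφ : Measurable (Function.uncurry φ))
    (hcomp : ∀ s t, φ (s + t) = φ s ∘ φ t) (hmp : ∀ t, MeasurePreserving (φ t) μ μ)
    (f : M → ℂ) (hf : Measurable f) (S : ℝ) (hSpos : 0 < S) (hS : ∀ x, ‖f x‖ ≤ S)
    (hcorr : ∀ t : ℝ, 1 ≤ t →
      ‖∫ x, f (φ t x) * (starRingEnd ℂ) (f x) ∂μ‖ ≤ C_M * S ^ 2 * t ^ (-ηt))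
    {r : ℝ} (hr : 1 ≤ r) :
    MeasurableSet {x | S * r ^ (1 - ηt/4) < ‖∫ s in Set.Ioc (0:ℝ) r, f (φ s x)‖} ∧
    μ {x | S * r ^ (1 - ηt/4) < ‖∫ s in Set.Ioc (0:ℝ) r, f (φ s x)‖}
      ≤ ENNReal.ofReal ((2 * (C_M + 1) / (1 - ηt)) * r ^ (-(ηt/2))) := by
  have hSn : ∀ x, ‖f x‖ ≤ S := fun x => by exact hS x
  have hr0 : (0:ℝ) < r := by linarith
  set ν : Measure ℝ := volume.restrict (Set.Ioc (0:ℝ) r) with hν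
  have hνuniv : ν Set.univ = ENNReal.ofReal r := by
    rw [hν, Measure.restrict_apply_univ, Real.volume_Ioc, sub_zero]
  haveI : IsFiniteMeasure ν := ⟨by rw [hνuniv]; exact ENNReal.ofReal_lt_top⟩
  have hνt : ν.real Set.univ = r := by rw [measureReal_def, hνuniv, ENNReal.toReal_ofReal hr0.le]
  have hF : Measurable (fun p : ℝ × M => f (φ p.1 p.2)) := hf.comp hφ
  set A : M → ℂ := fun x => ∫ s, f (φ s x) ∂ν with hA
  have hAm : StronglyMeasurable A := by
    have h : StronglyMeasurable (fun p : M × ℝ => f (φ p.2 p.1)) :=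
      (hF.comp measurable_swap).stronglyMeasurable
    exact h.integral_prod_right'
  have hAb : ∀ x, ‖A x‖ ≤ S * r := by
    intro x
    have := norm_integral_le_of_norm_le_const (μ := ν) (C := S)
      (f := fun s => f (φ s x)) (ae_of_all _ fun s => hSn _)
    rwa [hνt] at this
  have hEm : MeasurableSet {x | S * r ^ (1 - ηt/4) < ‖A x‖} :=
    measurableSet_lt measurable_const hAm.measurable.norm
  refine ⟨hEm, ?_⟩
  have hg_int : Integrable (fun x => ‖A x‖ ^ 2) μ := by
    refine ⟨((continuous_pow 2).comp_stronglyMeasurable hAm.norm).aestronglyMeasurable, ?_⟩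
    apply HasFiniteIntegral.of_bounded (C := (S * r) ^ 2)
    refine ae_of_all _ fun x => ?_
    rw [Real.norm_eq_abs, abs_of_nonneg (sq_nonneg _)]
    exact pow_le_pow_left₀ (norm_nonneg _) (hAb x) 2
  have hV : ∫ x, ‖A x‖ ^ 2 ∂μ ≤ (2 * (C_M + 1) / (1 - ηt)) * S ^ 2 * r ^ (2 - ηt) :=
    variance_bound hCM hη μ φ hφ hcomp hmp f hf S hSpos.le hS hcorr hr
  set K := 2 * (C_M + 1) / (1 - ηt) with hK
  have hKpos : 0 < K := by
    rw [hK]; apply div_pos (by linarith) (by linarith [hη.2])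
  set ε := (S * r ^ (1 - ηt/4)) ^ 2 with hε
  have hεpos : 0 < ε := by positivity
  have hcheb := mul_meas_ge_le_integral_of_nonneg (μ := μ)
    (ae_of_all _ fun x => sq_nonneg ‖A x‖) hg_int ε
  have hsub : {x | S * r ^ (1 - ηt/4) < ‖A x‖} ⊆ {x | ε ≤ ‖A x‖ ^ 2} := by
    intro x hx
    have hx' : S * r ^ (1 - ηt/4) < ‖A x‖ := hx
    show ε ≤ ‖A x‖ ^ 2
    rw [hε]
    exact pow_le_pow_left₀ (by positivity) hx'.le 2
  have hfin1 : μ {x | S * r ^ (1 - ηt/4) < ‖A x‖} ≠ ⊤ := measure_ne_top _ _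
  have hmono : (μ {x | S * r ^ (1 - ηt/4) < ‖A x‖}).toReal
      ≤ (μ {x | ε ≤ ‖A x‖ ^ 2}).toReal :=
    ENNReal.toReal_mono (measure_ne_top _ _) (measure_mono hsub)
  have hchain : ε * (μ {x | S * r ^ (1 - ηt/4) < ‖A x‖}).toReal ≤ K * S ^ 2 * r ^ (2 - ηt) := by
    calc ε * (μ {x | S * r ^ (1 - ηt/4) < ‖A x‖}).toReal
        ≤ ε * (μ {x | ε ≤ ‖A x‖ ^ 2}).toReal := by
          exact mul_le_mul_of_nonneg_left hmono hεpos.le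
      _ ≤ ∫ x, ‖A x‖ ^ 2 ∂μ := hcheb
      _ ≤ K * S ^ 2 * r ^ (2 - ηt) := hV
  have hεeq : ε = S ^ 2 * r ^ (2 - ηt/2) := by
    rw [hε, mul_pow]
    congr 1
    rw [← Real.rpow_natCast (r ^ (1 - ηt/4)) 2, ← Real.rpow_mul hr0.le]
    norm_num
    ring_nf
  have hsplit : r ^ (2 - ηt) = r ^ (-(ηt/2)) * r ^ (2 - ηt/2) := by
    rw [← Real.rpow_add hr0]; ring_nf
  have htr : (μ {x | S * r ^ (1 - ηt/4) < ‖A x‖}).toReal ≤ K * r ^ (-(ηt/2)) := by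
    have h2 : K * S ^ 2 * r ^ (2 - ηt) = (K * r ^ (-(ηt/2))) * ε := by
      rw [hεeq, hsplit]; ring
    have h1 : ε * (μ {x | S * r ^ (1 - ηt/4) < ‖A x‖}).toReal
        ≤ (K * r ^ (-(ηt/2))) * ε := by rw [← h2]; exact hchain
    rw [mul_comm ε] at h1
    exact le_of_mul_le_mul_right h1 hεpos
  calc μ {x | S * r ^ (1 - ηt/4) < ‖A x‖}
      = ENNReal.ofReal ((μ {x | S * r ^ (1 - ηt/4) < ‖A x‖}).toReal) :=
        (ENNReal.ofReal_toReal hfin1).symm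
    _ ≤ ENNReal.ofReal (K * r ^ (-(ηt/2))) := ENNReal.ofReal_le_ofReal htr

lemma rpow_gap {q : ℝ} (hq : 1 ≤ q) {n : ℝ} (hn : 1 ≤ n) :
    (n + 1) ^ q - n ^ q ≤ q * 2 ^ (q - 1) * n ^ (q - 1) := by
  have hn0 : (0:ℝ) < n := by linarith
  have hC : ∀ x ∈ Set.Icc n (n + 1), ‖q * x ^ (q - 1)‖ ≤ q * (2 * n) ^ (q - 1) := by
    intro x hx
    have hx0 : (0:ℝ) < x := lt_of_lt_of_le hn0 hx.1
    rw [Real.norm_eq_abs, abs_of_nonneg (by positivity)]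
    apply mul_le_mul_of_nonneg_left _ (by linarith)
    exact Real.rpow_le_rpow hx0.le (by linarith [hx.2]) (by linarith)
  have hd : ∀ x ∈ Set.Icc n (n + 1),
      HasDerivWithinAt (fun y : ℝ => y ^ q) (q * x ^ (q - 1)) (Set.Icc n (n + 1)) x := by
    intro x hx
    have hx0 : x ≠ 0 := ne_of_gt (lt_of_lt_of_le hn0 hx.1)
    exact (Real.hasDerivAt_rpow_const (Or.inl hx0)).hasDerivWithinAt
  have key := (convex_Icc n (n + 1)).norm_image_sub_le_of_norm_hasDerivWithin_le
    hd hC (Set.left_mem_Icc.mpr (by linarith)) (Set.right_mem_Icc.mpr (by linarith))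
  rw [Real.norm_eq_abs] at key
  have h2 : (2 * n) ^ (q - 1) = 2 ^ (q - 1) * n ^ (q - 1) :=
    Real.mul_rpow (by norm_num) hn0.le
  calc (n + 1) ^ q - n ^ q ≤ |(n + 1) ^ q - n ^ q| := le_abs_self _
    _ ≤ q * (2 * n) ^ (q - 1) * ‖n + 1 - n‖ := key
    _ = q * 2 ^ (q - 1) * n ^ (q - 1) := by
        rw [h2]; simp; ring

/-- Polynomial bound for ergodic averages on a large-measure set: if the correlations of a
mean-zero bounded function `f` decay as `C_M S² t^(-η̃)`, then (with `η' = η̃/4`) there is a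
constant `C'`, depending only on `C_M` and `η̃`, such that for every `ω > 0` there are a set
`Y` with `μ(Y) ≥ 1 - ω` and `m' ≥ 1` with `|∫₀^t f(φ^s x) ds| ≤ C' S t^(1-η')` for all
`x ∈ Y` and `t ≥ m'`. -/
theorem ergodic_integral_pointwise_bound (C_M ηt : ℝ)
    (hCM : 0 < C_M) (hη : ηt ∈ Set.Ioo (0 : ℝ) 1) :
    ∃ C' : ℝ, 0 < C' ∧
      ∀ (M : Type) [MeasurableSpace M] (μ : Measure M) [IsProbabilityMeasure μ]
        (φ : ℝ → M → M),
        Measurable (Function.uncurry φ) → φ 0 = id →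
        (∀ s t, φ (s + t) = φ s ∘ φ t) → (∀ t, MeasurePreserving (φ t) μ μ) →
        ∀ (f : M → ℂ), Measurable f →
        ∀ S : ℝ, (∀ x, ‖f x‖ ≤ S) →
        (∫ x, f x ∂μ) = 0 →
        (∀ t : ℝ, 1 ≤ t →
          ‖∫ x, f (φ t x) * (starRingEnd ℂ) (f x) ∂μ‖ ≤ C_M * S ^ 2 * t ^ (-ηt)) →
        ∀ ω : ℝ, 0 < ω →
          ∃ (Y : Set M) (m' : ℝ), MeasurableSet Y ∧ ENNReal.ofReal (1 - ω) ≤ μ Y ∧ 1 ≤ m' ∧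
            ∀ x ∈ Y, ∀ t : ℝ, m' ≤ t →
              ‖∫ s in (0 : ℝ)..t, f (φ s x)‖ ≤ C' * S * t ^ (1 - ηt / 4) := by
  obtain ⟨hη0, hη1⟩ := hη
  set q : ℝ := 3 / ηt with hq
  have hq3 : 3 ≤ q := by
    rw [hq, le_div_iff₀ hη0]; nlinarith
  have hq0 : 0 < q := by linarith
  refine ⟨1 + q * 2 ^ (q - 1), by positivity, ?_⟩
  intro M _ μ _ φ hφ hφ0 hcomp hmp f hf S hS hmean hcorr ω hω
  -- nonemptiness and nonnegativity of S
  have hMne : Nonempty M := by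
    by_contra h
    have h1 : (Set.univ : Set M) = ∅ := by
      simp [Set.univ_eq_empty_iff.mpr (not_nonempty_iff.mp h)]
    have := measure_univ (μ := μ)
    rw [h1, measure_empty] at this
    exact zero_ne_one this
  have hS0 : 0 ≤ S := le_trans (norm_nonneg _) (hS (Classical.arbitrary M))
  rcases eq_or_lt_of_le hS0 with hSz | hSpos
  · -- degenerate case S = 0 : f ≡ 0
    have hfz : ∀ x, f x = 0 := fun x =>
      norm_eq_zero.mp (le_antisymm (by rw [← hSz] at hS; exact hS x)
        (norm_nonneg _))
    refine ⟨Set.univ, 1, MeasurableSet.univ, ?_, le_refl 1, ?_⟩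
    · rw [measure_univ]; exact ENNReal.ofReal_le_one.mpr (by linarith)
    · intro x _ t htt
      have h0 : (∫ s in (0:ℝ)..t, f (φ s x)) = 0 := by simp [hfz]
      rw [h0, norm_zero]
      exact mul_nonneg (mul_nonneg (by positivity) hS0)
        (Real.rpow_nonneg (by linarith) _)
  -- main case : S > 0
  set K : ℝ := 2 * (C_M + 1) / (1 - ηt) with hK
  have hKpos : 0 < K := by
    rw [hK]; apply div_pos (by linarith) (by linarith)
  -- the bad sets along the times n ^ q
  have hrq1 : ∀ n : ℕ, 1 ≤ n → (1:ℝ) ≤ (n:ℝ) ^ q := fun n hn =>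
    Real.one_le_rpow (by exact_mod_cast hn) hq0.le
  -- summability of the tail bound
  set g : ℕ → ℝ := fun n => K * (n:ℝ) ^ (-(3/2 : ℝ)) with hg
  have hgsum : Summable g :=
    (Real.summable_nat_rpow.mpr (by norm_num)).mul_left K
  have hgnn : ∀ n, 0 ≤ g n := fun n => by
    rw [hg]; positivity
  have htail : Filter.Tendsto (fun i => ∑' k, g (k + i)) Filter.atTop (nhds 0) :=
    tendsto_sum_nat_add g
  obtain ⟨N, hN⟩ : ∃ N : ℕ, 1 ≤ N ∧ ∑' k, g (k + N) < ω := by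
    have h1 := (htail.eventually (eventually_lt_nhds hω)).and (Filter.eventually_ge_atTop 1)
    obtain ⟨N, h2, h3⟩ := h1.exists
    exact ⟨N, h3, h2⟩
  obtain ⟨hN1, hNtail⟩ := hN
  -- the bad sets
  have hcb : ∀ n : ℕ, 1 ≤ n →
      MeasurableSet {x | S * ((n:ℝ) ^ q) ^ (1 - ηt/4) < ‖∫ s in Set.Ioc (0:ℝ) ((n:ℝ) ^ q), f (φ s x)‖} ∧
      μ {x | S * ((n:ℝ) ^ q) ^ (1 - ηt/4) < ‖∫ s in Set.Ioc (0:ℝ) ((n:ℝ) ^ q), f (φ s x)‖}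
        ≤ ENNReal.ofReal (g n) := by
    intro n hn
    obtain ⟨h1, h2⟩ := cheb_bound hCM ⟨hη0, hη1⟩ μ φ hφ hcomp hmp f hf S hSpos hS hcorr
      (hrq1 n hn)
    refine ⟨h1, h2.trans (ENNReal.ofReal_le_ofReal ?_)⟩
    have heq : ((n:ℝ) ^ q) ^ (-(ηt/2)) = (n:ℝ) ^ (-(3/2 : ℝ)) := by
      rw [← Real.rpow_mul (Nat.cast_nonneg n)]
      congr 1
      rw [hq]
      field_simp
    rw [heq, hg]
  set E : ℕ → Set M := fun n =>
    {x | S * ((n:ℝ) ^ q) ^ (1 - ηt/4) < ‖∫ s in Set.Ioc (0:ℝ) ((n:ℝ) ^ q), f (φ s x)‖} with hE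
  set Y : Set M := (⋃ k : ℕ, E (k + N))ᶜ with hY
  have hUm : MeasurableSet (⋃ k : ℕ, E (k + N)) :=
    MeasurableSet.iUnion fun k => (hcb (k + N) (by omega)).1
  have hYm : MeasurableSet Y := hUm.compl
  have hUb : μ (⋃ k : ℕ, E (k + N)) ≤ ENNReal.ofReal ω := by
    calc μ (⋃ k : ℕ, E (k + N)) ≤ ∑' k, μ (E (k + N)) := measure_iUnion_le _
      _ ≤ ∑' k, ENNReal.ofReal (g (k + N)) := by
          apply ENNReal.tsum_le_tsum
          intro k
          exact (hcb (k + N) (by omega)).2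
      _ = ENNReal.ofReal (∑' k, g (k + N)) := by
          rw [ENNReal.ofReal_tsum_of_nonneg (fun k => hgnn _)
            ((summable_nat_add_iff N).mpr hgsum)]
      _ ≤ ENNReal.ofReal ω := ENNReal.ofReal_le_ofReal hNtail.le
  have hYμ : ENNReal.ofReal (1 - ω) ≤ μ Y := by
    rw [hY, prob_compl_eq_one_sub hUm]
    calc ENNReal.ofReal (1 - ω) = ENNReal.ofReal 1 - ENNReal.ofReal ω :=
        ENNReal.ofReal_sub 1 hω.le
      _ = 1 - ENNReal.ofReal ω := by rw [ENNReal.ofReal_one]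
      _ ≤ 1 - μ (⋃ k : ℕ, E (k + N)) := tsub_le_tsub_left hUb 1
  refine ⟨Y, (N:ℝ) ^ q, hYm, hYμ, hrq1 N hN1, ?_⟩
  intro x hx t htm
  have hm1 : (1:ℝ) ≤ (N:ℝ) ^ q := hrq1 N hN1
  have ht1 : (1:ℝ) ≤ t := le_trans hm1 htm
  have ht0 : (0:ℝ) < t := by linarith
  -- locate t between consecutive times
  set n : ℕ := ⌊t ^ q⁻¹⌋₊ with hn
  have hq0' : q ≠ 0 := ne_of_gt hq0
  have htq : (t ^ q⁻¹) ^ q = t := by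
    rw [← Real.rpow_mul ht0.le, inv_mul_cancel₀ hq0', Real.rpow_one]
  have hNle : (N:ℝ) ≤ t ^ q⁻¹ := by
    have h1 : ((N:ℝ) ^ q) ^ q⁻¹ ≤ t ^ q⁻¹ :=
      Real.rpow_le_rpow (by positivity) htm (by positivity)
    rwa [← Real.rpow_mul (Nat.cast_nonneg N), mul_inv_cancel₀ hq0', Real.rpow_one] at h1
  have hNn : N ≤ n := Nat.le_floor hNle
  have hn1 : 1 ≤ n := le_trans hN1 hNn
  have hnr : (n:ℝ) ^ q ≤ t := by
    have h1 : (n:ℝ) ≤ t ^ q⁻¹ := Nat.floor_le (by positivity)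
    calc (n:ℝ) ^ q ≤ (t ^ q⁻¹) ^ q := Real.rpow_le_rpow (Nat.cast_nonneg n) h1 hq0.le
      _ = t := htq
  have hnr2 : t ≤ ((n:ℝ) + 1) ^ q := by
    have h1 : t ^ q⁻¹ ≤ (n:ℝ) + 1 := (Nat.lt_floor_add_one _).le
    calc t = (t ^ q⁻¹) ^ q := htq.symm
      _ ≤ ((n:ℝ) + 1) ^ q := Real.rpow_le_rpow (by positivity) h1 hq0.le
  set r : ℝ := (n:ℝ) ^ q with hr
  have hr1 : (1:ℝ) ≤ r := hrq1 n hn1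
  have hr0 : (0:ℝ) ≤ r := by linarith
  have hrt : r ≤ t := hnr
  -- the good bound at time r, from x ∈ Y
  have hgood : ‖∫ s in Set.Ioc (0:ℝ) r, f (φ s x)‖ ≤ S * r ^ (1 - ηt/4) := by
    have hxg : x ∉ E n := by
      intro hmem
      exact hx (Set.mem_iUnion.mpr ⟨n - N, by rwa [Nat.sub_add_cancel hNn]⟩)
    exact not_lt.mp hxg
  -- integrability of the section
  have hSn : ∀ y, ‖f y‖ ≤ S := fun y => by exact hS y
  have hsec : Measurable (fun s => f (φ s x)) :=
    (hf.comp hφ).comp (measurable_id.prodMk measurable_const)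
  have hIntOn : ∀ a b : ℝ, IntegrableOn (fun s => f (φ s x)) (Set.Ioc a b) := by
    intro a b
    haveI : IsFiniteMeasure (volume.restrict (Set.Ioc a b)) :=
      ⟨by rw [Measure.restrict_apply_univ]; exact measure_Ioc_lt_top⟩
    exact ⟨hsec.aestronglyMeasurable.restrict,
      HasFiniteIntegral.of_bounded (C := S) (ae_of_all _ fun s => hSn _)⟩
  -- split the integral at r
  have hsplit : ∫ s in Set.Ioc (0:ℝ) t, f (φ s x)
      = (∫ s in Set.Ioc (0:ℝ) r, f (φ s x)) + ∫ s in Set.Ioc r t, f (φ s x) := by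
    rw [← setIntegral_union (Set.Ioc_disjoint_Ioc_of_le le_rfl) measurableSet_Ioc
      (hIntOn 0 r) (hIntOn r t), Set.Ioc_union_Ioc_eq_Ioc hr0 hrt]
  have htail2 : ‖∫ s in Set.Ioc r t, f (φ s x)‖ ≤ S * (t - r) := by
    have h := norm_setIntegral_le_of_norm_le_const (μ := volume) (s := Set.Ioc r t)
      (f := fun s => f (φ s x)) (C := S) measure_Ioc_lt_top
      (fun s _ => hSn _)
    rwa [Real.volume_real_Ioc_of_le hrt] at h
  -- gap bound
  have hncast : (1:ℝ) ≤ (n:ℝ) := by exact_mod_cast hn1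
  have hgap : t - r ≤ q * 2 ^ (q - 1) * (n:ℝ) ^ (q - 1) := by
    have h1 := rpow_gap (by linarith : 1 ≤ q) hncast
    have h2 : t - r ≤ ((n:ℝ) + 1) ^ q - (n:ℝ) ^ q := by
      rw [hr]; linarith
    linarith
  have hqη : q * ηt = 3 := by
    rw [hq]; field_simp
  have hnq1 : (n:ℝ) ^ (q - 1) ≤ t ^ (1 - ηt/4) := by
    have e1 : (n:ℝ) ^ (q - 1) ≤ (n:ℝ) ^ (q * (1 - ηt/4)) :=
      Real.rpow_le_rpow_of_exponent_le hncast (by nlinarith)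
    have e2 : (n:ℝ) ^ (q * (1 - ηt/4)) = r ^ (1 - ηt/4) := by
      rw [hr, ← Real.rpow_mul (Nat.cast_nonneg n)]
    have e3 : r ^ (1 - ηt/4) ≤ t ^ (1 - ηt/4) :=
      Real.rpow_le_rpow hr0 hrt (by linarith)
    linarith
  have hrpow_rt : r ^ (1 - ηt/4) ≤ t ^ (1 - ηt/4) :=
    Real.rpow_le_rpow hr0 hrt (by linarith)
  -- the endgame
  rw [intervalIntegral.integral_of_le ht0.le, hsplit]
  calc ‖(∫ s in Set.Ioc (0:ℝ) r, f (φ s x)) + ∫ s in Set.Ioc r t, f (φ s x)‖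
      ≤ ‖∫ s in Set.Ioc (0:ℝ) r, f (φ s x)‖ + ‖∫ s in Set.Ioc r t, f (φ s x)‖ :=
        norm_add_le _ _
    _ ≤ S * r ^ (1 - ηt/4) + S * (t - r) := add_le_add hgood htail2
    _ ≤ S * t ^ (1 - ηt/4) + S * (q * 2 ^ (q - 1) * t ^ (1 - ηt/4)) := by
        apply add_le_add
        · exact mul_le_mul_of_nonneg_left hrpow_rt hSpos.le
        · apply mul_le_mul_of_nonneg_left _ hSpos.le
          calc t - r ≤ q * 2 ^ (q - 1) * (n:ℝ) ^ (q - 1) := hgap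
            _ ≤ q * 2 ^ (q - 1) * t ^ (1 - ηt/4) :=
              mul_le_mul_of_nonneg_left hnq1 (by positivity)
    _ = (1 + q * 2 ^ (q - 1)) * S * t ^ (1 - ηt/4) := by ring
end

section
/- Let (M, μ) be a probability space and φ : ℝ × M → M a jointly measurable measure-preserving flow. Let α : M → ℝ be measurable with C_α^{−1} ≤ α ≤ C_α for some C_α > 1 and with ∫_M α dμ = 1. Suppose there are constants C_M > 0, η̃ ∈ (0,1) and S ≥ sup_M |α − 1| such that |∫_M (α−1)(φ^t(x)) · (α−1)(x) dμ(x)| ≤ C_M S² t^{−η̃} for all t ≥ 1. For x ∈ M and t ∈ ℝ set ξ(x,t) = ∫₀^t α(φ^r(x)) dr, and let w(x, ·) : ℝ → ℝ be the inverse of the strictly increasing bijection ξ(x, ·) : ℝ → ℝ. Then there exists η ∈ (0, 1/4), depending only on C_M, η̃, S and C_α, such that for every ω > 0 there exist a measurable set Y ⊆ M with μ(Y) ≥ 1 − ω and a number m ≥ 1 such that for all x ∈ Y and all t ≥ m: |ξ(x,t) − t| ≤ C_α^{−4} t^{1−η} and |w(x,t) − t| ≤ C_α^{−4} t^{1−η}.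 -/
open MeasureTheory


open MeasureTheory

namespace TCB

lemma pow_succ_sub_le (x : ℝ) (hx : 0 ≤ x) (n : ℕ) :
    (x+1)^(n+1) - x^(n+1) ≤ ((n:ℝ)+1) * (x+1)^n := by
  induction n with
  | zero => simp
  | succ n ih =>
    have hx1 : (0:ℝ) ≤ x + 1 := by linarith
    have h1 : (x+1)^(n+2) - x^(n+2) = (x+1)*((x+1)^(n+1) - x^(n+1)) + x^(n+1) := by ring
    have h2 : x^(n+1) ≤ (x+1)^(n+1) := pow_le_pow_left₀ hx (by linarith) _
    have h3 : (x+1)*((x+1)^(n+1) - x^(n+1)) ≤ (x+1) * (((n:ℝ)+1) * (x+1)^n) :=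
      mul_le_mul_of_nonneg_left ih hx1
    have h4 : (x+1) * (((n:ℝ)+1) * (x+1)^n) = ((n:ℝ)+1) * (x+1)^(n+1) := by ring
    calc (x+1)^(n+2) - x^(n+2) ≤ ((n:ℝ)+1) * (x+1)^(n+1) + (x+1)^(n+1) := by
          rw [h1]; rw [h4] at h3; linarith
      _ = _ := by push_cast; ring

lemma integrable_of_bdd {X : Type*} [MeasurableSpace X] {μ : Measure X} [IsFiniteMeasure μ]
    {g : X → ℝ} (hm : AEStronglyMeasurable g μ) {C : ℝ} (hb : ∀ x, ‖g x‖ ≤ C) :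
    Integrable g μ :=
  ⟨hm, HasFiniteIntegral.of_bounded (C := C) (Filter.Eventually.of_forall hb)⟩

lemma intervalIntegrable_of_bdd {g : ℝ → ℝ} (hm : Measurable g) {C : ℝ}
    (hb : ∀ r, |g r| ≤ C) (a b : ℝ) : IntervalIntegrable g volume a b := by
  rw [intervalIntegrable_iff]
  haveI : IsFiniteMeasure ((volume : Measure ℝ).restrict (Set.uIoc a b)) := by
    constructor
    rw [Measure.restrict_apply_univ, Set.uIoc, Real.volume_Ioc]
    exact ENNReal.ofReal_lt_top
  exact integrable_of_bdd hm.aestronglyMeasurable.restrict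
    (C := C) (fun r => by rw [Real.norm_eq_abs]; exact hb r)

lemma second_moment {M : Type} [MeasurableSpace M] (μ : Measure M) [IsProbabilityMeasure μ]
    (φ : ℝ → M → M) (f : M → ℝ) (G : ℝ → ℝ) (B : ℝ) (hB : 0 ≤ B)
    (hφm : Measurable (Function.uncurry φ))
    (hf : Measurable f) (hfb : ∀ x, |f x| ≤ B)
    (hG : Continuous G) (hGnn : ∀ u, 0 ≤ G u)
    (hcor : ∀ r s : ℝ, |∫ x, f (φ r x) * f (φ s x) ∂μ| ≤ G (r - s))
    {t : ℝ} (ht : 0 ≤ t) :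
    ∫ x, (∫ r in Set.Ioc (0:ℝ) t, f (φ r x))^2 ∂μ
      ≤ t * ∫ s in Set.Ioc (-t) t, G s := by
  set ν := (volume : Measure ℝ).restrict (Set.Ioc (0:ℝ) t) with hν
  have hνuniv : ν Set.univ = ENNReal.ofReal t := by
    rw [hν, Measure.restrict_apply_univ, Real.volume_Ioc, sub_zero]
  haveI : IsFiniteMeasure ν := ⟨by rw [hνuniv]; exact ENNReal.ofReal_lt_top⟩
  have hνtoReal : (ν Set.univ).toReal = t := by rw [hνuniv, ENNReal.toReal_ofReal ht]
  set F : ℝ → M → ℝ := fun r x => f (φ r x) with hF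
  have hFm : Measurable fun p : ℝ × M => F p.1 p.2 := hf.comp hφm
  have hFb : ∀ r x, |F r x| ≤ B := fun r x => hfb _
  have habs : ∀ (r s : ℝ) (x : M), |F r x * F s x| ≤ B * B := by
    intro r s x
    rw [abs_mul]
    exact mul_le_mul (hFb _ _) (hFb _ _) (abs_nonneg _) hB
  -- measurability of the correlation function c r s
  have hcm : StronglyMeasurable fun p : ℝ × ℝ => ∫ x, F p.1 x * F p.2 x ∂μ := by
    apply StronglyMeasurable.integral_prod_right'
      (f := fun q : (ℝ × ℝ) × M => F q.1.1 q.2 * F q.1.2 q.2)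
    apply Measurable.stronglyMeasurable
    exact (hFm.comp ((measurable_fst.fst).prodMk measurable_snd)).mul
      (hFm.comp ((measurable_fst.snd).prodMk measurable_snd))
  have hcb : ∀ r s : ℝ, ‖∫ x, F r x * F s x ∂μ‖ ≤ B * B := by
    intro r s
    calc ‖∫ x, F r x * F s x ∂μ‖ ≤ B * B * (μ Set.univ).toReal := by
          apply norm_integral_le_of_norm_le_const
          filter_upwards with x
          rw [Real.norm_eq_abs]; exact habs r s x
      _ = B * B := by simp
  -- step 1 : expand the square
  have step1 : ∀ x, (∫ r, F r x ∂ν)^2 = ∫ r, (∫ s, F r x * F s x ∂ν) ∂ν := by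
    intro x
    rw [sq, ← integral_mul_const]
    congr 1; ext r
    rw [← integral_const_mul]
  -- step 2 : swap μ and first ν
  have hKm : StronglyMeasurable fun p : M × ℝ => ∫ s, F p.2 p.1 * F s p.1 ∂ν := by
    apply StronglyMeasurable.integral_prod_right'
      (f := fun q : (M × ℝ) × ℝ => F q.1.2 q.1.1 * F q.2 q.1.1)
    apply Measurable.stronglyMeasurable
    exact (hFm.comp ((measurable_fst.snd).prodMk measurable_fst.fst)).mul
      (hFm.comp (measurable_snd.prodMk measurable_fst.fst))
  have hKb : ∀ p : M × ℝ, ‖∫ s, F p.2 p.1 * F s p.1 ∂ν‖ ≤ B * B * t := by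
    intro p
    calc ‖∫ s, F p.2 p.1 * F s p.1 ∂ν‖ ≤ B * B * (ν Set.univ).toReal := by
          apply norm_integral_le_of_norm_le_const
          filter_upwards with s
          rw [Real.norm_eq_abs]; exact habs _ _ _
      _ = B * B * t := by rw [hνtoReal]
  have step2 : ∫ x, ∫ r, (∫ s, F r x * F s x ∂ν) ∂ν ∂μ
      = ∫ r, ∫ x, (∫ s, F r x * F s x ∂ν) ∂μ ∂ν :=
    integral_integral_swap (integrable_of_bdd hKm.aestronglyMeasurable hKb)
  -- step 3 : swap μ and second ν, for fixed r
  have step3 : ∀ r : ℝ, ∫ x, (∫ s, F r x * F s x ∂ν) ∂μ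
      = ∫ s, (∫ x, F r x * F s x ∂μ) ∂ν := by
    intro r
    apply integral_integral_swap
    apply integrable_of_bdd (C := B * B)
    · apply Measurable.aestronglyMeasurable
      exact ((hFm.comp (measurable_const.prodMk measurable_fst)).mul
        (hFm.comp (measurable_snd.prodMk measurable_fst)))
    · intro p
      rw [Real.norm_eq_abs]
      exact habs _ _ _
  have hGint : ∀ a b : ℝ, IntegrableOn G (Set.Ioc a b) volume := fun a b => hG.integrableOn_Ioc
  -- step 4 : pointwise bound on inner integral
  have step4 : ∀ r ∈ Set.Ioc (0:ℝ) t,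
      ∫ s, (∫ x, F r x * F s x ∂μ) ∂ν ≤ ∫ s in Set.Ioc (-t) t, G s := by
    intro r hr
    have h1 : ∫ s, (∫ x, F r x * F s x ∂μ) ∂ν ≤ ∫ s, G (r - s) ∂ν := by
      apply integral_mono
      · apply integrable_of_bdd (C := B * B)
        · exact (hcm.comp_measurable
            ((measurable_const.prodMk measurable_id : Measurable fun s : ℝ => ((r, s) : ℝ × ℝ)))).aestronglyMeasurable
        · intro s; exact hcb r s
      · exact (hG.comp (continuous_const.sub continuous_id)).integrableOn_Ioc
      · intro s
        exact (le_abs_self _).trans (hcor r s)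
    have h2 : ∫ s, G (r - s) ∂ν ≤ ∫ s in Set.Ioc (-t) t, G s := by
      have e1 : ∫ s, G (r - s) ∂ν = ∫ s in (0:ℝ)..t, G (r - s) :=
        (intervalIntegral.integral_of_le ht).symm
      rw [e1, intervalIntegral.integral_comp_sub_left (fun u => G u) r, sub_zero]
      have hle : r - t ≤ r := by linarith
      rw [intervalIntegral.integral_of_le hle]
      apply setIntegral_mono_set (hGint _ _)
        (Filter.Eventually.of_forall fun u => hGnn u)
      exact (Set.Ioc_subset_Ioc (by linarith [hr.1.le]) hr.2).eventuallyLE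
    exact h1.trans h2
  -- assemble
  have key : ∫ x, (∫ r, F r x ∂ν)^2 ∂μ = ∫ r, (∫ s, (∫ x, F r x * F s x ∂μ) ∂ν) ∂ν := by
    simp_rw [step1]
    rw [step2]
    exact integral_congr_ae (Filter.Eventually.of_forall step3)
  rw [show (∫ x, (∫ r in Set.Ioc (0:ℝ) t, f (φ r x))^2 ∂μ)
      = ∫ x, (∫ r, F r x ∂ν)^2 ∂μ from rfl, key]
  have hintL : IntegrableOn (fun r => ∫ s, (∫ x, F r x * F s x ∂μ) ∂ν) (Set.Ioc 0 t) volume := by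
    apply integrable_of_bdd (C := B * B * t)
    · exact (StronglyMeasurable.integral_prod_right' (ν := ν) hcm).aestronglyMeasurable
    · intro r
      calc ‖∫ s, (∫ x, F r x * F s x ∂μ) ∂ν‖ ≤ B * B * (ν Set.univ).toReal := by
            apply norm_integral_le_of_norm_le_const
            filter_upwards with s
            exact hcb r s
        _ = B * B * t := by rw [hνtoReal]
  calc ∫ r, (∫ s, (∫ x, F r x * F s x ∂μ) ∂ν) ∂ν
      ≤ ∫ _ in Set.Ioc (0:ℝ) t, (∫ s in Set.Ioc (-t) t, G s) := by
        exact setIntegral_mono_on hintL (integrableOn_const (by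
          rw [Real.volume_Ioc]; exact ENNReal.ofReal_ne_top)) measurableSet_Ioc step4
    _ = t * ∫ s in Set.Ioc (-t) t, G s := by
        rw [setIntegral_const, Real.volume_real_Ioc_of_le ht, sub_zero, smul_eq_mul]



lemma flow_integral_comp {M : Type} [MeasurableSpace M] (μ : Measure M)
    (φ : ℝ → M → M) (hφm : Measurable (Function.uncurry φ)) (hid : φ 0 = id)
    (hcoc : ∀ s t, φ (s + t) = φ s ∘ φ t) (hmp : ∀ t, MeasurePreserving (φ t) μ μ)
    (s : ℝ) (g : M → ℝ) : ∫ x, g (φ s x) ∂μ = ∫ x, g x ∂μ := by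
  have hm : ∀ u : ℝ, Measurable (φ u) := fun u =>
    (hφm.comp (measurable_const.prodMk measurable_id) :
      Measurable fun x => Function.uncurry φ (u, x))
  have hinv : ∀ u x, φ (-u) (φ u x) = x := by
    intro u x
    have h : φ (-u) ∘ φ u = id := by rw [← hcoc, neg_add_cancel, hid]
    exact congrFun h x
  let e : M ≃ᵐ M :=
    { toEquiv := ⟨φ s, φ (-s), fun x => hinv s x,
        fun x => by have := hinv (-s) x; rwa [neg_neg] at this⟩,
      measurable_toFun := hm s,
      measurable_invFun := hm (-s) }
  exact (hmp s).integral_comp e.measurableEmbedding g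

lemma G_integral_bound (C' ηt : ℝ) (hC' : 0 ≤ C') (hη : ηt ∈ Set.Ioo (0:ℝ) 1)
    {t : ℝ} (ht : 1 ≤ t) :
    ∫ s in Set.Ioc (-t) t, C' * (max |s| 1) ^ (-ηt)
      ≤ (2*C' + 2*C'/(1-ηt)) * t^(1-ηt) := by
  obtain ⟨hη0, hη1⟩ := hη
  set G : ℝ → ℝ := fun u => C' * (max |u| 1) ^ (-ηt) with hGdef
  have hGcont : Continuous G := by
    apply continuous_const.mul
    apply Continuous.rpow_const (continuous_abs.max continuous_const)
    intro x; left
    have : (1:ℝ) ≤ max |x| 1 := le_max_right _ _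
    positivity
  have hGI : ∀ a b : ℝ, IntervalIntegrable G volume a b := fun a b =>
    hGcont.intervalIntegrable a b
  have hGle : ∀ u, G u ≤ C' := by
    intro u
    have h1 : (max |u| 1) ^ (-ηt) ≤ 1 :=
      Real.rpow_le_one_of_one_le_of_nonpos (le_max_right _ _) (by linarith)
    calc G u ≤ C' * 1 := mul_le_mul_of_nonneg_left h1 hC'
      _ = C' := mul_one _
  have htail : ∫ u in (1:ℝ)..t, G u ≤ C' * (t^(1-ηt)/(1-ηt)) := by
    have hcongr : ∫ u in (1:ℝ)..t, G u = ∫ u in (1:ℝ)..t, C' * u ^ (-ηt) := by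
      apply intervalIntegral.integral_congr
      intro u hu
      rw [Set.uIcc_of_le ht] at hu
      have h1 : (1:ℝ) ≤ u := hu.1
      have : max |u| 1 = u := by
        rw [abs_of_nonneg (by linarith), max_eq_left h1]
      rw [hGdef]; simp only [this]
    rw [hcongr, intervalIntegral.integral_const_mul]
    have hr : ∫ u in (1:ℝ)..t, u ^ (-ηt) = (t^(-ηt+1) - 1^(-ηt+1))/(-ηt+1) := by
      rw [integral_rpow (Or.inl (by linarith))]
    rw [hr, Real.one_rpow]
    have he : -ηt + 1 = 1 - ηt := by ring
    rw [he]
    have h0 : 0 < 1 - ηt := by linarith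
    have h2 : (t^(1-ηt) - 1)/(1-ηt) ≤ t^(1-ηt)/(1-ηt) := by
      gcongr
      linarith
    exact mul_le_mul_of_nonneg_left h2 hC'
  have hneg : ∫ u in (-t)..(-1:ℝ), G u = ∫ u in (1:ℝ)..t, G u := by
    have h1 : ∀ u : ℝ, G (-u) = G u := by intro u; simp [hGdef, abs_neg]
    have := intervalIntegral.integral_comp_neg (a := (1:ℝ)) (b := t) G
    rw [show ∫ x in (1:ℝ)..t, G (-x) = ∫ x in (1:ℝ)..t, G x by
      apply intervalIntegral.integral_congr; intro u _; exact h1 u] at this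
    exact this.symm
  have hmid : ∫ u in (-1:ℝ)..1, G u ≤ 2 * C' := by
    have := intervalIntegral.integral_mono_on (a := (-1:ℝ)) (b := 1)
      (by norm_num) (hGI _ _) (intervalIntegrable_const (c := C')) (fun u _ => hGle u)
    rw [intervalIntegral.integral_const] at this
    calc ∫ u in (-1:ℝ)..1, G u ≤ (1 - (-1)) • C' := this
      _ = 2 * C' := by norm_num
  have hsplit : ∫ u in (-t)..t, G u
      = (∫ u in (-t)..(-1:ℝ), G u) + ((∫ u in (-1:ℝ)..1, G u) + ∫ u in (1:ℝ)..t, G u) := by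
    rw [intervalIntegral.integral_add_adjacent_intervals (hGI _ _) (hGI _ _),
      intervalIntegral.integral_add_adjacent_intervals (hGI _ _) (hGI _ _)]
  have hset : ∫ s in Set.Ioc (-t) t, G s = ∫ u in (-t)..t, G u :=
    (intervalIntegral.integral_of_le (by linarith)).symm
  have hone : (1:ℝ) ≤ t^(1-ηt) := by
    have := Real.rpow_le_rpow_of_exponent_le ht (by linarith : (0:ℝ) ≤ 1 - ηt)
    rwa [Real.rpow_zero] at this
  have h0 : 0 < 1 - ηt := by linarith
  have htail' : C' * (t^(1-ηt)/(1-ηt)) = (C'/(1-ηt)) * t^(1-ηt) := by ring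
  calc ∫ s in Set.Ioc (-t) t, G s
      = (∫ u in (-t)..(-1:ℝ), G u) + ((∫ u in (-1:ℝ)..1, G u) + ∫ u in (1:ℝ)..t, G u) := by
        rw [hset, hsplit]
    _ ≤ C' * (t^(1-ηt)/(1-ηt)) + (2*C' + C' * (t^(1-ηt)/(1-ηt))) := by
        have := htail
        rw [hneg]
        linarith [hmid]
    _ = 2*C' + 2*(C'/(1-ηt)) * t^(1-ηt) := by ring
    _ ≤ 2*C' * t^(1-ηt) + 2*(C'/(1-ηt)) * t^(1-ηt) := by
        nlinarith [hone, hC']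
    _ = (2*C' + 2*C'/(1-ηt)) * t^(1-ηt) := by ring

end TCB

open TCB in
set_option maxHeartbeats 2000000 in
/-- Corollary on the cocycles `ξ` and `w` of a time-change: if `α` is a time-change function
bounded between `C_α⁻¹` and `C_α`, with mean one, whose correlations decay polynomially,
then there is `η ∈ (0, 1/4)` (depending only on `C_M, η̃, S, C_α`) such that, for every
`ω > 0`, on a set `Y` of measure `≥ 1 - ω` and for all `t ≥ m`,
`|ξ(x,t) - t| ≤ C_α⁻⁴ t^(1-η)` and `|w(x,t) - t| ≤ C_α⁻⁴ t^(1-η)`, where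
`ξ(x,t) = ∫₀^t α(φ^r x) dr` and `w(x,·)` is its inverse. -/
theorem time_change_cocycle_bound (C_M ηt S Cα : ℝ)
    (hCM : 0 < C_M) (hη : ηt ∈ Set.Ioo (0 : ℝ) 1) (hCα : 1 < Cα) :
    ∃ η : ℝ, η ∈ Set.Ioo (0 : ℝ) (1 / 4) ∧
      ∀ (M : Type) [MeasurableSpace M] (μ : Measure M) [IsProbabilityMeasure μ]
        (φ : ℝ → M → M) (α : M → ℝ) (w : M → ℝ → ℝ),
        Measurable (Function.uncurry φ) → φ 0 = id →
        (∀ s t, φ (s + t) = φ s ∘ φ t) → (∀ t, MeasurePreserving (φ t) μ μ) →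
        Measurable α → (∀ x, Cα⁻¹ ≤ α x ∧ α x ≤ Cα) →
        (∫ x, α x ∂μ) = 1 →
        (∀ x, |α x - 1| ≤ S) →
        (∀ t : ℝ, 1 ≤ t →
          |∫ x, (α (φ t x) - 1) * (α x - 1) ∂μ| ≤ C_M * S ^ 2 * t ^ (-ηt)) →
        (∀ x t, (∫ r in (0 : ℝ)..(w x t), α (φ r x)) = t) →
        (∀ x t, w x (∫ r in (0 : ℝ)..t, α (φ r x)) = t) →
        ∀ ω : ℝ, 0 < ω →
          ∃ (Y : Set M) (m : ℝ), MeasurableSet Y ∧ ENNReal.ofReal (1 - ω) ≤ μ Y ∧ 1 ≤ m ∧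
            ∀ x ∈ Y, ∀ t : ℝ, m ≤ t →
              |(∫ r in (0 : ℝ)..t, α (φ r x)) - t| ≤ (Cα ^ 4)⁻¹ * t ^ (1 - η) ∧
              |w x t - t| ≤ (Cα ^ 4)⁻¹ * t ^ (1 - η) := by
  obtain ⟨hηt0, hηt1⟩ := hη
  -- ### the exponent and grid constants
  set η : ℝ := ηt / 8 with hηdef
  have hη0 : 0 < η := by positivity
  have hη4 : η < 1/4 := by rw [hηdef]; linarith
  set b : ℕ := ⌈(4:ℝ)/ηt⌉₊ with hbdef
  have hb_ge : (4:ℝ)/ηt ≤ (b:ℝ) := Nat.le_ceil _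
  have hb_lt : (b:ℝ) < 4/ηt + 1 := Nat.ceil_lt_add_one (by positivity)
  have hb4 : (4:ℝ) ≤ (b:ℝ) * ηt := (div_le_iff₀ hηt0).mp hb_ge
  have hbR : (1:ℝ) ≤ (b:ℝ) := by
    have h1 : (1:ℝ) < 4/ηt := by rw [lt_div_iff₀ hηt0]; linarith
    linarith
  have hb1 : 1 ≤ b := by exact_mod_cast hbR
  have hbpos : (0:ℝ) < b := by linarith
  have hbne : (b:ℝ) ≠ 0 := ne_of_gt hbpos
  have hb5 : (b:ℝ) * ηt < 5 := by
    have h1 : (1:ℝ) ≤ 1/ηt := by rw [le_div_iff₀ hηt0]; linarith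
    have h2 : (4:ℝ)/ηt + 1/ηt = 5/ηt := by ring
    have h3 : (b:ℝ) < 5/ηt := by linarith
    exact (lt_div_iff₀ hηt0).mp h3
  have hδpos : η < 1/(b:ℝ) := by
    rw [hηdef, div_lt_div_iff₀ (by norm_num) hbpos]
    nlinarith
  set δ : ℝ := 1/(b:ℝ) - η with hδdef
  have hδ0 : 0 < δ := by rw [hδdef]; linarith
  refine ⟨η, ⟨hη0, hη4⟩, ?_⟩
  intro M _ μ _ φ α w hφm hid hcoc hmp hα hbound hmean hSb hdecay hw1 hw2 ω hω
  clear hw2 hmean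
  -- ### basic facts
  have hCα0 : (0:ℝ) < Cα := by linarith
  have hCαne : Cα ≠ 0 := ne_of_gt hCα0
  have hCαinv0 : (0:ℝ) < Cα⁻¹ := by positivity
  have hinv1 : Cα * Cα⁻¹ = 1 := mul_inv_cancel₀ hCαne
  have hne : Nonempty M := by
    by_contra h
    rw [not_nonempty_iff] at h
    have h1 : (Set.univ : Set M) = ∅ := Set.univ_eq_empty_iff.mpr h
    have h2 := measure_univ (μ := μ)
    rw [h1, measure_empty] at h2
    exact zero_ne_one h2
  obtain ⟨x₀⟩ := hne
  have hS0 : 0 ≤ S := le_trans (abs_nonneg _) (hSb x₀)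
  set f : M → ℝ := fun x => α x - 1 with hfdef
  have hfmeas : Measurable f := hα.sub measurable_const
  have hfbCα : ∀ y, |f y| ≤ Cα - 1 := by
    intro y
    have key : Cα⁻¹ * (Cα - 1)^2 = Cα - 2 + Cα⁻¹ := by field_simp; ring
    have hkey0 : 0 ≤ Cα⁻¹ * (Cα - 1)^2 := by positivity
    rw [hfdef, abs_le]
    constructor
    · simp only []
      linarith [(hbound y).1]
    · simp only []
      linarith [(hbound y).2]
  have hfbS : ∀ y, |f y| ≤ S := by intro y; simpa only [hfdef] using hSb y
  -- measurability and integrability of the flows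
  have hmφ : ∀ u : ℝ, Measurable (φ u) := fun u =>
    hφm.comp (measurable_const.prodMk measurable_id)
  have hmαφ : ∀ x : M, Measurable fun r : ℝ => α (φ r x) := fun x =>
    hα.comp (hφm.comp (measurable_id.prodMk measurable_const))
  have hmfφ : ∀ x : M, Measurable fun r : ℝ => f (φ r x) := fun x =>
    (hmαφ x).sub measurable_const
  have hintα : ∀ (x : M) (a b' : ℝ), IntervalIntegrable (fun r => α (φ r x)) volume a b' := by
    intro x a b'
    apply TCB.intervalIntegrable_of_bdd (hmαφ x) (C := Cα)
    intro r
    rw [abs_le]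
    exact ⟨by linarith [(hbound (φ r x)).1, hCαinv0], (hbound (φ r x)).2⟩
  have hintf : ∀ (x : M) (a b' : ℝ), IntervalIntegrable (fun r => f (φ r x)) volume a b' :=
    fun x a b' => TCB.intervalIntegrable_of_bdd (hmfφ x) (C := Cα - 1) (fun r => hfbCα _) a b'
  have hξlb : ∀ (x : M) (a b' : ℝ), a ≤ b' →
      Cα⁻¹ * (b' - a) ≤ ∫ r in a..b', α (φ r x) := by
    intro x a b' hab
    have h := intervalIntegral.integral_mono_on hab
      (intervalIntegrable_const (c := Cα⁻¹)) (hintα x a b') (fun r _ => (hbound (φ r x)).1)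
    rwa [intervalIntegral.integral_const, smul_eq_mul, mul_comm] at h
  have hξub : ∀ (x : M) (a b' : ℝ), a ≤ b' →
      (∫ r in a..b', α (φ r x)) ≤ Cα * (b' - a) := by
    intro x a b' hab
    have h := intervalIntegral.integral_mono_on hab
      (hintα x a b') (intervalIntegrable_const (c := Cα)) (fun r _ => (hbound (φ r x)).2)
    rwa [intervalIntegral.integral_const, smul_eq_mul, mul_comm] at h
  have hAξ : ∀ (x : M) (τ : ℝ), (∫ r in (0:ℝ)..τ, α (φ r x)) - τ
      = ∫ r in (0:ℝ)..τ, f (φ r x) := by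
    intro x τ
    simp only [hfdef]
    rw [intervalIntegral.integral_sub (hintα x 0 τ) intervalIntegrable_const,
      intervalIntegral.integral_const, smul_eq_mul, mul_one, sub_zero]
  -- the deviation Af and its basic properties
  set Af : M → ℝ → ℝ := fun x τ => ∫ r in Set.Ioc (0:ℝ) τ, f (φ r x) with hAfdef
  have hAfeq : ∀ (x : M) (τ : ℝ), 0 ≤ τ → Af x τ = ∫ r in (0:ℝ)..τ, f (φ r x) :=
    fun x τ hτ => (intervalIntegral.integral_of_le hτ).symm
  have hAfmeas : ∀ τ : ℝ, Measurable fun x => Af x τ := by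
    intro τ
    have h : StronglyMeasurable fun p : M × ℝ => f (φ p.2 p.1) :=
      (hfmeas.comp (hφm.comp (measurable_snd.prodMk measurable_fst))).stronglyMeasurable
    exact (h.integral_prod_right' (ν := volume.restrict (Set.Ioc (0:ℝ) τ))).measurable
  have hAfbd : ∀ (x : M) (τ : ℝ), 0 ≤ τ → |Af x τ| ≤ (Cα - 1) * τ := by
    intro x τ hτ
    rw [hAfeq x τ hτ, ← Real.norm_eq_abs]
    have h := intervalIntegral.norm_integral_le_of_norm_le_const
      (C := Cα - 1) (f := fun r => f (φ r x)) (a := 0) (b := τ)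
      (fun r _ => by rw [Real.norm_eq_abs]; exact hfbCα _)
    rwa [sub_zero, abs_of_nonneg hτ] at h
  -- ### correlation bound
  set C' : ℝ := max C_M 1 * S^2 with hC'def
  have hC'0 : 0 ≤ C' := by positivity
  set G : ℝ → ℝ := fun u => C' * (max |u| 1) ^ (-ηt) with hGdef
  have hGcont : Continuous G := by
    apply continuous_const.mul
    apply Continuous.rpow_const (continuous_abs.max continuous_const)
    intro x; left
    have h1 : (1:ℝ) ≤ max |x| 1 := le_max_right _ _
    positivity
  have hGnn : ∀ u, 0 ≤ G u := fun u =>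
    mul_nonneg hC'0 (Real.rpow_nonneg (le_trans (by norm_num) (le_max_right |u| 1)) _)
  have hdecay' : ∀ u : ℝ, 1 ≤ u → |∫ x, f (φ u x) * f x ∂μ| ≤ C_M * S^2 * u^(-ηt) := by
    intro u hu
    simpa only [hfdef] using hdecay u hu
  have hCorEq : ∀ r s : ℝ, (∫ x, f (φ r x) * f (φ s x) ∂μ) = ∫ x, f (φ (r - s) x) * f x ∂μ := by
    intro r s
    have h := TCB.flow_integral_comp μ φ hφm hid hcoc hmp s (fun y => f (φ (r - s) y) * f y)
    rw [← h]
    apply integral_congr_ae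
    filter_upwards with x
    have h2 : φ (r - s) (φ s x) = φ r x := by
      have h3 := congrFun (hcoc (r - s) s) x
      rw [sub_add_cancel] at h3
      exact h3.symm
    simp only [h2]
  have hCorS : ∀ u : ℝ, |∫ x, f (φ u x) * f x ∂μ| ≤ S * S := by
    intro u
    rw [← Real.norm_eq_abs]
    calc ‖∫ x, f (φ u x) * f x ∂μ‖ ≤ S * S * (μ Set.univ).toReal := by
          apply norm_integral_le_of_norm_le_const
          filter_upwards with x
          rw [Real.norm_eq_abs, abs_mul]
          exact mul_le_mul (hfbS _) (hfbS _) (abs_nonneg _) hS0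
      _ = S * S := by simp
  have hCorSym : ∀ u : ℝ, (∫ x, f (φ u x) * f x ∂μ) = ∫ x, f (φ (-u) x) * f x ∂μ := by
    intro u
    have h := hCorEq 0 u
    rw [zero_sub] at h
    rw [← h]
    apply integral_congr_ae
    filter_upwards with x
    have h0 : φ 0 x = x := by rw [hid]; rfl
    rw [h0, mul_comm]
  have hcor_rs : ∀ r s : ℝ, |∫ x, f (φ r x) * f (φ s x) ∂μ| ≤ G (r - s) := by
    intro r s
    rw [hCorEq r s]
    simp only [hGdef]
    set u := r - s with hudef
    have hCS : C_M * S^2 ≤ C' := by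
      rw [hC'def]
      exact mul_le_mul_of_nonneg_right (le_max_left _ _) (sq_nonneg S)
    rcases le_or_gt 1 |u| with h1 | h1
    · rcases le_or_gt 0 u with h2 | h2
      · have hu : 1 ≤ u := by rwa [abs_of_nonneg h2] at h1
        have hmax : max |u| 1 = u := by rw [abs_of_nonneg h2]; exact max_eq_left hu
        rw [hmax]
        calc |∫ x, f (φ u x) * f x ∂μ| ≤ C_M * S^2 * u^(-ηt) := hdecay' u hu
          _ ≤ C' * u^(-ηt) :=
              mul_le_mul_of_nonneg_right hCS (Real.rpow_nonneg (by linarith) _)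
      · have hu : 1 ≤ -u := by rwa [abs_of_neg h2] at h1
        have hmax : max |u| 1 = -u := by rw [abs_of_neg h2]; exact max_eq_left hu
        rw [hmax, hCorSym]
        calc |∫ x, f (φ (-u) x) * f x ∂μ| ≤ C_M * S^2 * (-u)^(-ηt) := hdecay' (-u) hu
          _ ≤ C' * (-u)^(-ηt) :=
              mul_le_mul_of_nonneg_right hCS (Real.rpow_nonneg (by linarith) _)
    · have hmax : max |u| 1 = 1 := max_eq_right h1.le
      rw [hmax, Real.one_rpow, mul_one]
      calc |∫ x, f (φ u x) * f x ∂μ| ≤ S * S := hCorS u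
        _ ≤ C' := by
            rw [hC'def]
            nlinarith [le_max_right C_M 1, sq_nonneg S]
  -- ### second moment bound
  set K₁ : ℝ := 2*C' + 2*C'/(1-ηt) with hK₁def
  have h1ηt : (0:ℝ) < 1 - ηt := by linarith
  have hK₁0 : 0 ≤ K₁ := by positivity
  have hV : ∀ τ : ℝ, 1 ≤ τ → ∫ x, (Af x τ)^2 ∂μ ≤ K₁ * τ^(2-ηt) := by
    intro τ hτ
    have hτ0 : (0:ℝ) < τ := by linarith
    have h1 := TCB.second_moment μ φ f G (Cα - 1) (by linarith) hφm hfmeas hfbCα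
      hGcont hGnn hcor_rs (t := τ) (by linarith)
    have h2 : ∫ s in Set.Ioc (-τ) τ, G s ≤ K₁ * τ^(1-ηt) := by
      have h3 := TCB.G_integral_bound C' ηt hC'0 ⟨hηt0, hηt1⟩ hτ
      simp only [hGdef, hK₁def]
      exact h3
    calc ∫ x, (Af x τ)^2 ∂μ
        = ∫ x, (∫ r in Set.Ioc (0:ℝ) τ, f (φ r x))^2 ∂μ := by simp only [hAfdef]
      _ ≤ τ * ∫ s in Set.Ioc (-τ) τ, G s := h1
      _ ≤ τ * (K₁ * τ^(1-ηt)) := mul_le_mul_of_nonneg_left h2 (le_of_lt hτ0)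
      _ = K₁ * τ^(2-ηt) := by
          rw [show (2-ηt) = 1 + (1-ηt) by ring, Real.rpow_add hτ0, Real.rpow_one]; ring
  -- ### Chebyshev estimate on the grid
  set c₀ : ℝ := (Cα^5)⁻¹ / 2 with hc₀def
  have hc₀0 : 0 < c₀ := by positivity
  have hc₀ne : c₀ ≠ 0 := ne_of_gt hc₀0
  set T : ℕ → ℝ := fun k => ((k:ℝ)+1)^b with hTdef
  have hT1 : ∀ k : ℕ, 1 ≤ T k := by
    intro k
    simp only [hTdef]
    exact one_le_pow₀ (by linarith [Nat.cast_nonneg (α := ℝ) k])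
  have hT0 : ∀ k : ℕ, 0 < T k := fun k => lt_of_lt_of_le one_pos (hT1 k)
  set bad : ℕ → Set M := fun k => {x | c₀ * (T k)^(1-η) < |Af x (T k)|} with hbaddef
  have hbadm : ∀ k, MeasurableSet (bad k) :=
    fun k => measurableSet_lt measurable_const (hAfmeas (T k)).abs
  set K₂ : ℝ := K₁ / c₀^2 with hK₂def
  have hK₂0 : 0 ≤ K₂ := by positivity
  have hcheb : ∀ k : ℕ, μ (bad k) ≤ ENNReal.ofReal (K₂ * ((k:ℝ)+1)^(-(3:ℝ))) := by
    intro k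
    have hk1 : (1:ℝ) ≤ (k:ℝ)+1 := by linarith [Nat.cast_nonneg (α := ℝ) k]
    set L : ℝ := c₀ * (T k)^(1-η) with hLdef
    have hL0 : 0 < L := mul_pos hc₀0 (Real.rpow_pos_of_pos (hT0 k) _)
    have hsub : bad k ⊆ {x | L^2 ≤ (fun x => (Af x (T k))^2) x} := by
      intro x hx
      have h1 : L < |Af x (T k)| := hx
      show L^2 ≤ (Af x (T k))^2
      calc L^2 ≤ |Af x (T k)|^2 := by nlinarith [abs_nonneg (Af x (T k))]
        _ = (Af x (T k))^2 := sq_abs _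
    have hIntA2 : Integrable (fun x => (Af x (T k))^2) μ := by
      apply TCB.integrable_of_bdd ((hAfmeas (T k)).pow_const 2).aestronglyMeasurable
        (C := ((Cα - 1) * T k)^2)
      intro x
      have hb1 : |Af x (T k)| ≤ (Cα - 1) * T k := hAfbd x (T k) (le_of_lt (hT0 k))
      rw [Real.norm_eq_abs, abs_pow]
      exact pow_le_pow_left₀ (abs_nonneg _) hb1 2
    have hmark := mul_meas_ge_le_integral_of_nonneg
      (Filter.Eventually.of_forall (fun x => sq_nonneg (Af x (T k)))) hIntA2 (L^2)
    have hVk := hV (T k) (hT1 k)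
    have htoReal : (μ (bad k)).toReal ≤ K₁ * (T k)^(2-ηt) / L^2 := by
      have hmono : μ (bad k) ≤ μ {x | L^2 ≤ (fun x => (Af x (T k))^2) x} := measure_mono hsub
      have hh1 : (μ (bad k)).toReal ≤ (μ {x | L^2 ≤ (fun x => (Af x (T k))^2) x}).toReal :=
        ENNReal.toReal_mono (measure_ne_top μ _) hmono
      have hh2 : (μ {x | L^2 ≤ (fun x => (Af x (T k))^2) x}).toReal ≤ K₁ * (T k)^(2-ηt) / L^2 := by
        rw [le_div_iff₀ (by positivity : (0:ℝ) < L^2)]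
        calc (μ {x | L^2 ≤ (fun x => (Af x (T k))^2) x}).toReal * L^2
            = L^2 * (μ {x | L^2 ≤ (fun x => (Af x (T k))^2) x}).toReal := by ring
          _ ≤ ∫ x, (Af x (T k))^2 ∂μ := hmark
          _ ≤ K₁ * (T k)^(2-ηt) := hVk
      linarith
    have halg : K₁ * (T k)^(2-ηt) / L^2 ≤ K₂ * ((k:ℝ)+1)^(-(3:ℝ)) := by
      have hTk0 : (0:ℝ) < T k := hT0 k
      have hL2 : L^2 = c₀^2 * (T k)^(2*(1-η)) := by
        have h2' : (2*(1-η)) = (1-η) * ((2:ℕ):ℝ) := by push_cast; ring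
        rw [hLdef, mul_pow, h2', Real.rpow_mul (le_of_lt hTk0), Real.rpow_natCast]
      have e1 : (T k)^(2-ηt) / (T k)^(2*(1-η)) = (T k)^(2*η - ηt) := by
        rw [← Real.rpow_sub hTk0]
        congr 1
        ring
      have e2 : K₁ * (T k)^(2-ηt) / L^2 = K₂ * (T k)^(2*η - ηt) := by
        rw [hL2, hK₂def, ← e1]
        field_simp
      have e3 : (T k)^(2*η - ηt) ≤ ((k:ℝ)+1)^(-(3:ℝ)) := by
        simp only [hTdef]
        rw [← Real.rpow_natCast ((k:ℝ)+1) b, ← Real.rpow_mul (by linarith)]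
        apply Real.rpow_le_rpow_of_exponent_le hk1
        have h75 : (b:ℝ)*(2*η - ηt) = -(3/4)*((b:ℝ)*ηt) := by rw [hηdef]; ring
        rw [h75]
        linarith
      rw [e2]
      exact mul_le_mul_of_nonneg_left e3 hK₂0
    rw [ENNReal.le_ofReal_iff_toReal_le (measure_ne_top μ _) (by positivity)]
    exact le_trans htoReal halg
  -- ### choosing the tail index
  set gE : ℕ → ENNReal := fun k => ENNReal.ofReal (K₂ * ((k:ℝ)+1)^(-(3:ℝ))) with hgEdef
  have hgsum : ∑' k, gE k ≠ ⊤ := by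
    have hsummable : Summable (fun k : ℕ => K₂ * ((k:ℝ)+1)^(-(3:ℝ))) := by
      apply Summable.mul_left
      have hs1 : Summable (fun n : ℕ => ((n:ℝ)^(3:ℝ))⁻¹) :=
        Real.summable_nat_rpow_inv.mpr (by norm_num)
      have hs2 := (summable_nat_add_iff 1).mpr hs1
      apply hs2.congr
      intro n
      have hn0 : (0:ℝ) ≤ (n:ℝ)+1 := by linarith [Nat.cast_nonneg (α := ℝ) n]
      push_cast
      rw [Real.rpow_neg hn0]
    simp only [hgEdef]
    rw [← ENNReal.ofReal_tsum_of_nonneg (fun k => by positivity) hsummable]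
    exact ENNReal.ofReal_ne_top
  obtain ⟨k₀, hk₀⟩ : ∃ k₀ : ℕ, ∑' k, gE (k + k₀) ≤ ENNReal.ofReal ω := by
    have hωE : (0:ENNReal) < ENNReal.ofReal ω := by rw [ENNReal.ofReal_pos]; exact hω
    have hev := (ENNReal.tendsto_sum_nat_add gE hgsum).eventually_lt_const hωE
    obtain ⟨k₀, hk₀⟩ := hev.exists
    exact ⟨k₀, hk₀.le⟩
  -- ### the good set
  set Y : Set M := (⋃ k : ℕ, bad (k + k₀))ᶜ with hYdef
  have hUm : MeasurableSet (⋃ k : ℕ, bad (k + k₀)) := MeasurableSet.iUnion (fun k => hbadm (k + k₀))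
  have hYm : MeasurableSet Y := hUm.compl
  have hYmeas : ENNReal.ofReal (1 - ω) ≤ μ Y := by
    have hU : μ (⋃ k : ℕ, bad (k + k₀)) ≤ ENNReal.ofReal ω := by
      calc μ (⋃ k : ℕ, bad (k + k₀)) ≤ ∑' k : ℕ, μ (bad (k + k₀)) := measure_iUnion_le _
        _ ≤ ∑' k : ℕ, gE (k + k₀) := ENNReal.tsum_le_tsum (fun k => hcheb (k + k₀))
        _ ≤ ENNReal.ofReal ω := hk₀
    have hμY : μ Y = 1 - μ (⋃ k : ℕ, bad (k + k₀)) := by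
      rw [hYdef, measure_compl hUm (measure_ne_top μ _), measure_univ]
    rw [hμY]
    rcases le_or_gt ω 1 with hω1 | hω1
    · have hadd : ENNReal.ofReal (1 - ω) + ENNReal.ofReal ω = 1 := by
        rw [← ENNReal.ofReal_add (by linarith) (le_of_lt hω)]
        norm_num
      have hsub1 : (1:ENNReal) - ENNReal.ofReal ω = ENNReal.ofReal (1-ω) := by
        rw [← hadd, ENNReal.add_sub_cancel_right ENNReal.ofReal_ne_top]
      rw [← hsub1]
      exact tsub_le_tsub_left hU 1
    · rw [ENNReal.ofReal_eq_zero.mpr (by linarith)]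
      exact bot_le
  have hgood : ∀ x ∈ Y, ∀ j : ℕ, k₀ ≤ j → |Af x (T j)| ≤ c₀ * (T j)^(1-η) := by
    intro x hx j hj
    by_contra hcon
    push_neg at hcon
    apply hx
    refine Set.mem_iUnion.mpr ⟨j - k₀, ?_⟩
    rw [Nat.sub_add_cancel hj]
    exact hcon
  -- ### the pointwise claim on Y
  set ε : ℝ := (Cα^5)⁻¹ with hεdef
  have hεc₀ : ε = 2 * c₀ := by rw [hεdef, hc₀def]; ring
  have hε0 : 0 < ε := by positivity
  set D : ℝ := Cα * (b:ℝ) * 2^(b-1) with hDdef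
  have hD0 : 0 < D := by positivity
  set m₀ : ℝ := max (((k₀:ℝ)+2)^b) ((D/c₀ + 1)^((1:ℝ)/δ)) with hm₀def
  have hm₀1 : 1 ≤ m₀ := by
    refine le_trans ?_ (le_max_left _ _)
    exact one_le_pow₀ (by linarith [Nat.cast_nonneg (α := ℝ) k₀])
  have hclaim : ∀ x ∈ Y, ∀ t : ℝ, m₀ ≤ t → |Af x t| ≤ ε * t^(1-η) := by
    intro x hx t ht
    have ht1 : (1:ℝ) ≤ t := le_trans hm₀1 ht
    have ht0 : (0:ℝ) < t := by linarith
    set r : ℝ := t^((1:ℝ)/(b:ℝ)) with hrdef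
    have hr0 : 0 < r := Real.rpow_pos_of_pos ht0 _
    have hrb : r^(b:ℕ) = t := by
      rw [hrdef, ← Real.rpow_natCast (t^((1:ℝ)/(b:ℝ))) b, ← Real.rpow_mul (le_of_lt ht0),
        one_div, inv_mul_cancel₀ hbne, Real.rpow_one]
    have hrk : ((k₀:ℝ)+2) ≤ r := by
      have h1 : (((k₀:ℝ)+2))^(b:ℕ) ≤ t := le_trans (le_max_left _ _) ht
      have h2 : ((((k₀:ℝ)+2))^(b:ℕ))^((1:ℝ)/(b:ℝ)) ≤ t^((1:ℝ)/(b:ℝ)) :=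
        Real.rpow_le_rpow (by positivity) h1 (by positivity)
      rwa [← Real.rpow_natCast ((k₀:ℝ)+2) b, ← Real.rpow_mul (by positivity),
        mul_one_div, div_self hbne, Real.rpow_one] at h2
    have hfl1 : k₀ + 2 ≤ ⌊r⌋₊ := Nat.le_floor (by exact_mod_cast hrk)
    obtain ⟨q, hq⟩ : ∃ q : ℕ, ⌊r⌋₊ = q + 1 := ⟨⌊r⌋₊ - 1, by omega⟩
    have hqk₀ : k₀ ≤ q := by omega
    have hfloor_le : ((q:ℝ)+1) ≤ r := by
      have h1 := Nat.floor_le (le_of_lt hr0)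
      rw [hq] at h1; push_cast at h1; linarith
    have hlt : r < (q:ℝ)+2 := by
      have h1 := Nat.lt_floor_add_one r
      rw [hq] at h1; push_cast at h1; linarith
    have hTq_le : T q ≤ t := by
      simp only [hTdef]
      rw [← hrb]
      exact pow_le_pow_left₀ (by positivity) hfloor_le b
    have ht_lt : t < ((q:ℝ)+2)^(b:ℕ) := by
      rw [← hrb]
      exact pow_lt_pow_left₀ hlt (le_of_lt hr0) (by omega)
    have hgoodq := hgood x hx q hqk₀
    have hdiffeq : Af x t - Af x (T q) = ∫ ρ in (T q)..t, f (φ ρ x) := by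
      rw [hAfeq x t (by linarith), hAfeq x (T q) (le_of_lt (hT0 q))]
      rw [← intervalIntegral.integral_interval_sub_left (hintf x 0 t) (hintf x 0 (T q))]
    have hdiff_bd : |Af x t - Af x (T q)| ≤ (Cα - 1) * (t - T q) := by
      rw [hdiffeq, ← Real.norm_eq_abs]
      have h := intervalIntegral.norm_integral_le_of_norm_le_const
        (C := Cα - 1) (f := fun ρ => f (φ ρ x)) (a := T q) (b := t)
        (fun ρ _ => by rw [Real.norm_eq_abs]; exact hfbCα _)
      rwa [abs_of_nonneg (by linarith [hTq_le] : (0:ℝ) ≤ t - T q)] at h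
    have hq1 : (1:ℝ) ≤ (q:ℝ)+1 := by linarith [Nat.cast_nonneg (α := ℝ) q]
    have hgap : t - T q ≤ (b:ℝ) * 2^(b-1) * t^(1 - 1/(b:ℝ)) := by
      obtain ⟨bm, hbm⟩ : ∃ bm, b = bm + 1 := ⟨b - 1, by omega⟩
      have hp := TCB.pow_succ_sub_le ((q:ℝ)+1) (by positivity) bm
      have hq2pow : (((q:ℝ)+1)+1)^bm ≤ 2^bm * ((q:ℝ)+1)^bm := by
        calc (((q:ℝ)+1)+1)^bm ≤ (2*((q:ℝ)+1))^bm :=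
              pow_le_pow_left₀ (by linarith) (by linarith) bm
          _ = 2^bm * ((q:ℝ)+1)^bm := mul_pow 2 _ bm
      have hqt : ((q:ℝ)+1)^(bm:ℕ) ≤ t^(1 - 1/(b:ℝ)) := by
        have h1 : (((q:ℝ)+1)^(b:ℕ)) ≤ t := by
          have := hTq_le; simp only [hTdef] at this; exact this
        have h2 : ((((q:ℝ)+1)^(b:ℕ)))^((bm:ℝ)/(b:ℝ)) ≤ t^((bm:ℝ)/(b:ℝ)) :=
          Real.rpow_le_rpow (by positivity) h1 (by positivity)
        calc ((q:ℝ)+1)^(bm:ℕ) = (((q:ℝ)+1)^(b:ℕ))^((bm:ℝ)/(b:ℝ)) := by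
              rw [← Real.rpow_natCast ((q:ℝ)+1) b, ← Real.rpow_mul (by positivity),
                ← Real.rpow_natCast ((q:ℝ)+1) bm]
              congr 1
              field_simp
          _ ≤ t^((bm:ℝ)/(b:ℝ)) := h2
          _ = t^(1 - 1/(b:ℝ)) := by
              congr 1
              have hbcast : (b:ℝ) = (bm:ℝ)+1 := by rw [hbm]; push_cast; ring
              rw [hbcast]
              field_simp
              ring
      have hstep : t - T q ≤ (((q:ℝ)+1)+1)^(b:ℕ) - ((q:ℝ)+1)^(b:ℕ) := by
        have h2 : T q = ((q:ℝ)+1)^(b:ℕ) := by simp only [hTdef]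
        have h3 : ((q:ℝ)+2) = ((q:ℝ)+1)+1 := by ring
        rw [h3] at ht_lt
        linarith [h2, ht_lt]
      calc t - T q ≤ (((q:ℝ)+1)+1)^(b:ℕ) - ((q:ℝ)+1)^(b:ℕ) := hstep
        _ ≤ ((bm:ℝ)+1) * (((q:ℝ)+1)+1)^bm := by rw [hbm]; exact hp
        _ ≤ ((bm:ℝ)+1) * (2^bm * ((q:ℝ)+1)^bm) :=
            mul_le_mul_of_nonneg_left hq2pow (by positivity)
        _ ≤ (b:ℝ) * 2^(b-1) * t^(1-1/(b:ℝ)) := by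
            have hbcast : ((bm:ℝ)+1) = (b:ℝ) := by rw [hbm]; push_cast; ring
            have hbm_eq : b - 1 = bm := by omega
            rw [hbcast, hbm_eq]
            calc (b:ℝ) * (2^bm * ((q:ℝ)+1)^bm) = (b:ℝ) * 2^bm * ((q:ℝ)+1)^bm := by ring
              _ ≤ (b:ℝ) * 2^bm * t^(1-1/(b:ℝ)) :=
                  mul_le_mul_of_nonneg_left hqt (by positivity)
    have hspace : (Cα - 1) * (t - T q) ≤ c₀ * t^(1-η) := by
      have hgap0 : 0 ≤ t - T q := by linarith [hTq_le]
      have h1 : (Cα - 1) * (t - T q) ≤ D * t^(1-1/(b:ℝ)) := by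
        calc (Cα - 1)*(t - T q) ≤ Cα * (t - T q) :=
              mul_le_mul_of_nonneg_right (by linarith) hgap0
          _ ≤ Cα * ((b:ℝ) * 2^(b-1) * t^(1-1/(b:ℝ))) :=
              mul_le_mul_of_nonneg_left hgap (le_of_lt hCα0)
          _ = D * t^(1-1/(b:ℝ)) := by rw [hDdef]; ring
      have htδ : D / c₀ ≤ t^δ := by
        have h3 : (D/c₀ + 1)^((1:ℝ)/δ) ≤ t := le_trans (le_max_right _ _) ht
        have h4 := Real.rpow_le_rpow (by positivity) h3 (le_of_lt hδ0)
        rw [← Real.rpow_mul (by positivity), one_div, inv_mul_cancel₀ (ne_of_gt hδ0),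
          Real.rpow_one] at h4
        linarith
      have hsplit : t^(1-η) = t^δ * t^(1-1/(b:ℝ)) := by
        rw [← Real.rpow_add ht0]
        congr 1
        rw [hδdef]; ring
      have h2 : D * t^(1-1/(b:ℝ)) ≤ c₀ * t^(1-η) := by
        calc D * t^(1-1/(b:ℝ)) ≤ (c₀ * t^δ) * t^(1-1/(b:ℝ)) := by
              apply mul_le_mul_of_nonneg_right _ (Real.rpow_nonneg (le_of_lt ht0) _)
              rw [div_le_iff₀ hc₀0] at htδ
              linarith [htδ]
          _ = c₀ * t^(1-η) := by rw [hsplit]; ring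
      linarith
    have hTq_pow : (T q)^(1-η) ≤ t^(1-η) :=
      Real.rpow_le_rpow (le_of_lt (hT0 q)) hTq_le (by linarith)
    calc |Af x t| = |Af x (T q) + (Af x t - Af x (T q))| := by congr 1; ring
      _ ≤ |Af x (T q)| + |Af x t - Af x (T q)| := abs_add_le _ _
      _ ≤ c₀ * (T q)^(1-η) + (Cα - 1)*(t - T q) := add_le_add hgoodq hdiff_bd
      _ ≤ c₀ * t^(1-η) + c₀ * t^(1-η) :=
          add_le_add (mul_le_mul_of_nonneg_left hTq_pow (le_of_lt hc₀0)) hspace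
      _ = ε * t^(1-η) := by rw [hεc₀]; ring
  -- ### conclusion
  have hm₀Cα : m₀ ≤ Cα * m₀ := le_mul_of_one_le_left (by linarith) hCα.le
  refine ⟨Y, Cα * m₀, hYm, hYmeas, le_trans hm₀1 hm₀Cα, ?_⟩
  intro x hx t ht
  have hm₀t : m₀ ≤ t := le_trans hm₀Cα ht
  have ht1 : (1:ℝ) ≤ t := le_trans hm₀1 hm₀t
  have ht0 : (0:ℝ) < t := by linarith
  have hεle : ε ≤ (Cα^4)⁻¹ := by
    rw [hεdef]
    have h1 : Cα^4 ≤ Cα^5 := pow_le_pow_right₀ hCα.le (by norm_num)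
    exact inv_anti₀ (by positivity) h1
  constructor
  · have h1 := hclaim x hx t hm₀t
    rw [hAfeq x t (le_of_lt ht0), ← hAξ x t] at h1
    calc |(∫ r in (0:ℝ)..t, α (φ r x)) - t| ≤ ε * t^(1-η) := h1
      _ ≤ (Cα^4)⁻¹ * t^(1-η) :=
          mul_le_mul_of_nonneg_right hεle (Real.rpow_nonneg (le_of_lt ht0) _)
  · set u : ℝ := w x t with hudef
    have hwu : (∫ ρ in (0:ℝ)..u, α (φ ρ x)) = t := hw1 x t
    have hu0 : 0 ≤ u := by
      by_contra hneg
      push_neg at hneg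
      have h1 : Cα⁻¹ * (0 - u) ≤ ∫ ρ in u..(0:ℝ), α (φ ρ x) := hξlb x u 0 (le_of_lt hneg)
      have h2 : (∫ ρ in (0:ℝ)..u, α (φ ρ x)) = -∫ ρ in u..(0:ℝ), α (φ ρ x) :=
        intervalIntegral.integral_symm u 0
      linarith [mul_pos hCαinv0 (neg_pos.mpr hneg), h1, h2, hwu, ht1]
    have hut_ub : t ≤ Cα * u := by
      have h1 := hξub x 0 u hu0
      rw [sub_zero] at h1
      linarith [hwu, h1]
    have hut_lb : Cα⁻¹ * u ≤ t := by
      have h1 := hξlb x 0 u hu0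
      rw [sub_zero] at h1
      linarith [hwu, h1]
    have huCαt : u ≤ Cα * t := by
      have h1 := mul_le_mul_of_nonneg_left hut_lb (le_of_lt hCα0)
      rw [← mul_assoc, hinv1, one_mul] at h1
      exact h1
    have hum₀ : m₀ ≤ u := by
      have h1 : Cα * m₀ ≤ Cα * u := le_trans ht hut_ub
      exact le_of_mul_le_mul_left h1 hCα0
    have h1 := hclaim x hx u hum₀
    rw [hAfeq x u hu0, ← hAξ x u, hwu] at h1
    have h2 : u^(1-η) ≤ Cα^(1-η) * t^(1-η) := by
      calc u^(1-η) ≤ (Cα*t)^(1-η) := Real.rpow_le_rpow hu0 huCαt (by linarith)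
        _ = Cα^(1-η) * t^(1-η) := Real.mul_rpow (le_of_lt hCα0) (le_of_lt ht0)
    have h3 : Cα^(1-η) ≤ Cα := by
      have h4 := Real.rpow_le_rpow_of_exponent_le (le_of_lt hCα) (by linarith : 1-η ≤ 1)
      rwa [Real.rpow_one] at h4
    have h5 : ε * Cα = (Cα^4)⁻¹ := by
      rw [hεdef]
      field_simp
    calc |w x t - t| = |t - u| := by rw [abs_sub_comm]
      _ ≤ ε * u^(1-η) := h1
      _ ≤ ε * (Cα^(1-η) * t^(1-η)) := mul_le_mul_of_nonneg_left h2 (le_of_lt hε0)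
      _ ≤ ε * (Cα * t^(1-η)) := by
          have h6 : Cα^(1-η) * t^(1-η) ≤ Cα * t^(1-η) :=
            mul_le_mul_of_nonneg_right h3 (Real.rpow_nonneg (le_of_lt ht0) _)
          exact mul_le_mul_of_nonneg_left h6 (le_of_lt hε0)
      _ = (Cα^4)⁻¹ * t^(1-η) := by
          rw [show ε * (Cα * t^(1-η)) = (ε*Cα) * t^(1-η) by ring, h5]
end

section
/- Let G₁ and G₂ be groups acting on the right on sets M₁ and M₂ respectively, and let u₁ : ℝ → G₁ and u₂ : ℝ → G₂ be group homomorphisms from (ℝ, +). Let C ≥ 1 and let α_i : M_i → ℝ satisfy C^{−1} ≤ α_i ≤ C, with s ↦ α_i(p · u_i(s)) Lebesgue measurable for every p ∈ M_i. Let ψ : M₁ → M₂ and z : M₁ × ℝ → ℝ satisfy, for all x ∈ M₁ and T ∈ ℝ: ψ(x · u₁(T)) = ψ(x) · u₂(z(x, T)) and ∫₀^{z(x,T)} α₂(ψ(x) · u₂(s)) ds = ∫₀^T α₁(x · u₁(s)) ds. Let c > 0, let g ∈ G₁ satisfy g · u₁(ct) = u₁(t) · g for all t ∈ ℝ, let Φ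 ∈ G₂ satisfy Φ · u₂(ct) = u₂(t) · Φ for all t ∈ ℝ, and let β : M₁ → ℝ satisfy, for all x ∈ M₁ and t ∈ ℝ: ψ(x · g) = ψ(x) · Φ · u₂(β(x)) and β(x · u₁(t)) − β(x) = z(x · g, ct) − c · z(x, t). Define f : M₁ → ℝ by f(x) = (1/c) ∫₀^{β(x)} α₂(ψ(x) · Φ · u₂(s)) ds. Then for all x ∈ M₁ and t ∈ ℝ: ∫₀^t α₁(x · u₁(s) · g) ds − ∫₀^{z(x,t)} α₂(ψ(x) · u₂(s) · Φ) ds = f(x · u₁(t)) − f(x). -/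
/-- Cohomology of the time-change functions along the normaliser
(Corollary 4.6 / Theorem C): with a conjugacy `ψ` between the time-changes, a normalising
element `g` of `u₁` (with `g u₁(ct) = u₁(t) g`), a corresponding element `Φ` normalising
`u₂`, and `β` satisfying the stated cocycle relations, the difference
`∫₀^t α₁(x u₁(s) g) ds − ∫₀^{z(x,t)} α₂(ψ(x) u₂(s) Φ) ds` is the coboundary
`f(x u₁(t)) − f(x)` of `f(x) = (1/c) ∫₀^{β(x)} α₂(ψ(x) Φ u₂(s)) ds`. -/
theorem time_change_cohomology {G₁ G₂ M₁ M₂ : Type*} [Group G₁] [Group G₂]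
    (act₁ : M₁ → G₁ → M₁) (act₂ : M₂ → G₂ → M₂)
    (hact₁id : ∀ p, act₁ p 1 = p)
    (hact₁mul : ∀ p g h, act₁ (act₁ p g) h = act₁ p (g * h))
    (hact₂id : ∀ p, act₂ p 1 = p)
    (hact₂mul : ∀ p g h, act₂ (act₂ p g) h = act₂ p (g * h))
    (u₁ : ℝ → G₁) (u₂ : ℝ → G₂)
    (hu₁ : ∀ s t, u₁ (s + t) = u₁ s * u₁ t) (hu₂ : ∀ s t, u₂ (s + t) = u₂ s * u₂ t)
    (C : ℝ) (hC : 1 ≤ C)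
    (α₁ : M₁ → ℝ) (α₂ : M₂ → ℝ)
    (hα₁ : ∀ p, C⁻¹ ≤ α₁ p ∧ α₁ p ≤ C) (hα₂ : ∀ p, C⁻¹ ≤ α₂ p ∧ α₂ p ≤ C)
    (hα₁m : ∀ p, Measurable fun s => α₁ (act₁ p (u₁ s)))
    (hα₂m : ∀ p, Measurable fun s => α₂ (act₂ p (u₂ s)))
    (ψ : M₁ → M₂) (z : M₁ → ℝ → ℝ)
    (hψ : ∀ (x : M₁) (T : ℝ), ψ (act₁ x (u₁ T)) = act₂ (ψ x) (u₂ (z x T)))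
    (hz : ∀ (x : M₁) (T : ℝ),
      (∫ s in (0 : ℝ)..(z x T), α₂ (act₂ (ψ x) (u₂ s))) =
        ∫ s in (0 : ℝ)..T, α₁ (act₁ x (u₁ s)))
    (c : ℝ) (hc : 0 < c)
    (g : G₁) (hg : ∀ t : ℝ, g * u₁ (c * t) = u₁ t * g)
    (Φ : G₂) (hΦ : ∀ t : ℝ, Φ * u₂ (c * t) = u₂ t * Φ)
    (β : M₁ → ℝ)
    (hβ1 : ∀ x : M₁, ψ (act₁ x g) = act₂ (act₂ (ψ x) Φ) (u₂ (β x)))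
    (hβ2 : ∀ (x : M₁) (t : ℝ),
      β (act₁ x (u₁ t)) - β x = z (act₁ x g) (c * t) - c * z x t) :
    ∀ (x : M₁) (t : ℝ),
      (∫ s in (0 : ℝ)..t, α₁ (act₁ (act₁ x (u₁ s)) g)) -
          (∫ s in (0 : ℝ)..(z x t), α₂ (act₂ (act₂ (ψ x) (u₂ s)) Φ)) =
        (1 / c) * (∫ s in (0 : ℝ)..(β (act₁ x (u₁ t))),
            α₂ (act₂ (act₂ (ψ (act₁ x (u₁ t))) Φ) (u₂ s))) -
        (1 / c) * ∫ s in (0 : ℝ)..(β x), α₂ (act₂ (act₂ (ψ x) Φ) (u₂ s)) := by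

  intro x t
  have hcne : c ≠ 0 := ne_of_gt hc
  set q : M₂ := act₂ (ψ x) Φ with hq
  set F : ℝ → ℝ := fun s => α₂ (act₂ q (u₂ s)) with hF
  have hCpos : (0:ℝ) < C := lt_of_lt_of_le one_pos hC
  -- F is interval integrable on any interval
  have hFint : ∀ a b : ℝ, IntervalIntegrable F MeasureTheory.volume a b := by
    intro a b
    rw [intervalIntegrable_iff]
    apply MeasureTheory.Integrable.mono'
      (MeasureTheory.integrableOn_const measure_Ioc_lt_top.ne) (g := fun _ => C)
    · exact ((hα₂m q).aestronglyMeasurable).restrict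
    · filter_upwards with s
      rw [Real.norm_eq_abs, abs_le]
      refine ⟨le_trans (neg_nonpos_of_nonneg hCpos.le) ?_, (hα₂ _).2⟩
      exact le_trans (inv_nonneg.mpr hCpos.le) (hα₂ _).1
  -- key relation for the first integral
  have key1 : ∀ s : ℝ, act₁ (act₁ x (u₁ s)) g = act₁ (act₁ x g) (u₁ (c * s)) := by
    intro s
    rw [hact₁mul, hact₁mul, ← hg]
  have key2 : ∀ s : ℝ, act₂ (act₂ (ψ x) (u₂ s)) Φ = act₂ q (u₂ (c * s)) := by
    intro s
    rw [hact₂mul, hq, hact₂mul, ← hΦ]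
  set Z : ℝ := z (act₁ x g) (c * t) with hZ
  set w : ℝ := c * z x t with hw
  -- first integral
  have e1 : (∫ s in (0:ℝ)..t, α₁ (act₁ (act₁ x (u₁ s)) g))
      = (1 / c) * ∫ s in (β x)..(β x + Z), F s := by
    have : (∫ s in (0:ℝ)..t, α₁ (act₁ (act₁ x (u₁ s)) g))
        = ∫ s in (0:ℝ)..t, α₁ (act₁ (act₁ x g) (u₁ (c * s))) := by
      simp_rw [key1]
    rw [this, intervalIntegral.integral_comp_mul_left (fun s => α₁ (act₁ (act₁ x g) (u₁ s))) hcne,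
      mul_zero, smul_eq_mul, ← one_div]
    congr 1
    rw [← hz (act₁ x g) (c * t), ← hZ]
    have hψg : ∀ s : ℝ, act₂ (ψ (act₁ x g)) (u₂ s) = act₂ q (u₂ (β x + s)) := by
      intro s
      rw [hβ1 x, hact₂mul, ← hu₂, ← hq]
    have : (∫ s in (0:ℝ)..Z, α₂ (act₂ (ψ (act₁ x g)) (u₂ s)))
        = ∫ s in (0:ℝ)..Z, F (β x + s) := by
      simp_rw [hψg]
      rfl
    rw [this, intervalIntegral.integral_comp_add_left F (β x), add_zero]
  -- second integral
  have e2 : (∫ s in (0:ℝ)..(z x t), α₂ (act₂ (act₂ (ψ x) (u₂ s)) Φ))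
      = (1 / c) * ∫ s in (0:ℝ)..w, F s := by
    have : (∫ s in (0:ℝ)..(z x t), α₂ (act₂ (act₂ (ψ x) (u₂ s)) Φ))
        = ∫ s in (0:ℝ)..(z x t), F (c * s) := by
      simp_rw [key2]
      rfl
    rw [this, intervalIntegral.integral_comp_mul_left F hcne, mul_zero, smul_eq_mul, ← one_div,
      ← hw]
  -- RHS first term
  have e3 : (∫ s in (0:ℝ)..(β (act₁ x (u₁ t))),
        α₂ (act₂ (act₂ (ψ (act₁ x (u₁ t))) Φ) (u₂ s)))
      = ∫ s in w..(β x + Z), F s := by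
    have hpt : ∀ s : ℝ, act₂ (act₂ (ψ (act₁ x (u₁ t))) Φ) (u₂ s) = act₂ q (u₂ (w + s)) := by
      intro s
      rw [hψ, hact₂mul, hact₂mul, ← mul_assoc, ← hΦ, mul_assoc, ← hu₂, ← hw, hq, hact₂mul]
    have : (∫ s in (0:ℝ)..(β (act₁ x (u₁ t))),
          α₂ (act₂ (act₂ (ψ (act₁ x (u₁ t))) Φ) (u₂ s)))
        = ∫ s in (0:ℝ)..(β (act₁ x (u₁ t))), F (w + s) := by
      simp_rw [hpt]
      rfl
    rw [this, intervalIntegral.integral_comp_add_left F w, add_zero]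
    have hub : w + β (act₁ x (u₁ t)) = β x + Z := by
      have := hβ2 x t
      rw [← hZ] at this
      rw [hw] at *
      linarith
    rw [hub]
  -- RHS second term is (∫ 0..β x) F by definition of q
  -- Now combine using additivity
  have add1 : (∫ s in (0:ℝ)..(β x), F s) + (∫ s in (β x)..(β x + Z), F s)
      = ∫ s in (0:ℝ)..(β x + Z), F s :=
    intervalIntegral.integral_add_adjacent_intervals (hFint _ _) (hFint _ _)
  have add2 : (∫ s in (0:ℝ)..w, F s) + (∫ s in w..(β x + Z), F s)
      = ∫ s in (0:ℝ)..(β x + Z), F s :=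
    intervalIntegral.integral_add_adjacent_intervals (hFint _ _) (hFint _ _)
  have e4 : (∫ s in (0:ℝ)..(β x), α₂ (act₂ (act₂ (ψ x) Φ) (u₂ s)))
      = ∫ s in (0:ℝ)..(β x), F s := by rfl
  rw [e1, e2, e3, e4]
  have h1c : (0:ℝ) < 1 / c := by positivity
  field_simp
  linarith
end
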